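/- arXiv:1704.05745 — 6 statements merged into one kernel-verified Lean document; each statement's English description precedes it below -/
import Mathlib

section
/- Let Y be a real-valued random variable whose law is absolutely continuous with respect to Lebesgue measure with a density f such that f vanishes outside [0,1), f ≤ M Lebesgue-almost everywhere for some M < ∞, and f is Riemann integrable (equivalently: f is bounded and continuous at Lebesgue-almost every point). Then: (a) for every Borel set A ⊆ [0,1), lim_{k→∞} P( fract(k·Y) ∈ A ) equals the Lebesgue measure of A, where fract(x) = x − ⌊x⌋ denotes the fractional part and k ranges over positive integers; (b) for every positive integer k, the law of fract(k·Y) is absolutely continuous with a density bounded by M Lebesgue-almost everywhere. -/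
open MeasureTheory Filter Set
open scoped ENNReal NNReal

section Aux

variable {A : Set ℝ}

/-- the set `{t | fract (k t) ∈ A}`. -/
def Sk (A : Set ℝ) (k : ℕ) : Set ℝ := {t : ℝ | Int.fract ((k : ℝ) * t) ∈ A}

lemma Sk_meas (hA : MeasurableSet A) (k : ℕ) : MeasurableSet (Sk A k) :=
  (measurable_fract.comp (measurable_const_mul _)) hA

lemma fract_preim_meas (hA : MeasurableSet A) : MeasurableSet (Int.fract ⁻¹' A) :=
  measurable_fract hA

lemma aux1 (hA1 : A ⊆ Set.Ico (0:ℝ) 1) (n : ℤ) :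
    volume (Int.fract ⁻¹' A ∩ Ico (n:ℝ) (n+1)) = volume A := by
  have hset : Int.fract ⁻¹' A ∩ Ico (n:ℝ) (n+1) = (fun x : ℝ => x - n) ⁻¹' A := by
    ext x
    simp only [mem_inter_iff, mem_preimage, mem_Ico]
    constructor
    · rintro ⟨hx, h1, h2⟩
      have hfl : ⌊x⌋ = n := Int.floor_eq_iff.2 ⟨h1, h2⟩
      have : Int.fract x = x - n := by rw [Int.fract, hfl]
      rwa [this] at hx
    · intro hx
      have h01 := hA1 hx
      simp only [mem_Ico] at h01
      have hfr : Int.fract x = x - n := by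
        rw [← Int.fract_sub_intCast x n, Int.fract_eq_self.2 ⟨h01.1, h01.2⟩]
      refine ⟨by rwa [hfr], by linarith [h01.1], by linarith [h01.2]⟩
  rw [hset]
  have : (fun x : ℝ => x - n) = (fun x : ℝ => x + (-(n:ℝ))) := by ext x; ring
  rw [this, measure_preimage_add_right]

lemma aux2 (hA : MeasurableSet A) (hA1 : A ⊆ Set.Ico (0:ℝ) 1) (n : ℤ) (c : ℕ) :
    volume (Int.fract ⁻¹' A ∩ Ico (n:ℝ) (n+c)) = c * volume A := by
  induction c with
  | zero => simp
  | succ c ih =>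
    have hsplit : Ico (n:ℝ) (n+(c+1:ℕ)) = Ico (n:ℝ) (n+c) ∪ Ico ((n:ℝ)+c) (n+(c+1:ℕ)) := by
      rw [Set.Ico_union_Ico_eq_Ico] <;> push_cast <;> linarith
    have hdis : Disjoint (Int.fract ⁻¹' A ∩ Ico (n:ℝ) (n+c))
        (Int.fract ⁻¹' A ∩ Ico ((n:ℝ)+c) (n+(c+1:ℕ))) := by
      apply Set.disjoint_of_subset inter_subset_right inter_subset_right
      exact Set.Ico_disjoint_Ico_same
    have hm2 : MeasurableSet (Int.fract ⁻¹' A ∩ Ico ((n:ℝ)+c) (n+(c+1:ℕ))) :=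
      (fract_preim_meas hA).inter measurableSet_Ico
    rw [hsplit, Set.inter_union_distrib_left, measure_union hdis hm2, ih]
    have h2 : volume (Int.fract ⁻¹' A ∩ Ico ((n:ℝ)+c) (n+(c+1:ℕ))) = volume A := by
      have := aux1 hA1 (A := A) (n + c)
      push_cast at this ⊢
      convert this using 3 <;> ring
    rw [h2]
    push_cast
    ring

end Aux

section Aux2
variable {A : Set ℝ}

lemma aux3_upper (hA : MeasurableSet A) (hA1 : A ⊆ Set.Ico (0:ℝ) 1) (a b : ℝ) :
    volume (Int.fract ⁻¹' A ∩ Ico a b) ≤ ((⌊b⌋ + 1 - ⌊a⌋).toNat : ℝ≥0∞) * volume A := by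
  rw [← aux2 hA hA1 ⌊a⌋ (⌊b⌋ + 1 - ⌊a⌋).toNat]
  apply measure_mono
  apply Set.inter_subset_inter_right
  apply Set.Ico_subset_Ico (Int.floor_le a)
  have h1 : (⌊b⌋ + 1 - ⌊a⌋ : ℤ) ≤ ((⌊b⌋ + 1 - ⌊a⌋).toNat : ℤ) := Int.self_le_toNat _
  have h2 : ((⌊b⌋:ℝ) + 1 - ⌊a⌋) ≤ (((⌊b⌋ + 1 - ⌊a⌋).toNat : ℤ) : ℝ) := by exact_mod_cast h1
  have h3 : b < ⌊b⌋ + 1 := Int.lt_floor_add_one b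
  push_cast at h2 ⊢
  linarith

lemma aux3_lower (hA : MeasurableSet A) (hA1 : A ⊆ Set.Ico (0:ℝ) 1) (a b : ℝ) :
    ((⌊b⌋ - ⌈a⌉).toNat : ℝ≥0∞) * volume A ≤ volume (Int.fract ⁻¹' A ∩ Ico a b) := by
  rcases le_or_gt (⌊b⌋ - ⌈a⌉ : ℤ) 0 with h | h
  · simp [Int.toNat_of_nonpos h]
  · rw [← aux2 hA hA1 ⌈a⌉ (⌊b⌋ - ⌈a⌉).toNat]
    apply measure_mono
    apply Set.inter_subset_inter_right
    have hc : (((⌊b⌋ - ⌈a⌉).toNat : ℤ) : ℝ) = (⌊b⌋:ℝ) - ⌈a⌉ := by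
      exact_mod_cast congrArg (fun z : ℤ => (z:ℝ)) (Int.toNat_of_nonneg h.le)
    apply Set.Ico_subset_Ico (Int.le_ceil a)
    push_cast at hc ⊢
    rw [hc]
    have := Int.floor_le b
    linarith

lemma aux4 (hA : MeasurableSet A) (hA1 : A ⊆ Set.Ico (0:ℝ) 1) (a b : ℝ) (hab : a ≤ b) :
    Tendsto (fun k : ℕ => (volume (Sk A k ∩ Ico a b)).toReal) atTop
      (nhds ((b - a) * (volume A).toReal)) := by
  set αr := (volume A).toReal with hαr
  have hαr0 : 0 ≤ αr := ENNReal.toReal_nonneg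
  have h2 : Tendsto (fun k : ℕ => (2:ℝ) / k) atTop (nhds 0) :=
    tendsto_const_div_atTop_nhds_zero_nat 2
  have hlo : Tendsto (fun k : ℕ => ((b - a) - 2 / k) * αr) atTop (nhds ((b - a) * αr)) := by
    have := ((tendsto_const_nhds (x := b - a) (f := atTop (α := ℕ))).sub h2).mul_const αr
    simpa using this
  have hhi : Tendsto (fun k : ℕ => ((b - a) + 2 / k) * αr) atTop (nhds ((b - a) * αr)) := by
    have := ((tendsto_const_nhds (x := b - a) (f := atTop (α := ℕ))).add h2).mul_const αr
    simpa using this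
  have hkey : ∀ k : ℕ, 1 ≤ k →
      ((b - a) - 2 / k) * αr ≤ (volume (Sk A k ∩ Ico a b)).toReal ∧
      (volume (Sk A k ∩ Ico a b)).toReal ≤ ((b - a) + 2 / k) * αr := by
    intro k hk
    have hk0 : (0:ℝ) < k := by exact_mod_cast hk
    have hkne : (k:ℝ) ≠ 0 := ne_of_gt hk0
    have hset : Sk A k ∩ Ico a b
        = (fun t : ℝ => (k:ℝ) * t) ⁻¹' (Int.fract ⁻¹' A ∩ Ico ((k:ℝ)*a) ((k:ℝ)*b)) := by
      ext t
      simp only [Sk, mem_inter_iff, mem_preimage, mem_setOf_eq, mem_Ico]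
      constructor
      · rintro ⟨h1, h2, h3⟩
        exact ⟨h1, by nlinarith, by nlinarith⟩
      · rintro ⟨h1, h2, h3⟩
        refine ⟨h1, ?_, ?_⟩
        · by_contra hcon; push_neg at hcon; nlinarith
        · by_contra hcon; push_neg at hcon; nlinarith
    have hWfin : volume (Int.fract ⁻¹' A ∩ Ico ((k:ℝ)*a) ((k:ℝ)*b)) ≠ ⊤ := by
      refine ne_top_of_le_ne_top ?_ (measure_mono inter_subset_right)
      simp [Real.volume_Ico]
    have hvol : volume (Sk A k ∩ Ico a b)
        = ENNReal.ofReal |((k:ℝ))⁻¹| * volume (Int.fract ⁻¹' A ∩ Ico ((k:ℝ)*a) ((k:ℝ)*b)) := by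
      rw [hset]
      exact Real.volume_preimage_mul_left hkne _
    have htr : (volume (Sk A k ∩ Ico a b)).toReal
        = (k:ℝ)⁻¹ * (volume (Int.fract ⁻¹' A ∩ Ico ((k:ℝ)*a) ((k:ℝ)*b))).toReal := by
      rw [hvol, ENNReal.toReal_mul, ENNReal.toReal_ofReal (abs_nonneg _),
        abs_of_pos (by positivity)]
    set T := (volume (Int.fract ⁻¹' A ∩ Ico ((k:ℝ)*a) ((k:ℝ)*b))).toReal with hT
    have hT0 : 0 ≤ T := ENNReal.toReal_nonneg
    have hTlo : ((k:ℝ)*(b-a) - 2) * αr ≤ T := by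
      have h1 := aux3_lower hA hA1 ((k:ℝ)*a) ((k:ℝ)*b)
      have h2' : (((⌊(k:ℝ)*b⌋ - ⌈(k:ℝ)*a⌉).toNat : ℝ)) * αr ≤ T := by
        have := ENNReal.toReal_mono hWfin h1
        rwa [ENNReal.toReal_mul, ENNReal.toReal_natCast] at this
      refine le_trans ?_ h2'
      apply mul_le_mul_of_nonneg_right ?_ hαr0
      have hn1 : ((⌊(k:ℝ)*b⌋ - ⌈(k:ℝ)*a⌉ : ℤ) : ℝ) ≤ ((⌊(k:ℝ)*b⌋ - ⌈(k:ℝ)*a⌉).toNat : ℝ) := by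
        exact_mod_cast Int.self_le_toNat _
      have hf1 : ((k:ℝ)*b) - 1 < (⌊(k:ℝ)*b⌋ : ℝ) := Int.sub_one_lt_floor _
      have hf2 : (⌈(k:ℝ)*a⌉ : ℝ) < (k:ℝ)*a + 1 := Int.ceil_lt_add_one _
      push_cast at hn1 ⊢
      nlinarith
    have hThi : T ≤ ((k:ℝ)*(b-a) + 2) * αr := by
      have h1 := aux3_upper hA hA1 ((k:ℝ)*a) ((k:ℝ)*b)
      have hfinrhs : (((⌊(k:ℝ)*b⌋ + 1 - ⌊(k:ℝ)*a⌋).toNat : ℝ≥0∞) * volume A) ≠ ⊤ := by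
        apply ENNReal.mul_ne_top (by simp)
        refine ne_top_of_le_ne_top ?_ (measure_mono hA1)
        simp [Real.volume_Ico]
      have h2' : T ≤ (((⌊(k:ℝ)*b⌋ + 1 - ⌊(k:ℝ)*a⌋).toNat : ℝ)) * αr := by
        have := ENNReal.toReal_mono hfinrhs h1
        rwa [ENNReal.toReal_mul, ENNReal.toReal_natCast] at this
      refine le_trans h2' ?_
      apply mul_le_mul_of_nonneg_right ?_ hαr0
      have hz : (0:ℤ) ≤ ⌊(k:ℝ)*b⌋ + 1 - ⌊(k:ℝ)*a⌋ := by
        have : ⌊(k:ℝ)*a⌋ ≤ ⌊(k:ℝ)*b⌋ := Int.floor_le_floor (by nlinarith)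
        omega
      have hn1 : ((⌊(k:ℝ)*b⌋ + 1 - ⌊(k:ℝ)*a⌋).toNat : ℝ)
          = ((⌊(k:ℝ)*b⌋ : ℝ) + 1 - ⌊(k:ℝ)*a⌋) := by
        exact_mod_cast congrArg (fun z : ℤ => (z:ℝ)) (Int.toNat_of_nonneg hz)
      have hf1 : (⌊(k:ℝ)*b⌋ : ℝ) ≤ (k:ℝ)*b := Int.floor_le _
      have hf2 : ((k:ℝ)*a) - 1 < (⌊(k:ℝ)*a⌋ : ℝ) := Int.sub_one_lt_floor _
      rw [hn1]
      nlinarith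
    have hkk1 : (k:ℝ)⁻¹ * ((k:ℝ)*(b-a) - 2) = (b-a) - 2/(k:ℝ) := by
      rw [mul_sub, ← mul_assoc, inv_mul_cancel₀ hkne, one_mul, div_eq_mul_inv, mul_comm (2:ℝ)]
    have hkk2 : (k:ℝ)⁻¹ * ((k:ℝ)*(b-a) + 2) = (b-a) + 2/(k:ℝ) := by
      rw [mul_add, ← mul_assoc, inv_mul_cancel₀ hkne, one_mul, div_eq_mul_inv, mul_comm (2:ℝ)]
    constructor
    · calc ((b - a) - 2 / (k:ℝ)) * αr = (k:ℝ)⁻¹ * (((k:ℝ)*(b-a) - 2) * αr) := by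
            rw [← hkk1]; ring
        _ ≤ (k:ℝ)⁻¹ * T := by
            apply mul_le_mul_of_nonneg_left hTlo (by positivity)
        _ = (volume (Sk A k ∩ Ico a b)).toReal := htr.symm
    · calc (volume (Sk A k ∩ Ico a b)).toReal = (k:ℝ)⁻¹ * T := htr
        _ ≤ (k:ℝ)⁻¹ * (((k:ℝ)*(b-a) + 2) * αr) := by
            apply mul_le_mul_of_nonneg_left hThi (by positivity)
        _ = ((b - a) + 2 / (k:ℝ)) * αr := by rw [← hkk2]; ring
  refine tendsto_of_tendsto_of_tendsto_of_le_of_le' hlo hhi ?_ ?_ <;>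
  · filter_upwards [eventually_ge_atTop 1] with k hk
    first
    | exact (hkey k hk).1
    | exact (hkey k hk).2

end Aux2

section Aux3
variable {A : Set ℝ}

/-- predicate: the equidistribution limit holds on the test set `T`. -/
def Good (A T : Set ℝ) : Prop :=
  Tendsto (fun k : ℕ => (volume (Sk A k ∩ T)).toReal) atTop
    (nhds ((volume T).toReal * (volume A).toReal))

lemma good_empty : Good A ∅ := by
  simp [Good]

lemma good_Ioo (hA : MeasurableSet A) (hA1 : A ⊆ Set.Ico (0:ℝ) 1) (a b : ℝ) :
    Good A (Ioo a b) := by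
  rcases le_or_gt b a with h | h
  · simpa [Set.Ioo_eq_empty_of_le h] using (good_empty (A := A))
  · have heq : ∀ k : ℕ, volume (Sk A k ∩ Ioo a b) = volume (Sk A k ∩ Ico a b) := by
      intro k
      apply le_antisymm
      · exact measure_mono (inter_subset_inter_right _ Ioo_subset_Ico_self)
      · have hsub : Sk A k ∩ Ico a b ⊆ (Sk A k ∩ Ioo a b) ∪ {a} := by
          intro x ⟨hx1, hx2⟩
          rcases eq_or_lt_of_le hx2.1 with he | hgt
          · exact Or.inr (by simp [← he])
          · exact Or.inl ⟨hx1, hgt, hx2.2⟩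
        calc volume (Sk A k ∩ Ico a b) ≤ volume ((Sk A k ∩ Ioo a b) ∪ {a}) := measure_mono hsub
          _ ≤ volume (Sk A k ∩ Ioo a b) + volume ({a} : Set ℝ) := measure_union_le _ _
          _ = volume (Sk A k ∩ Ioo a b) := by simp
    have := aux4 hA hA1 a b h.le
    unfold Good
    rw [show (volume (Ioo a b)).toReal = b - a by simp [Real.volume_Ioo, ENNReal.toReal_ofReal (by linarith : (0:ℝ) ≤ b - a)]]
    exact Tendsto.congr (fun k => by rw [heq k]) this

lemma good_union (hA : MeasurableSet A) {T U : Set ℝ}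
    (hT : MeasurableSet T) (hU : MeasurableSet U)
    (hTfin : volume T ≠ ⊤) (hUfin : volume U ≠ ⊤)
    (h1 : Good A T) (h2 : Good A U) (h3 : Good A (T ∩ U)) : Good A (T ∪ U) := by
  unfold Good at *
  have key : ∀ (V W : Set ℝ), MeasurableSet W → volume V ≠ ⊤ → volume W ≠ ⊤ →
      (volume (V ∪ W)).toReal = (volume V).toReal + (volume W).toReal - (volume (V ∩ W)).toReal := by
    intro V W hWm hVf hWf
    have h := measure_union_add_inter (μ := volume) V hWm
    have hVWf : volume (V ∪ W) ≠ ⊤ := by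
      refine ne_top_of_le_ne_top ?_ (measure_union_le V W)
      exact ENNReal.add_ne_top.2 ⟨hVf, hWf⟩
    have hIf : volume (V ∩ W) ≠ ⊤ := ne_top_of_le_ne_top hVf (measure_mono inter_subset_left)
    have := congrArg ENNReal.toReal h
    rw [ENNReal.toReal_add hVWf hIf, ENNReal.toReal_add hVf hWf] at this
    linarith
  have hfin : ∀ k : ℕ, ∀ V : Set ℝ, volume (Sk A k ∩ V) ≠ ⊤ → True := fun _ _ _ => trivial
  have heq : ∀ k : ℕ, (volume (Sk A k ∩ (T ∪ U))).toReal
      = (volume (Sk A k ∩ T)).toReal + (volume (Sk A k ∩ U)).toReal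
        - (volume (Sk A k ∩ (T ∩ U))).toReal := by
    intro k
    have h := key (Sk A k ∩ T) (Sk A k ∩ U) ((Sk_meas hA k).inter hU)
      (ne_top_of_le_ne_top hTfin (measure_mono inter_subset_right))
      (ne_top_of_le_ne_top hUfin (measure_mono inter_subset_right))
    rw [show (Sk A k ∩ T) ∪ (Sk A k ∩ U) = Sk A k ∩ (T ∪ U) by rw [inter_union_distrib_left],
      show (Sk A k ∩ T) ∩ (Sk A k ∩ U) = Sk A k ∩ (T ∩ U) by ext x; simp [mem_inter_iff]; tauto] at h
    exact h
  have htarget : (volume (T ∪ U)).toReal * (volume A).toReal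
      = (volume T).toReal * (volume A).toReal + (volume U).toReal * (volume A).toReal
        - (volume (T ∩ U)).toReal * (volume A).toReal := by
    rw [key T U hU hTfin hUfin]; ring
  rw [htarget]
  exact Tendsto.congr (fun k => (heq k).symm) (((h1.add h2).sub h3))

/-- finite unions of open intervals, given by a list of endpoint pairs -/
def UU (l : List (ℝ × ℝ)) : Set ℝ := ⋃ p ∈ l, Ioo p.1 p.2

lemma UU_meas (l : List (ℝ × ℝ)) : MeasurableSet (UU l) := by
  apply MeasurableSet.biUnion ((l.finite_toSet).countable) (fun p _ => measurableSet_Ioo)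

lemma UU_fin (l : List (ℝ × ℝ)) : volume (UU l) ≠ ⊤ := by
  induction l with
  | nil => simp [UU]
  | cons p l ih =>
    have : UU (p :: l) = Ioo p.1 p.2 ∪ UU l := by
      simp [UU, Set.biUnion_insert]
    rw [this]
    refine ne_top_of_le_ne_top ?_ (measure_union_le _ _)
    exact ENNReal.add_ne_top.2 ⟨by simp, ih⟩

lemma UU_inter (a b : ℝ) (l : List (ℝ × ℝ)) :
    Ioo a b ∩ UU l = UU (l.map (fun p => (a ⊔ p.1, b ⊓ p.2))) := by
  ext x
  simp only [UU, mem_inter_iff, mem_iUnion, exists_prop, List.mem_map, mem_Ioo]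
  constructor
  · rintro ⟨⟨hax, hxb⟩, p, hp, h1, h2⟩
    exact ⟨(a ⊔ p.1, b ⊓ p.2), ⟨p, hp, rfl⟩, by simp [hax, hxb, h1, h2]⟩
  · rintro ⟨q, ⟨p, hp, rfl⟩, h1, h2⟩
    exact ⟨⟨(sup_lt_iff.1 h1).1, (lt_inf_iff.1 h2).1⟩, p, hp,
      (sup_lt_iff.1 h1).2, (lt_inf_iff.1 h2).2⟩

lemma good_UU (hA : MeasurableSet A) (hA1 : A ⊆ Set.Ico (0:ℝ) 1) :
    ∀ n : ℕ, ∀ l : List (ℝ × ℝ), l.length ≤ n → Good A (UU l) := by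
  intro n
  induction n with
  | zero =>
    intro l hl
    rw [List.length_eq_zero_iff.1 (Nat.le_zero.1 hl)]
    simpa [UU] using (good_empty (A := A))
  | succ n ih =>
    intro l hl
    match l with
    | [] => simpa [UU] using (good_empty (A := A))
    | p :: l' =>
      have hUU : UU (p :: l') = Ioo p.1 p.2 ∪ UU l' := by
        simp [UU]
      rw [hUU]
      have hlen : l'.length ≤ n := by simpa using Nat.succ_le_succ_iff.1 hl
      apply good_union hA measurableSet_Ioo (UU_meas l') (by simp) (UU_fin l')
        (good_Ioo hA hA1 _ _) (ih l' hlen)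
      rw [UU_inter]
      exact ih _ (by simpa using hlen)

end Aux3

section Aux4
variable {A : Set ℝ}

lemma tendsto_of_approx (u : ℕ → ℝ) (L : ℝ)
    (h : ∀ ε : ℝ, 0 < ε → ∃ (v : ℕ → ℝ) (L' : ℝ),
      Tendsto v atTop (nhds L') ∧ |L - L'| ≤ ε ∧ ∀ k, |u k - v k| ≤ ε) :
    Tendsto u atTop (nhds L) := by
  rw [Metric.tendsto_atTop]
  intro ε hε
  obtain ⟨v, L', hv, hL, hu⟩ := h (ε/4) (by linarith)
  rw [Metric.tendsto_atTop] at hv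
  obtain ⟨N, hN⟩ := hv (ε/4) (by linarith)
  refine ⟨N, fun k hk => ?_⟩
  have h1 := hN k hk
  rw [Real.dist_eq] at h1 ⊢
  have h2 : |u k - L| ≤ |u k - v k| + |v k - L'| + |L' - L| := by
    have a1 := abs_sub_le (u k) (v k) L
    have a2 := abs_sub_le (v k) L' L
    linarith
  have h3 : |L' - L| = |L - L'| := abs_sub_comm _ _
  have h4 := hu k
  linarith

lemma approx_by_UU (T : Set ℝ) (hT : MeasurableSet T) (hTfin : volume T ≠ ⊤)
    {ε : ℝ≥0∞} (hε : 0 < ε) (hεtop : ε ≠ ⊤) :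
    ∃ l : List (ℝ × ℝ), volume ((T \ UU l) ∪ (UU l \ T)) ≤ ε := by
  have hε2 : (0:ℝ≥0∞) < ε / 2 := ENNReal.div_pos hε.ne' (by norm_num)
  obtain ⟨U, hTU, hUopen, hUlt⟩ :=
    Set.exists_isOpen_lt_of_lt T (volume T + ε / 2)
      (ENNReal.lt_add_right hTfin hε2.ne')
  have hUfin : volume U ≠ ⊤ := by
    have h1 : volume T + ε / 2 < ⊤ :=
      ENNReal.add_lt_top.2 ⟨hTfin.lt_top, ENNReal.div_lt_top hεtop (by norm_num)⟩
    exact (hUlt.trans h1).ne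
  have hUT : volume (U \ T) ≤ ε / 2 := by
    rw [measure_diff hTU hT.nullMeasurableSet hTfin]
    exact tsub_le_iff_right.2 (by rw [add_comm]; exact hUlt.le)
  obtain ⟨S, hSB, hUS⟩ := Real.isTopologicalBasis_Ioo_rat.open_eq_sUnion hUopen
  have hBc : (⋃ (a : ℚ) (b : ℚ) (_ : a < b), ({Ioo (a:ℝ) b} : Set (Set ℝ))).Countable := by
    refine Set.Countable.mono ?_ (Set.countable_range
      (fun p : ℚ × ℚ => Ioo ((p.1:ℝ)) ((p.2:ℝ))))
    rintro s hs
    simp only [mem_iUnion, mem_singleton_iff] at hs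
    obtain ⟨a, b, _, rfl⟩ := hs
    exact ⟨(a, b), rfl⟩
  have hSc : S.Countable := hBc.mono hSB
  rcases S.eq_empty_or_nonempty with hS | hS
  · refine ⟨[], ?_⟩
    have : T = ∅ := by
      rw [hUS, hS] at hTU
      simpa using hTU
    simp [UU, this]
  · obtain ⟨g, hg⟩ := Set.Countable.exists_eq_range hSc hS
    have hgS : ∀ n, g n ∈ S := fun n => by rw [hg]; exact ⟨n, rfl⟩
    have hqr : ∀ n : ℕ, ∃ q r : ℚ, g n = Ioo (q:ℝ) r := by
      intro n
      have := hSB (hgS n)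
      simp only [mem_iUnion, mem_singleton_iff] at this
      obtain ⟨a, b, _, h⟩ := this
      exact ⟨a, b, h⟩
    choose q r hqr using hqr
    have hUeq : U = ⋃ n, g n := by rw [hUS, hg, sUnion_range]
    have hacc : Tendsto (fun n => volume (Set.accumulate g n)) atTop (nhds (volume U)) := by
      rw [hUeq]
      exact tendsto_measure_iUnion_accumulate
    -- pick N with volume U ≤ volume (Accumulate g N) + ε/2
    have hexN : ∃ N, volume U ≤ volume (Set.accumulate g N) + ε / 2 := by
      rcases eq_or_ne (volume U) 0 with h0 | h0
      · exact ⟨0, by simp [h0]⟩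
      · have hlt : volume U - ε / 2 < volume U := ENNReal.sub_lt_self hUfin h0 hε2.ne'
        have := hacc.eventually (eventually_gt_nhds hlt)
        obtain ⟨N, hN⟩ := this.exists
        exact ⟨N, tsub_le_iff_right.mp hN.le⟩
    obtain ⟨N, hN⟩ := hexN
    refine ⟨(List.range (N+1)).map (fun i => (q i, r i)), ?_⟩
    have hUUl : UU ((List.range (N+1)).map (fun i => (q i, r i))) = Set.accumulate g N := by
      ext x
      simp only [UU, List.mem_map, List.mem_range, mem_iUnion, exists_prop,
        Set.mem_accumulate]
      constructor
      · rintro ⟨p, ⟨i, hi, rfl⟩, hx⟩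
        exact ⟨i, Nat.lt_succ_iff.1 hi, by rw [hqr i]; exact hx⟩
      · rintro ⟨i, hi, hx⟩
        exact ⟨(q i, r i), ⟨i, Nat.lt_succ_iff.2 hi, rfl⟩, by rw [hqr i] at hx; exact hx⟩
    rw [hUUl]
    have hDU : Set.accumulate g N ⊆ U := by
      rw [hUeq]
      exact Set.accumulate_subset_iUnion _
    have hDm : MeasurableSet (Set.accumulate g N) := by
      rw [Set.accumulate_def]
      apply MeasurableSet.biUnion ((Set.finite_Iic N).countable)
      intro i _
      rw [hqr i]; exact measurableSet_Ioo
    have h1 : volume (T \ Set.accumulate g N) ≤ ε / 2 := by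
      have hsub : T \ Set.accumulate g N ⊆ U \ Set.accumulate g N := diff_subset_diff_left hTU
      refine le_trans (measure_mono hsub) ?_
      rw [measure_diff hDU hDm.nullMeasurableSet
        (ne_top_of_le_ne_top hUfin (measure_mono hDU))]
      exact tsub_le_iff_right.2 (by rw [add_comm]; exact hN)
    have h2 : volume (Set.accumulate g N \ T) ≤ ε / 2 := by
      refine le_trans (measure_mono (diff_subset_diff_left hDU)) hUT
    calc volume ((T \ Set.accumulate g N) ∪ (Set.accumulate g N \ T))
        ≤ volume (T \ Set.accumulate g N) + volume (Set.accumulate g N \ T) :=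
          measure_union_le _ _
      _ ≤ ε / 2 + ε / 2 := add_le_add h1 h2
      _ = ε := ENNReal.add_halves ε

end Aux4

section Aux5
variable {A : Set ℝ}

lemma vol_A_fin (hA1 : A ⊆ Set.Ico (0:ℝ) 1) : volume A ≠ ⊤ := by
  refine ne_top_of_le_ne_top ?_ (measure_mono hA1)
  simp [Real.volume_Ico]

lemma vol_A_le_one (hA1 : A ⊆ Set.Ico (0:ℝ) 1) : (volume A).toReal ≤ 1 := by
  have h := measure_mono hA1 (μ := volume)
  have := ENNReal.toReal_mono (by simp [Real.volume_Ico]) h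
  simpa [Real.volume_Ico] using this

/-- two sets close in measure have close `Sk`-intersections, uniformly in `k` -/
lemma abs_inter_diff_le {T D : Set ℝ} (hTfin : volume T ≠ ⊤) (hDfin : volume D ≠ ⊤)
    (V : Set ℝ) :
    |(volume (V ∩ T)).toReal - (volume (V ∩ D)).toReal|
      ≤ (volume ((T \ D) ∪ (D \ T))).toReal := by
  set w := volume ((T \ D) ∪ (D \ T)) with hw
  have hwfin : w ≠ ⊤ := by
    refine ne_top_of_le_ne_top ?_ (measure_union_le _ _)
    exact ENNReal.add_ne_top.2 ⟨ne_top_of_le_ne_top hTfin (measure_mono diff_subset),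
      ne_top_of_le_ne_top hDfin (measure_mono diff_subset)⟩
  have hTf : volume (V ∩ T) ≠ ⊤ := ne_top_of_le_ne_top hTfin (measure_mono inter_subset_right)
  have hDf : volume (V ∩ D) ≠ ⊤ := ne_top_of_le_ne_top hDfin (measure_mono inter_subset_right)
  have key : ∀ X Y : Set ℝ, volume (V ∩ X) ≤ volume (V ∩ Y) + volume ((X \ Y) ∪ (Y \ X)) := by
    intro X Y
    refine le_trans (measure_mono ?_) (measure_union_le _ _)
    intro x ⟨hxV, hxX⟩
    by_cases hxY : x ∈ Y
    · exact Or.inl ⟨hxV, hxY⟩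
    · exact Or.inr (Or.inl ⟨hxX, hxY⟩)
  have h1 : (volume (V ∩ T)).toReal ≤ (volume (V ∩ D)).toReal + w.toReal := by
    have := ENNReal.toReal_mono (ENNReal.add_ne_top.2 ⟨hDf, hwfin⟩) (key T D)
    rwa [ENNReal.toReal_add hDf hwfin] at this
  have h2 : (volume (V ∩ D)).toReal ≤ (volume (V ∩ T)).toReal + w.toReal := by
    have hkey := key D T
    rw [show (D \ T) ∪ (T \ D) = (T \ D) ∪ (D \ T) from union_comm _ _] at hkey
    have := ENNReal.toReal_mono (ENNReal.add_ne_top.2 ⟨hTf, hwfin⟩) hkey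
    rwa [ENNReal.toReal_add hTf hwfin] at this
  rw [abs_le]
  constructor <;> linarith

lemma good_all (hA : MeasurableSet A) (hA1 : A ⊆ Set.Ico (0:ℝ) 1)
    (T : Set ℝ) (hT : MeasurableSet T) (hTfin : volume T ≠ ⊤) : Good A T := by
  apply tendsto_of_approx
  intro ε hε
  obtain ⟨l, hl⟩ := approx_by_UU T hT hTfin (ε := ENNReal.ofReal ε)
    (by simpa using hε) ENNReal.ofReal_ne_top
  have hwle : (volume ((T \ UU l) ∪ (UU l \ T))).toReal ≤ ε := by
    have := ENNReal.toReal_mono ENNReal.ofReal_ne_top hl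
    rwa [ENNReal.toReal_ofReal hε.le] at this
  refine ⟨fun k => (volume (Sk A k ∩ UU l)).toReal,
    (volume (UU l)).toReal * (volume A).toReal,
    good_UU hA hA1 l.length l le_rfl, ?_, ?_⟩
  · rw [show (volume T).toReal * (volume A).toReal - (volume (UU l)).toReal * (volume A).toReal
      = ((volume T).toReal - (volume (UU l)).toReal) * (volume A).toReal by ring, abs_mul]
    have h1 : |(volume T).toReal - (volume (UU l)).toReal| ≤ ε := by
      have := abs_inter_diff_le (T := T) (D := UU l) hTfin (UU_fin l) univ
      simpa using le_trans this hwle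
    have h2 : |(volume A).toReal| ≤ 1 := by
      rw [abs_of_nonneg ENNReal.toReal_nonneg]; exact vol_A_le_one hA1
    calc |(volume T).toReal - (volume (UU l)).toReal| * |(volume A).toReal|
        ≤ ε * 1 := mul_le_mul h1 h2 (abs_nonneg _) hε.le
      _ = ε := mul_one ε
  · intro k
    exact le_trans (abs_inter_diff_le hTfin (UU_fin l) (Sk A k)) hwle

end Aux5

section Aux6
variable {A : Set ℝ}

lemma integral_limit (hA : MeasurableSet A) (hA1 : A ⊆ Set.Ico (0:ℝ) 1) :
    ∀ ⦃f : ℝ → ℝ⦄, Integrable f volume →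
      Tendsto (fun k : ℕ => ∫ t in Sk A k, f t) atTop
        (nhds ((volume A).toReal * ∫ t, f t)) := by
  apply Integrable.induction
  · -- indicators
    intro c S hS hSfin
    have heq : ∀ k : ℕ, ∫ t in Sk A k, S.indicator (fun _ => c) t
        = (volume (Sk A k ∩ S)).toReal * c := by
      intro k
      rw [setIntegral_indicator hS, setIntegral_const, smul_eq_mul, measureReal_def]
    have htgt : (volume A).toReal * ∫ t, S.indicator (fun _ => c) t
        = ((volume S).toReal * (volume A).toReal) * c := by
      rw [integral_indicator_const _ hS, smul_eq_mul, measureReal_def]; ring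
    rw [htgt]
    exact Tendsto.congr (fun k => (heq k).symm)
      ((good_all hA hA1 S hS hSfin.ne).mul_const c)
  · -- additive
    intro f g hdisj hf hg Pf Pg
    have heq : ∀ k : ℕ, ∫ t in Sk A k, (f + g) t
        = (∫ t in Sk A k, f t) + ∫ t in Sk A k, g t := by
      intro k
      simpa using integral_add hf.integrableOn hg.integrableOn
    have htgt : (volume A).toReal * ∫ t, (f + g) t
        = (volume A).toReal * (∫ t, f t) + (volume A).toReal * ∫ t, g t := by
      simp only [Pi.add_apply]
      rw [integral_add hf hg]; ring
    rw [htgt]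
    exact Tendsto.congr (fun k => (heq k).symm) (Pf.add Pg)
  · -- closed
    apply isClosed_of_closure_subset
    intro F hF
    simp only [mem_setOf_eq]
    apply tendsto_of_approx
    intro ε hε
    obtain ⟨G, hGmem, hdist⟩ := Metric.mem_closure_iff.1 hF ε hε
    have hFint : Integrable (⇑F) volume := MeasureTheory.L1.integrable_coeFn F
    have hGint : Integrable (⇑G) volume := MeasureTheory.L1.integrable_coeFn G
    have hdeq : dist F G = ∫ t, |F t - G t| := by
      rw [MeasureTheory.L1.dist_eq_integral_dist]
      exact integral_congr_ae (Eventually.of_forall fun t => Real.dist_eq _ _)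
    have hbound : ∀ V : Set ℝ, |(∫ t in V, F t) - ∫ t in V, G t| ≤ dist F G := by
      intro V
      rw [← integral_sub hFint.integrableOn hGint.integrableOn, hdeq]
      calc |∫ t in V, (F t - G t)| ≤ ∫ t in V, |F t - G t| := by
            simpa [Real.norm_eq_abs] using
              norm_integral_le_integral_norm (μ := volume.restrict V) (fun t => F t - G t)
        _ ≤ ∫ t, |F t - G t| := by
            apply setIntegral_le_integral ((hFint.sub hGint).abs)
            exact Eventually.of_forall fun t => abs_nonneg _
    have hboundtot : |(∫ t, F t) - ∫ t, G t| ≤ dist F G := by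
      have := hbound univ
      simpa using this
    refine ⟨fun k => ∫ t in Sk A k, G t, (volume A).toReal * ∫ t, G t, hGmem, ?_, ?_⟩
    · rw [show (volume A).toReal * (∫ t, F t) - (volume A).toReal * ∫ t, G t
        = (volume A).toReal * ((∫ t, F t) - ∫ t, G t) by ring, abs_mul,
        abs_of_nonneg (ENNReal.toReal_nonneg)]
      calc (volume A).toReal * |(∫ t, F t) - ∫ t, G t| ≤ 1 * dist F G :=
            mul_le_mul (vol_A_le_one hA1) hboundtot (abs_nonneg _) zero_le_one
        _ ≤ ε := by rw [one_mul]; exact hdist.le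
    · intro k
      exact le_trans (hbound (Sk A k)) hdist.le
  · -- ae congruence
    intro f g hfg hf Pf
    have h1 : ∀ k : ℕ, ∫ t in Sk A k, f t = ∫ t in Sk A k, g t := fun k =>
      integral_congr_ae (ae_restrict_of_ae hfg)
    have h2 : ∫ t, f t = ∫ t, g t := integral_congr_ae hfg
    rw [← h2]
    exact Tendsto.congr (fun k => (h1 k)) Pf

end Aux6

section PartB

lemma lintegral_affine (c : ℝ) (hc : c ≠ 0) (d : ℝ) (F : ℝ → ℝ≥0∞) (hF : Measurable F) :
    ∫⁻ x, F (c * x + d) ∂(volume : Measure ℝ) = ENNReal.ofReal |c⁻¹| * ∫⁻ y, F y ∂volume := by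
  have hmap : Measure.map (fun x : ℝ => c * x + d) volume
      = ENNReal.ofReal |c⁻¹| • (volume : Measure ℝ) := by
    have hcomp : (fun x : ℝ => c * x + d) = (fun y : ℝ => y + d) ∘ (fun x : ℝ => c * x) := rfl
    rw [hcomp, ← Measure.map_map (measurable_add_const d) (measurable_const_mul c),
      Real.map_volume_mul_left hc, Measure.map_smul,
      MeasureTheory.map_add_right_eq_self volume d]
  have h := lintegral_map (μ := (volume : Measure ℝ)) hF
    (by fun_prop : Measurable (fun x : ℝ => c * x + d))
  rw [hmap, lintegral_smul_measure] at h
  exact h.symm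

variable {Ω : Type*} [MeasurableSpace Ω] (P : Measure Ω) [IsProbabilityMeasure P]

lemma part_b (Y : Ω → ℝ) (hYmeas : Measurable Y)
    (f : ℝ → ℝ) (hfmeas : Measurable f) (hf0 : ∀ x, 0 ≤ f x)
    (M : ℝ)
    (hsupp : ∀ x : ℝ, x ∉ Set.Ico (0 : ℝ) 1 → f x = 0)
    (hM : ∀ᵐ x ∂(volume : Measure ℝ), f x ≤ M)
    (hlaw : P.map Y = volume.withDensity fun x => ENNReal.ofReal (f x))
    (k : ℕ) (hk : 0 < k) :
    ∃ g : ℝ → ℝ, Measurable g ∧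
      (∀ᵐ x ∂(volume : Measure ℝ), 0 ≤ g x ∧ g x ≤ M) ∧
      P.map (fun ω => Int.fract ((k : ℝ) * Y ω))
        = volume.withDensity fun x => ENNReal.ofReal (g x) := by
  have hκ : (0:ℝ) < (k:ℝ) := by exact_mod_cast hk
  have hκne : (k:ℝ) ≠ 0 := hκ.ne'
  set g : ℝ → ℝ :=
    (Ico (0:ℝ) 1).indicator (fun x => (∑ j ∈ Finset.range k, f ((x + j) / k)) / k) with hg
  have hgmeas : Measurable g := by
    apply Measurable.indicator ?_ measurableSet_Ico
    apply Measurable.div_const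
    apply Finset.measurable_sum
    intro j _
    exact hfmeas.comp (by fun_prop)
  have hM0 : 0 ≤ M := by
    obtain ⟨x, hx⟩ := hM.exists
    exact le_trans (hf0 x) hx
  refine ⟨g, hgmeas, ?_, ?_⟩
  · -- a.e. bounds
    have hae : ∀ᵐ x ∂(volume : Measure ℝ), ∀ j ∈ Finset.range k, f ((x + j) / k) ≤ M := by
      rw [eventually_all_finset]
      intro j _
      have hnull : volume {y : ℝ | ¬ f y ≤ M} = 0 := by
        simpa [ae_iff] using hM
      have hpre : {x : ℝ | ¬ f ((x + j) / k) ≤ M}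
          = (fun x : ℝ => x + (j:ℝ)) ⁻¹' (((k:ℝ)⁻¹ * ·) ⁻¹' {y : ℝ | ¬ f y ≤ M}) := by
        ext x
        simp only [mem_preimage, mem_setOf_eq, div_eq_inv_mul, mul_comm]
      rw [ae_iff, hpre, measure_preimage_add_right, Real.volume_preimage_mul_left
        (inv_ne_zero hκne), hnull, mul_zero]
    filter_upwards [hae] with x hx
    constructor
    · rw [hg]
      apply Set.indicator_nonneg
      intro y _
      exact div_nonneg (Finset.sum_nonneg fun j _ => hf0 _) hκ.le
    · rw [hg]
      by_cases hxI : x ∈ Ico (0:ℝ) 1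
      · rw [Set.indicator_of_mem hxI, div_le_iff₀ hκ]
        calc ∑ j ∈ Finset.range k, f ((x + j) / k)
            ≤ ∑ _j ∈ Finset.range k, M := Finset.sum_le_sum hx
          _ = k * M := by simp [mul_comm]
          _ = M * k := by ring
      · rw [Set.indicator_of_notMem hxI]
        exact hM0
  · -- the pushforward identity
    have hZmeas : Measurable (fun ω => Int.fract ((k : ℝ) * Y ω)) :=
      measurable_fract.comp ((measurable_const_mul _).comp hYmeas)
    ext S hS
    have hSk : MeasurableSet (Sk S k) := Sk_meas hS k
    have hLHS : P.map (fun ω => Int.fract ((k : ℝ) * Y ω)) S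
        = ∫⁻ t in Sk S k, ENNReal.ofReal (f t) ∂volume := by
      rw [Measure.map_apply hZmeas hS]
      have h1 : (fun ω => Int.fract ((k : ℝ) * Y ω)) ⁻¹' S = Y ⁻¹' (Sk S k) := rfl
      rw [h1, ← Measure.map_apply hYmeas hSk, hlaw, withDensity_apply _ hSk]
    set S' := S ∩ Ico (0:ℝ) 1 with hS'
    have hS'm : MeasurableSet S' := hS.inter measurableSet_Ico
    have hS'sub : S' ⊆ Ico (0:ℝ) 1 := inter_subset_right
    have hψmeas : ∀ j : ℕ, Measurable (fun t : ℝ => (k:ℝ) * t - (j:ℝ)) := by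
      intro j; fun_prop
    have hpre_m : ∀ j : ℕ, MeasurableSet ((fun t : ℝ => (k:ℝ) * t - (j:ℝ)) ⁻¹' S') := fun j =>
      (hψmeas j) hS'm
    -- decomposition of the sets
    have hseteq : Sk S k ∩ Ico (0:ℝ) 1
        = ⋃ j ∈ Finset.range k, (fun t : ℝ => (k:ℝ) * t - (j:ℝ)) ⁻¹' S' := by
      ext t
      simp only [Sk, mem_inter_iff, mem_setOf_eq, mem_Ico, mem_iUnion, exists_prop,
        Finset.mem_range, mem_preimage]
      constructor
      · rintro ⟨hfr, h0, h1⟩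
        have hkt0 : (0:ℝ) ≤ (k:ℝ) * t := by positivity
        have h0' : 0 ≤ ⌊(k:ℝ) * t⌋ := Int.floor_nonneg.2 hkt0
        refine ⟨(⌊(k:ℝ) * t⌋).toNat, ?_, ?_⟩
        · have h1' : ⌊(k:ℝ) * t⌋ < (k:ℤ) := by
            apply Int.floor_lt.2
            push_cast
            nlinarith
          omega
        · have hcast : ((⌊(k:ℝ) * t⌋.toNat : ℕ) : ℝ) = ((⌊(k:ℝ) * t⌋ : ℤ) : ℝ) := by
            exact_mod_cast congrArg (fun z : ℤ => (z:ℝ)) (Int.toNat_of_nonneg h0')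
          have hfr_eq : Int.fract ((k:ℝ) * t) = (k:ℝ) * t - (⌊(k:ℝ) * t⌋ : ℝ) := rfl
          rw [hS']
          constructor
          · rw [hcast, ← hfr_eq]; exact hfr
          · rw [hcast, ← hfr_eq]
            exact ⟨Int.fract_nonneg _, Int.fract_lt_one _⟩
      · rintro ⟨j, hjk, hmem⟩
        rw [hS'] at hmem
        have hmemS := hmem.1
        have hmem0 := hmem.2.1
        have hmem1 := hmem.2.2
        have hjk' : (j:ℝ) + 1 ≤ (k:ℝ) := by exact_mod_cast Nat.succ_le_of_lt hjk
        have hfl : ⌊(k:ℝ) * t⌋ = (j:ℤ) := by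
          apply Int.floor_eq_iff.2
          constructor
          · push_cast; linarith
          · push_cast; linarith
        have hfr : Int.fract ((k:ℝ) * t) = (k:ℝ) * t - (j:ℝ) := by
          rw [Int.fract, hfl]; push_cast; ring
        refine ⟨by rwa [hfr], ?_, ?_⟩
        · nlinarith
        · have : (k:ℝ) * t < (j:ℝ) + 1 := by linarith
          have hlt : (k:ℝ) * t < (k:ℝ) := by linarith
          nlinarith
    -- disjointness
    have hdisj : (↑(Finset.range k) : Set ℕ).PairwiseDisjoint
        (fun j : ℕ => (fun t : ℝ => (k:ℝ) * t - (j:ℝ)) ⁻¹' S') := by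
      intro i _ j _ hij
      apply Set.disjoint_left.2
      intro t hti htj
      simp only [mem_preimage] at hti htj
      have h1 := hS'sub hti
      have h2 := hS'sub htj
      simp only [mem_Ico] at h1 h2
      have : (i:ℝ) = (j:ℝ) := by
        have hij1 : (i:ℝ) < (j:ℝ) + 1 := by linarith
        have hij2 : (j:ℝ) < (i:ℝ) + 1 := by linarith
        have hij1' : i < j + 1 := by exact_mod_cast hij1
        have hij2' : j < i + 1 := by exact_mod_cast hij2
        have : i = j := by omega
        exact_mod_cast congrArg (fun n : ℕ => (n:ℝ)) this
      exact hij (by exact_mod_cast this)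
    -- Step A : restrict the lintegral to [0,1)
    have hindic : ∀ t : ℝ, ENNReal.ofReal (f t)
        = (Ico (0:ℝ) 1).indicator (fun t => ENNReal.ofReal (f t)) t := by
      intro t
      by_cases ht : t ∈ Ico (0:ℝ) 1
      · rw [Set.indicator_of_mem ht]
      · rw [Set.indicator_of_notMem ht, hsupp t ht, ENNReal.ofReal_zero]
    have hstepA : ∫⁻ t in Sk S k, ENNReal.ofReal (f t) ∂volume
        = ∫⁻ t in Sk S k ∩ Ico (0:ℝ) 1, ENNReal.ofReal (f t) ∂volume := by
      have hfun : (fun t : ℝ => ENNReal.ofReal (f t))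
          = (Ico (0:ℝ) 1).indicator (fun t => ENNReal.ofReal (f t)) := funext hindic
      conv_lhs => rw [hfun]
      rw [lintegral_indicator measurableSet_Ico, Measure.restrict_restrict measurableSet_Ico,
        Set.inter_comm]
    -- decomposition of the lintegral
    have hdecomp : ∫⁻ t in Sk S k, ENNReal.ofReal (f t) ∂volume
        = ∑ j ∈ Finset.range k, ∫⁻ t in (fun t : ℝ => (k:ℝ) * t - (j:ℝ)) ⁻¹' S',
            ENNReal.ofReal (f t) ∂volume := by
      rw [hstepA, hseteq]
      exact lintegral_biUnion_finset hdisj (fun j _ => hpre_m j) _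
    -- Step C : change of variables on each piece
    have hstepC : ∀ j : ℕ, ENNReal.ofReal (k:ℝ)
          * ∫⁻ t in (fun t : ℝ => (k:ℝ) * t - (j:ℝ)) ⁻¹' S', ENNReal.ofReal (f t) ∂volume
        = ∫⁻ x in S', ENNReal.ofReal (f ((x + j) / k)) ∂volume := by
      intro j
      set Φ : ℝ → ℝ≥0∞ :=
        ((fun t : ℝ => (k:ℝ) * t - (j:ℝ)) ⁻¹' S').indicator (fun t => ENNReal.ofReal (f t))
        with hΦ
      have hΦmeas : Measurable Φ :=
        ((ENNReal.measurable_ofReal.comp hfmeas)).indicator (hpre_m j)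
      have haff := lintegral_affine ((k:ℝ)⁻¹) (inv_ne_zero hκne) ((j:ℝ)/(k:ℝ)) Φ hΦmeas
      have habs : |((k:ℝ)⁻¹)⁻¹| = (k:ℝ) := by
        rw [inv_inv, abs_of_pos hκ]
      rw [habs] at haff
      have heq : (fun x : ℝ => Φ ((k:ℝ)⁻¹ * x + (j:ℝ)/(k:ℝ)))
          = S'.indicator (fun x => ENNReal.ofReal (f ((x + j) / k))) := by
        funext x
        have harg : (k:ℝ)⁻¹ * x + (j:ℝ)/(k:ℝ) = (x + j)/(k:ℝ) := by
          field_simp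
        rw [harg, hΦ]
        have hback : (k:ℝ) * ((x + j)/(k:ℝ)) - (j:ℝ) = x := by
          field_simp
          ring
        by_cases hx : x ∈ S'
        · rw [Set.indicator_of_mem hx, Set.indicator_of_mem]
          rw [mem_preimage, hback]
          exact hx
        · rw [Set.indicator_of_notMem hx, Set.indicator_of_notMem]
          rw [mem_preimage, hback]
          exact hx
      rw [heq] at haff
      rw [lintegral_indicator hS'm] at haff
      rw [hΦ, lintegral_indicator (hpre_m j)] at haff
      exact haff.symm
    -- RHS computation
    have hRHS : (volume.withDensity fun x => ENNReal.ofReal (g x)) S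
        = (∑ j ∈ Finset.range k, ∫⁻ x in S', ENNReal.ofReal (f ((x + j) / k)) ∂volume)
          * (ENNReal.ofReal (k:ℝ))⁻¹ := by
      rw [withDensity_apply _ hS]
      have hgind : ∀ x : ℝ, ENNReal.ofReal (g x)
          = (Ico (0:ℝ) 1).indicator
              (fun x => ENNReal.ofReal ((∑ j ∈ Finset.range k, f ((x + j) / k)) / k)) x := by
        intro x
        rw [hg]
        by_cases hx : x ∈ Ico (0:ℝ) 1
        · rw [Set.indicator_of_mem hx, Set.indicator_of_mem hx]
        · rw [Set.indicator_of_notMem hx, Set.indicator_of_notMem hx, ENNReal.ofReal_zero]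
      have hgfun : (fun x : ℝ => ENNReal.ofReal (g x))
          = (Ico (0:ℝ) 1).indicator
              (fun x => ENNReal.ofReal ((∑ j ∈ Finset.range k, f ((x + j) / k)) / k)) :=
        funext hgind
      conv_lhs => rw [hgfun]
      rw [lintegral_indicator measurableSet_Ico, Measure.restrict_restrict measurableSet_Ico,
        Set.inter_comm, ← hS']
      have hptwise : ∀ x : ℝ, ENNReal.ofReal ((∑ j ∈ Finset.range k, f ((x + j) / k)) / k)
          = (∑ j ∈ Finset.range k, ENNReal.ofReal (f ((x + j) / k)))
            * (ENNReal.ofReal (k:ℝ))⁻¹ := by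
        intro x
        rw [ENNReal.ofReal_div_of_pos hκ, ENNReal.ofReal_sum_of_nonneg (fun j _ => hf0 _),
          div_eq_mul_inv]
      have hptfun : (fun x : ℝ => ENNReal.ofReal ((∑ j ∈ Finset.range k, f ((x + j) / k)) / k))
          = fun x => (∑ j ∈ Finset.range k, ENNReal.ofReal (f ((x + j) / k)))
            * (ENNReal.ofReal (k:ℝ))⁻¹ := funext hptwise
      conv_lhs => rw [hptfun]
      rw [lintegral_mul_const' _ _ (ENNReal.inv_ne_top.2 (ENNReal.ofReal_pos.2 hκ).ne')]
      congr 1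
      exact lintegral_finset_sum _ (fun j _ => by
        exact ENNReal.measurable_ofReal.comp (hfmeas.comp (by fun_prop)))
    -- put it together
    rw [hLHS, hRHS, hdecomp]
    have hcancel : ∀ X : ℝ≥0∞, (ENNReal.ofReal (k:ℝ) * X) * (ENNReal.ofReal (k:ℝ))⁻¹ = X := by
      intro X
      rw [mul_comm (ENNReal.ofReal (k:ℝ)) X, mul_assoc,
        ENNReal.mul_inv_cancel (ENNReal.ofReal_pos.2 hκ).ne' ENNReal.ofReal_ne_top, mul_one]
    calc ∑ j ∈ Finset.range k, ∫⁻ t in (fun t : ℝ => (k:ℝ) * t - (j:ℝ)) ⁻¹' S',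
            ENNReal.ofReal (f t) ∂volume
        = (ENNReal.ofReal (k:ℝ) * ∑ j ∈ Finset.range k,
            ∫⁻ t in (fun t : ℝ => (k:ℝ) * t - (j:ℝ)) ⁻¹' S', ENNReal.ofReal (f t) ∂volume)
          * (ENNReal.ofReal (k:ℝ))⁻¹ := (hcancel _).symm
      _ = (∑ j ∈ Finset.range k, ENNReal.ofReal (k:ℝ) *
            ∫⁻ t in (fun t : ℝ => (k:ℝ) * t - (j:ℝ)) ⁻¹' S', ENNReal.ofReal (f t) ∂volume)
          * (ENNReal.ofReal (k:ℝ))⁻¹ := by rw [Finset.mul_sum]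
      _ = (∑ j ∈ Finset.range k, ∫⁻ x in S', ENNReal.ofReal (f ((x + j) / k)) ∂volume)
          * (ENNReal.ofReal (k:ℝ))⁻¹ := by
            congr 1
            exact Finset.sum_congr rfl (fun j _ => hstepC j)

end PartB


/-- **Equidistribution of fractional parts `fract(k·Y)`.**  Let `Y` be a real random
variable whose law has a density `f` (w.r.t. Lebesgue measure) vanishing outside `[0,1)`,
bounded by `M` a.e., and Riemann integrable (bounded and a.e. continuous).  Then
(a) for every Borel `A ⊆ [0,1)`, `P(fract(k·Y) ∈ A) → λ(A)` as `k → ∞` over positive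
integers; and (b) for every positive integer `k`, the law of `fract(k·Y)` has a density
bounded by `M` a.e. -/
theorem fract_mul_law_tendsto_uniform
    {Ω : Type*} [MeasurableSpace Ω] (P : Measure Ω) [IsProbabilityMeasure P]
    (Y : Ω → ℝ) (hYmeas : Measurable Y)
    (f : ℝ → ℝ) (hfmeas : Measurable f) (hf0 : ∀ x, 0 ≤ f x)
    (M : ℝ)
    (hsupp : ∀ x : ℝ, x ∉ Set.Ico (0 : ℝ) 1 → f x = 0)
    (hM : ∀ᵐ x ∂(volume : Measure ℝ), f x ≤ M)
    (hbdd : ∃ C : ℝ, ∀ x, |f x| ≤ C)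
    (hcont : ∀ᵐ x ∂(volume : Measure ℝ), ContinuousAt f x)
    (hlaw : P.map Y = volume.withDensity fun x => ENNReal.ofReal (f x)) :
    (∀ A : Set ℝ, MeasurableSet A → A ⊆ Set.Ico (0 : ℝ) 1 →
      Tendsto (fun k : ℕ => P {ω | Int.fract ((k : ℝ) * Y ω) ∈ A}) atTop
        (nhds (volume A))) ∧
    (∀ k : ℕ, 0 < k → ∃ g : ℝ → ℝ, Measurable g ∧
      (∀ᵐ x ∂(volume : Measure ℝ), 0 ≤ g x ∧ g x ≤ M) ∧
      P.map (fun ω => Int.fract ((k : ℝ) * Y ω))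
        = volume.withDensity fun x => ENNReal.ofReal (g x)) := by
  constructor
  · intro A hA hA1
    have hlint : ∫⁻ x, ENNReal.ofReal (f x) ∂(volume : Measure ℝ) = 1 := by
      have h1 : P.map Y univ = 1 := by
        rw [Measure.map_apply hYmeas MeasurableSet.univ]
        simp
      rwa [hlaw, withDensity_apply _ MeasurableSet.univ, setLIntegral_univ] at h1
    have hfint : Integrable f volume := by
      refine ⟨hfmeas.aestronglyMeasurable, ?_⟩
      rw [hasFiniteIntegral_iff_ofReal (Eventually.of_forall hf0), hlint]
      exact ENNReal.one_lt_top
    have hint1 : ∫ t, f t ∂(volume : Measure ℝ) = 1 := by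
      have h := ofReal_integral_eq_lintegral_ofReal hfint (Eventually.of_forall hf0)
      rw [hlint] at h
      exact ENNReal.ofReal_eq_one.1 h
    have hPk : ∀ k : ℕ, P {ω | Int.fract ((k:ℝ) * Y ω) ∈ A}
        = ENNReal.ofReal (∫ t in Sk A k, f t ∂volume) := by
      intro k
      have h1 : {ω | Int.fract ((k:ℝ) * Y ω) ∈ A} = Y ⁻¹' (Sk A k) := rfl
      rw [h1, ← Measure.map_apply hYmeas (Sk_meas hA k), hlaw,
        withDensity_apply _ (Sk_meas hA k),
        ← ofReal_integral_eq_lintegral_ofReal hfint.integrableOn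
          (ae_restrict_of_ae (Eventually.of_forall hf0))]
    have hmain := integral_limit hA hA1 hfint
    rw [hint1, mul_one] at hmain
    have hofreal : Tendsto (fun k : ℕ => ENNReal.ofReal (∫ t in Sk A k, f t ∂volume)) atTop
        (nhds (ENNReal.ofReal ((volume A).toReal))) :=
      (ENNReal.continuous_ofReal.tendsto _).comp hmain
    rw [ENNReal.ofReal_toReal (vol_A_fin hA1)] at hofreal
    exact Tendsto.congr (fun k => (hPk k).symm) hofreal
  · intro k hk
    exact part_b P Y hYmeas f hfmeas hf0 M hsupp hM hlaw k hk
end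

section
/- Let X be a complete separable metric space, φ a regularity kernel, and ν a locally finite Borel measure on X. Then there exist two locally finite Borel measures ν_R and ν_⊥ on X such that: (i) ν = ν_R + ν_⊥; (ii) ν_R and ν_⊥ are mutually singular; (iii) ν_⊥ is mutually singular to every locally finite Borel measure ρ on X with I_φ(ρ) < ∞; (iv) there exists a sequence (A_n)_{n∈ℕ} of pairwise disjoint Borel sets such that ν_R is the restriction of ν to ⋃_n A_n (equivalently ν_R = Σ_n ν|_{A_n}) and I_φ(ν|_{A_n}) < ∞ for every n. -/
open MeasureTheory Filter Set

/-- The `φ`-energy of a Borel measure: `I_φ(ν) = ∫∫ φ(d(x,y)) dν(x) dν(y)`. -/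
noncomputable def phiEnergy {X : Type*} [MetricSpace X] [MeasurableSpace X]
    (φ : ℝ → ENNReal) (ν : Measure X) : ENNReal :=
  ∫⁻ x, ∫⁻ y, φ (dist x y) ∂ν ∂ν

private lemma phiEnergy_mono {X : Type*} [MetricSpace X] [MeasurableSpace X]
    (φ : ℝ → ENNReal) {μ ν : Measure X} (h : μ ≤ ν) :
    phiEnergy φ μ ≤ phiEnergy φ ν :=
  lintegral_mono' h fun _ => lintegral_mono' h le_rfl

private lemma phiEnergy_smul {X : Type*} [MetricSpace X] [MeasurableSpace X]
    (φ : ℝ → ENNReal) (ρ : Measure X) (c : ENNReal) (hc : c ≠ ⊤) :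
    phiEnergy φ (c • ρ) = c * (c * phiEnergy φ ρ) := by
  simp only [phiEnergy, lintegral_smul_measure, smul_eq_mul]
  rw [lintegral_const_mul' c _ hc]

/-- **Decomposition of a locally finite measure into a `φ`-regular and a `φ`-singular
part.**  `ν = ν_R + ν_⊥` where `ν_R ⟂ ν_⊥`, `ν_⊥` is singular to every locally finite
measure of finite `φ`-energy, and `ν_R` is the restriction of `ν` to a countable disjoint
union of Borel sets on each of which `ν` has finite `φ`-energy. -/
theorem measure_phi_decomposition
    {X : Type*} [MetricSpace X] [CompleteSpace X] [TopologicalSpace.SeparableSpace X]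
    [MeasurableSpace X] [BorelSpace X]
    (φ : ℝ → ENNReal)
    (hφcont : ContinuousOn φ (Set.Ici (0 : ℝ)))
    (hφanti : AntitoneOn φ (Set.Ici (0 : ℝ)))
    (hφfin : ∀ r : ℝ, 0 < r → φ r ≠ ⊤)
    (ν : Measure X) [IsLocallyFiniteMeasure ν] :
    ∃ νR νperp : Measure X,
      IsLocallyFiniteMeasure νR ∧ IsLocallyFiniteMeasure νperp ∧
      ν = νR + νperp ∧
      νR ⟂ₘ νperp ∧
      (∀ ρ : Measure X, IsLocallyFiniteMeasure ρ → phiEnergy φ ρ < ⊤ → νperp ⟂ₘ ρ) ∧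
      ∃ A : ℕ → Set X,
        (∀ n, MeasurableSet (A n)) ∧
        Pairwise (Function.onFun Disjoint A) ∧
        νR = ν.restrict (⋃ n, A n) ∧
        (∀ n, phiEnergy φ (ν.restrict (A n)) < ⊤) := by
  classical
  have hν : ν ≪ ν.toFinite := absolutelyContinuous_toFinite ν
  set μ : Measure X := ν.toFinite with hμdef
  set Good : Set X → Prop :=
    fun B => MeasurableSet B ∧ phiEnergy φ (ν.restrict B) < ⊤ with hGood
  set V : Set ENNReal :=
    {v | ∃ A : ℕ → Set X, (∀ n, Good (A n)) ∧ v = μ (⋃ n, A n)} with hVdef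
  have hV0 : (0 : ENNReal) ∈ V := by
    refine ⟨fun _ => ∅, fun n => ⟨MeasurableSet.empty, ?_⟩, by simp⟩
    simp [phiEnergy]
  have hVtop : sSup V ≠ ⊤ := by
    refine ne_top_of_le_ne_top (measure_ne_top μ univ) (sSup_le ?_)
    rintro v ⟨A, -, rfl⟩
    exact measure_mono (subset_univ _)
  obtain ⟨u, -, hu_tendsto, hu_mem⟩ :=
    exists_seq_tendsto_sSup (⟨0, hV0⟩ : V.Nonempty) (OrderTop.bddAbove V)
  have hu_mem' : ∀ k, ∃ A : ℕ → Set X, (∀ i, Good (A i)) ∧ u k = μ (⋃ i, A i) := hu_mem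
  choose F hFgood hFval using hu_mem'
  set B' : ℕ → Set X := fun n => F (Nat.unpair n).1 (Nat.unpair n).2 with hB'def
  have hB'good : ∀ n, Good (B' n) := fun n => hFgood _ _
  set C : ℕ → Set X := disjointed B' with hCdef
  have hCmeas : ∀ n, MeasurableSet (C n) :=
    MeasurableSet.disjointed fun n => (hB'good n).1
  have hCgood : ∀ n, Good (C n) := fun n =>
    ⟨hCmeas n, lt_of_le_of_lt
      (phiEnergy_mono φ (Measure.restrict_mono (disjointed_subset _ _) le_rfl))
      (hB'good n).2⟩
  have hCdisj : Pairwise (Function.onFun Disjoint C) := disjoint_disjointed B'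
  have hSmeas : MeasurableSet (⋃ n, C n) := MeasurableSet.iUnion hCmeas
  have hμS : μ (⋃ n, C n) = sSup V := by
    refine le_antisymm (le_sSup ⟨C, hCgood, rfl⟩) ?_
    refine le_of_tendsto' hu_tendsto fun k => ?_
    rw [hFval k]
    refine measure_mono ?_
    rw [hCdef, iUnion_disjointed]
    intro x hx
    rcases mem_iUnion.1 hx with ⟨i, hi⟩
    exact mem_iUnion.2 ⟨Nat.pair k i, by simpa [hB'def, Nat.unpair_pair] using hi⟩
  have hLF : ∀ s : Set X, IsLocallyFiniteMeasure (ν.restrict s) := fun s =>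
    ⟨fun x => by
      obtain ⟨U, hU, hfin⟩ := ν.finiteAt_nhds x
      exact ⟨U, hU, lt_of_le_of_lt (Measure.restrict_apply_le _ _) hfin⟩⟩
  refine ⟨ν.restrict (⋃ n, C n), ν.restrict (⋃ n, C n)ᶜ, hLF _, hLF _,
    (Measure.restrict_add_restrict_compl hSmeas).symm, ?_, ?_,
    C, hCmeas, hCdisj, rfl, fun n => (hCgood n).2⟩
  · refine ⟨(⋃ n, C n)ᶜ, hSmeas.compl, ?_, ?_⟩
    · rw [Measure.restrict_apply hSmeas.compl, compl_inter_self, measure_empty]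
    · rw [Measure.restrict_apply hSmeas.compl.compl, compl_compl, inter_compl_self,
        measure_empty]
  · intro ρ hρLF hρE
    haveI := hρLF
    set S := ⋃ n, C n with hSdef
    set νp := ν.restrict Sᶜ with hνpdef
    haveI : SigmaFinite νp := by rw [hνpdef]; infer_instance
    set f := νp.rnDeriv ρ with hfdef
    have hfmeas : Measurable f := Measure.measurable_rnDeriv νp ρ
    have hdec : νp = νp.singularPart ρ + ρ.withDensity f :=
      Measure.haveLebesgueDecomposition_add νp ρ
    obtain ⟨t, htm, hst, hρtc⟩ := Measure.mutuallySingular_singularPart νp ρ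
    by_cases hpos : ∃ m : ℕ, 0 < νp (t ∩ {x | f x ≤ (m : ENNReal)})
    · exfalso
      obtain ⟨m, hm⟩ := hpos
      have hDm : MeasurableSet {x | f x ≤ (m : ENNReal)} := hfmeas measurableSet_Iic
      set E := t ∩ {x | f x ≤ (m : ENNReal)} with hEdef
      have hEm : MeasurableSet E := htm.inter hDm
      set B := E ∩ Sᶜ with hBdef
      have hBm : MeasurableSet B := hEm.inter hSmeas.compl
      have hνB : ν B = νp E := (Measure.restrict_apply hEm).symm
      have hres : ν.restrict B = νp.restrict E := by
        rw [hνpdef, Measure.restrict_restrict hEm, hBdef]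
      have hle : ν.restrict B ≤ (m : ENNReal) • ρ := by
        rw [hres, hdec, Measure.restrict_add]
        have h1 : (νp.singularPart ρ).restrict E = 0 :=
          Measure.restrict_eq_zero.2
            (le_antisymm ((measure_mono inter_subset_left).trans hst.le) zero_le)
        rw [h1, zero_add, restrict_withDensity hEm]
        calc (ρ.restrict E).withDensity f
            ≤ (ρ.restrict E).withDensity (fun _ => (m : ENNReal)) :=
              withDensity_mono (ae_restrict_of_forall_mem hEm fun x hx => hx.2)
          _ = (m : ENNReal) • (ρ.restrict E) := withDensity_const _
          _ ≤ (m : ENNReal) • ρ := by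
              rw [Measure.le_iff']
              intro s
              simp only [Measure.smul_apply, smul_eq_mul]
              exact mul_le_mul_of_nonneg_left (Measure.restrict_apply_le _ _) zero_le
      have hBE : phiEnergy φ (ν.restrict B) < ⊤ := by
        refine lt_of_le_of_lt (phiEnergy_mono φ hle) ?_
        rw [phiEnergy_smul φ ρ _ (by simp)]
        exact ENNReal.mul_lt_top (by simp) (ENNReal.mul_lt_top (by simp) hρE)
      have hμB : μ B ≠ 0 := by
        intro h0
        have h1 : ν B = 0 := hν h0
        rw [hνB] at h1
        exact hm.ne' h1
      set A' : ℕ → Set X := fun n => Nat.casesOn n B C with hA'def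
      have hA'good : ∀ n, Good (A' n) := by
        intro n
        cases n with
        | zero => exact ⟨hBm, hBE⟩
        | succ k => exact hCgood k
      have hA'U : ⋃ n, A' n = B ∪ S := by
        ext x
        simp only [mem_iUnion, mem_union]
        constructor
        · rintro ⟨n, hn⟩
          cases n with
          | zero => exact Or.inl hn
          | succ k => exact Or.inr (mem_iUnion.2 ⟨k, hn⟩)
        · rintro (hx | hx)
          · exact ⟨0, hx⟩
          · rcases mem_iUnion.1 hx with ⟨k, hk⟩
            exact ⟨k + 1, hk⟩
      have hmem : μ (B ∪ S) ∈ V := ⟨A', hA'good, by rw [hA'U]⟩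
      have hdisjBS : Disjoint B S :=
        Disjoint.mono_left (hBdef ▸ inter_subset_right) disjoint_compl_left
      have hlt : sSup V < sSup V := by
        calc sSup V < sSup V + μ B := ENNReal.lt_add_right hVtop hμB
          _ = μ (B ∪ S) := by rw [measure_union hdisjBS hSmeas, hμS, add_comm]
          _ ≤ sSup V := le_sSup hmem
      exact lt_irrefl _ hlt
    · push_neg at hpos
      have hzero : ∀ m : ℕ, νp (t ∩ {x | f x ≤ (m : ENNReal)}) = 0 :=
        fun m => le_antisymm (hpos m) zero_le
      refine ⟨t, htm, ?_, hρtc⟩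
      have h1 : νp (t ∩ {x | f x ≠ ⊤}) = 0 := by
        refine measure_mono_null ?_ (measure_iUnion_null hzero)
        rintro x ⟨hxt, hxf⟩
        obtain ⟨m, hm⟩ := ENNReal.exists_nat_gt hxf
        exact mem_iUnion.2 ⟨m, hxt, hm.le⟩
      have hρinf : ρ {x | f x = ⊤} = 0 := by
        have h := Measure.rnDeriv_lt_top νp ρ
        rw [ae_iff] at h
        simpa [not_lt, top_le_iff] using h
      have h2 : νp (t ∩ {x | f x = ⊤}) = 0 := by
        rw [hdec, Measure.add_apply]
        have ha : νp.singularPart ρ (t ∩ {x | f x = ⊤}) = 0 :=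
          le_antisymm ((measure_mono inter_subset_left).trans hst.le) zero_le
        have hb : ρ.withDensity f (t ∩ {x | f x = ⊤}) = 0 :=
          withDensity_absolutelyContinuous ρ f
            (measure_mono_null inter_subset_right hρinf)
        rw [ha, hb, add_zero]
      refine le_antisymm ?_ zero_le
      calc νp t ≤ νp ((t ∩ {x | f x ≠ ⊤}) ∪ (t ∩ {x | f x = ⊤})) := by
            refine measure_mono ?_
            intro x hx
            by_cases hfx : f x = ⊤
            · exact Or.inr ⟨hx, hfx⟩
            · exact Or.inl ⟨hx, hfx⟩
        _ ≤ νp (t ∩ {x | f x ≠ ⊤}) + νp (t ∩ {x | f x = ⊤}) := measure_union_le _ _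
        _ = 0 := by rw [h1, h2, add_zero]
end

section
/- Let X be a locally compact, complete separable metric space. Then there exists a countable set Ψ of compactly supported continuous functions X → ℝ, dense in C_c(X) with respect to the supremum norm, with the following property: whenever (μ_k) is a sequence of locally finite Borel measures on X such that ∫ f dμ_k converges to a finite limit for every f ∈ Ψ, there exists a locally finite Borel measure μ on X such that ∫ f dμ_k → ∫ f dμ for every f ∈ C_c(X) (i.e. μ_k converges vaguely to μ). -/
set_option linter.unusedSectionVars false
set_option linter.unusedVariables false
set_option maxHeartbeats 1000000

open MeasureTheory Filter Set Topology ENNReal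

namespace VagueLimitAux

variable {X : Type*} [MetricSpace X] [MeasurableSpace X] [BorelSpace X]

lemma urysohn [LocallyCompactSpace X] {K U : Set X} (hK : IsCompact K) (hU : IsOpen U)
    (hKU : K ⊆ U) :
    ∃ f : X → ℝ, Continuous f ∧ HasCompactSupport f ∧ (∀ x, f x ∈ Icc (0:ℝ) 1) ∧
      EqOn f 1 K ∧ tsupport f ⊆ U := by
  obtain ⟨L, L_comp, L_closed, hKL, hLU⟩ := exists_compact_closed_between hK hU hKU
  obtain ⟨f, hf1, hf0, hfc, hf01⟩ :=
    exists_continuous_one_zero_of_isCompact hK (isOpen_interior (s := L)).isClosed_compl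
      (disjoint_compl_right_iff_subset.2 hKL)
  refine ⟨f, f.continuous, hfc, hf01, hf1, ?_⟩
  have hsupp : Function.support (f : X → ℝ) ⊆ interior L := by
    intro x hx
    by_contra hxL
    exact hx (hf0 hxL)
  calc tsupport (f : X → ℝ) ⊆ closure (interior L) := closure_mono hsupp
    _ ⊆ L := closure_minimal interior_subset L_closed
    _ ⊆ U := hLU

lemma exists_Psi [LocallyCompactSpace X] [TopologicalSpace.SeparableSpace X] :
    ∃ (K : CompactExhaustion X) (χ : ℕ → X → ℝ) (Ψ : Set (X → ℝ)),
      (∀ n, Continuous (χ n) ∧ HasCompactSupport (χ n) ∧ (∀ x, χ n x ∈ Icc (0:ℝ) 1) ∧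
        EqOn (χ n) 1 (K n) ∧ tsupport (χ n) ⊆ K (n+1)) ∧
      Ψ.Countable ∧ (∀ n, χ n ∈ Ψ) ∧
      (∀ f ∈ Ψ, Continuous f ∧ HasCompactSupport f) ∧
      (∀ g : X → ℝ, Continuous g → ∀ n, tsupport g ⊆ K n →
        ∀ ε : ℝ, 0 < ε → ∃ f ∈ Ψ, tsupport f ⊆ K (n+1) ∧ ∀ x, |g x - f x| ≤ ε) := by
  haveI : SecondCountableTopology X := UniformSpace.secondCountable_of_separable X
  set K : CompactExhaustion X := CompactExhaustion.choice X with hKdef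
  have hχ : ∀ n, ∃ f : X → ℝ, Continuous f ∧ HasCompactSupport f ∧
      (∀ x, f x ∈ Icc (0:ℝ) 1) ∧ EqOn f 1 (K n) ∧ tsupport f ⊆ interior (K (n+1)) := fun n =>
    urysohn (K.isCompact n) isOpen_interior (K.subset_interior_succ n)
  choose χ hχc hχcs hχ01 hχ1 hχsupp using hχ
  -- compact pieces
  have hScomp : ∀ n : ℕ, IsCompact (K (n+1) : Set X) := fun n => K.isCompact (n+1)
  have hSclosed : ∀ n : ℕ, IsClosed (K (n+1) : Set X) := fun n => (hScomp n).isClosed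
  haveI : ∀ n : ℕ, CompactSpace (K (n+1) : Set X) := fun n =>
    isCompact_iff_compactSpace.mp (hScomp n)
  -- countable dense subsets of C(K (n+1), ℝ)
  have hD : ∀ n : ℕ, ∃ D : Set C((K (n+1) : Set X), ℝ), D.Countable ∧ Dense D := fun n =>
    TopologicalSpace.exists_countable_dense _
  choose D hDc hDd using hD
  -- Tietze extensions
  have hExt : ∀ n (h : C((K (n+1) : Set X), ℝ)), ∃ g : C(X, ℝ),
      g.restrict (K (n+1) : Set X) = h := fun n h =>
    ContinuousMap.exists_restrict_eq (hSclosed n) h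
  choose Ext hExt_eq using hExt
  set Ψ : Set (X → ℝ) :=
    (Set.range χ) ∪ ⋃ n, (fun h : C((K (n+1) : Set X), ℝ) =>
      (fun x => χ n x * Ext n h x)) '' (D n) with hΨdef
  have hmul_mem : ∀ n (h : C((K (n+1) : Set X), ℝ)),
      Continuous (fun x => χ n x * Ext n h x) ∧
      HasCompactSupport (fun x => χ n x * Ext n h x) := by
    intro n h
    refine ⟨(hχc n).mul (Ext n h).continuous, ?_⟩
    have : (fun x => χ n x * Ext n h x) = (χ n) * ⇑(Ext n h) := rfl
    rw [this]
    exact (hχcs n).mul_right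
  refine ⟨K, χ, Ψ, fun n => ⟨hχc n, hχcs n, hχ01 n, hχ1 n,
      (hχsupp n).trans interior_subset⟩, ?_, ?_, ?_, ?_⟩
  · exact (countable_range χ).union (countable_iUnion fun n => (hDc n).image _)
  · exact fun n => Or.inl (mem_range_self n)
  · rintro f (⟨n, rfl⟩ | hf)
    · exact ⟨hχc n, hχcs n⟩
    · obtain ⟨n, hn⟩ := mem_iUnion.mp hf
      obtain ⟨h, _, rfl⟩ := hn
      exact hmul_mem n h
  · intro g hgc n hgsupp ε hε
    -- approximate the restriction of g
    set g' : C((K (n+1) : Set X), ℝ) := (ContinuousMap.mk g hgc).restrict _ with hg'def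
    obtain ⟨h, hhD, hdist⟩ := (hDd n).exists_dist_lt g' hε
    refine ⟨fun x => χ n x * Ext n h x, Or.inr (mem_iUnion.mpr ⟨n, mem_image_of_mem _ hhD⟩),
      ?_, ?_⟩
    · calc tsupport (fun x => χ n x * Ext n h x) ⊆ tsupport (χ n) := by
            apply closure_mono
            intro x hx
            simp only [Function.mem_support] at hx ⊢
            intro h0
            exact hx (by rw [h0, zero_mul])
        _ ⊆ K (n+1) := (hχsupp n).trans interior_subset
    · intro x
      by_cases hx : x ∈ (K (n+1) : Set X)
      · -- here g x = χ n x * g x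
        have hgx : g x = χ n x * g x := by
          by_cases hxg : x ∈ tsupport g
          · rw [show χ n x = 1 from hχ1 n (hgsupp hxg)]
            ring
          · rw [image_eq_zero_of_notMem_tsupport hxg]
            ring
        have hExtx : Ext n h x = h ⟨x, hx⟩ := by
          have := hExt_eq n h
          calc Ext n h x = (Ext n h).restrict (K (n+1) : Set X) ⟨x, hx⟩ := rfl
            _ = h ⟨x, hx⟩ := by rw [this]
        have hgx' : g x = g' ⟨x, hx⟩ := rfl
        have key : dist (g' ⟨x, hx⟩) (h ⟨x, hx⟩) ≤ dist g' h :=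
          ContinuousMap.dist_apply_le_dist _
        show |g x - χ n x * Ext n h x| ≤ ε
        rw [hgx, hExtx]
        have : |χ n x * g x - χ n x * h ⟨x, hx⟩| = χ n x * |g x - h ⟨x, hx⟩| := by
          rw [← mul_sub, abs_mul, abs_of_nonneg (hχ01 n x).1]
        rw [this]
        have h1 : |g x - h ⟨x, hx⟩| ≤ ε := by
          rw [hgx']
          exact le_of_lt (lt_of_le_of_lt key hdist)
        calc χ n x * |g x - h ⟨x, hx⟩| ≤ 1 * ε := by
              apply mul_le_mul (hχ01 n x).2 h1 (abs_nonneg _) zero_le_one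
          _ = ε := one_mul ε
      · have h1 : g x = 0 := by
          apply image_eq_zero_of_notMem_tsupport
          intro hxg
          exact hx (hgsupp.trans (K.subset n.le_succ) hxg)
        have h2 : χ n x = 0 := by
          apply image_eq_zero_of_notMem_tsupport
          intro hxχ
          exact hx ((hχsupp n).trans interior_subset hxχ)
        show |g x - χ n x * Ext n h x| ≤ ε
        rw [h1, h2, zero_mul, sub_zero, abs_zero]
        exact le_of_lt hε


lemma meas_le_integral (m : Measure X) [IsLocallyFiniteMeasure m] {f : X → ℝ}
    (hf : Continuous f) (hcs : HasCompactSupport f) (h0 : ∀ x, 0 ≤ f x) {s : Set X}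
    (hs : ∀ x ∈ s, 1 ≤ f x) : m s ≤ ENNReal.ofReal (∫ x, f x ∂m) := by
  rw [ofReal_integral_eq_lintegral_ofReal (hf.integrable_of_hasCompactSupport hcs)
    (Eventually.of_forall h0)]
  have h1 : m s ≤ m {x | (1 : ℝ≥0∞) ≤ ENNReal.ofReal (f x)} := by
    apply measure_mono
    intro x hx
    simpa using ENNReal.one_le_ofReal.mpr (hs x hx)
  calc m s ≤ m {x | (1 : ℝ≥0∞) ≤ ENNReal.ofReal (f x)} := h1
    _ = 1 * m {x | (1 : ℝ≥0∞) ≤ ENNReal.ofReal (f x)} := (one_mul _).symm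
    _ ≤ ∫⁻ x, ENNReal.ofReal (f x) ∂m :=
        mul_meas_ge_le_lintegral₀ (ENNReal.continuous_ofReal.comp hf).aemeasurable 1

lemma integral_le_meas (m : Measure X) [IsLocallyFiniteMeasure m] {f : X → ℝ}
    (hf : Continuous f) (hcs : HasCompactSupport f) (h01 : ∀ x, f x ∈ Icc (0:ℝ) 1) {s : Set X}
    (hsm : MeasurableSet s) (hsupp : ∀ x ∉ s, f x = 0) :
    ENNReal.ofReal (∫ x, f x ∂m) ≤ m s := by
  rw [ofReal_integral_eq_lintegral_ofReal (hf.integrable_of_hasCompactSupport hcs)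
    (Eventually.of_forall fun x => (h01 x).1)]
  calc ∫⁻ x, ENNReal.ofReal (f x) ∂m ≤ ∫⁻ x, s.indicator 1 x ∂m := by
        apply lintegral_mono
        intro x
        by_cases hx : x ∈ s
        · simpa [hx] using ENNReal.ofReal_le_one.mpr (h01 x).2
        · simp [hx, hsupp x hx]
    _ = m s := lintegral_indicator_one hsm



/-- The class of "test functions subordinate to `U`". -/
def AA (U : Set X) : Set (X → ℝ) :=
  {f | Continuous f ∧ HasCompactSupport f ∧ (∀ x, f x ∈ Icc (0:ℝ) 1) ∧ tsupport f ⊆ U}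

lemma zero_mem_AA (U : Set X) : (0 : X → ℝ) ∈ AA U := by
  refine ⟨continuous_const, ?_, fun x => ⟨le_refl 0, zero_le_one⟩, ?_⟩
  · have : tsupport (0 : X → ℝ) = ∅ := by
      simp [tsupport, Function.support]
    rw [HasCompactSupport, this]; exact isCompact_empty
  · have : tsupport (0 : X → ℝ) = ∅ := by simp [tsupport, Function.support]
    rw [this]; exact empty_subset U

/-- Asymptotic lower integral. -/
noncomputable def ell (μ : ℕ → Measure X) (f : X → ℝ) : ℝ≥0∞ :=
  liminf (fun k => ENNReal.ofReal (∫ x, f x ∂ μ k)) atTop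

lemma ell_eq_of_tendsto {μ : ℕ → Measure X} {f : X → ℝ} {L : ℝ}
    (h : Tendsto (fun k => ∫ x, f x ∂ μ k) atTop (𝓝 L)) :
    ell μ f = ENNReal.ofReal L :=
  ((ENNReal.continuous_ofReal.tendsto L).comp h).liminf_eq

/-- The value on open sets. -/
noncomputable def rho (μ : ℕ → Measure X) (U : Set X) : ℝ≥0∞ :=
  ⨆ f ∈ AA U, ell μ f

lemma rho_mono (μ : ℕ → Measure X) {U V : Set X} (h : U ⊆ V) : rho μ U ≤ rho μ V := by
  apply iSup_le; intro f; apply iSup_le; intro hf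
  exact le_iSup₂ (f := fun f _ => ell μ f) f ⟨hf.1, hf.2.1, hf.2.2.1, hf.2.2.2.trans h⟩

lemma ell_le_rho {μ : ℕ → Measure X} {U : Set X} {f : X → ℝ} (hf : f ∈ AA U) :
    ell μ f ≤ rho μ U :=
  le_iSup₂ (f := fun f _ => ell μ f) f hf

/-- Outer measure candidate. -/
noncomputable def m0 (μ : ℕ → Measure X) (A : Set X) : ℝ≥0∞ :=
  ⨅ (U : Set X) (_ : IsOpen U) (_ : A ⊆ U), rho μ U

lemma m0_le_rho (μ : ℕ → Measure X) {A U : Set X} (hU : IsOpen U) (hAU : A ⊆ U) :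
    m0 μ A ≤ rho μ U :=
  (iInf_le _ U).trans ((iInf_le _ hU).trans (iInf_le _ hAU))

lemma m0_mono (μ : ℕ → Measure X) {A B : Set X} (h : A ⊆ B) : m0 μ A ≤ m0 μ B := by
  apply le_iInf; intro U; apply le_iInf; intro hU; apply le_iInf; intro hBU
  exact m0_le_rho μ hU (h.trans hBU)

lemma m0_open (μ : ℕ → Measure X) {U : Set X} (hU : IsOpen U) : m0 μ U = rho μ U := by
  refine le_antisymm (m0_le_rho μ hU subset_rfl) ?_
  apply le_iInf; intro V; apply le_iInf; intro _; apply le_iInf; intro hUV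
  exact rho_mono μ hUV

lemma ell_zero (μ : ℕ → Measure X) : ell μ (0 : X → ℝ) = 0 := by
  have : (fun k => ENNReal.ofReal (∫ x, (0:X→ℝ) x ∂ μ k)) = fun _ => 0 := by
    funext k; simp
  rw [ell, this, liminf_const]

lemma m0_empty (μ : ℕ → Measure X) : m0 μ (∅ : Set X) = 0 := by
  refine le_antisymm ?_ zero_le
  refine (m0_le_rho μ isOpen_empty subset_rfl).trans ?_
  apply iSup_le; intro f; apply iSup_le; intro hf
  have hf0 : f = 0 := by
    funext x
    by_contra hx
    have : x ∈ tsupport f := subset_tsupport f (by simpa [Function.mem_support] using hx)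
    exact absurd (hf.2.2.2 this) (notMem_empty x)
  rw [hf0, ell_zero]


lemma tendsto_nonneg {μ : ℕ → Measure X} {f : X → ℝ} {L : ℝ}
    (h : Tendsto (fun k => ∫ x, f x ∂ μ k) atTop (𝓝 L)) (hf : ∀ x, 0 ≤ f x) : 0 ≤ L :=
  ge_of_tendsto' h fun k => integral_nonneg hf

lemma rho_iUnion_le [LocallyCompactSpace X] (μ : ℕ → Measure X)
    (hloc : ∀ k, IsLocallyFiniteMeasure (μ k))
    (hLim : ∀ g : X → ℝ, Continuous g → HasCompactSupport g →
      ∃ L, Tendsto (fun k => ∫ x, g x ∂ μ k) atTop (𝓝 L))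
    (U : ℕ → Set X) (hU : ∀ i, IsOpen (U i)) :
    rho μ (⋃ i, U i) ≤ ∑' i, rho μ (U i) := by
  haveI := hloc
  apply iSup_le; intro f; apply iSup_le; intro hf
  obtain ⟨hfc, hfcs, hf01, hfsupp⟩ := hf
  obtain ⟨s, hs⟩ := hfcs.elim_finite_subcover U hU hfsupp
  set n := s.card with hn
  set e : Fin n → ℕ := fun j => (s.equivFin.symm j : ℕ) with he
  have hVopen : ∀ j : Fin n, IsOpen (U (e j)) := fun j => hU _
  have hcover : tsupport f ⊆ ⋃ j : Fin n, U (e j) := by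
    intro x hx
    obtain ⟨i, hi, hxi⟩ := mem_iUnion₂.mp (hs hx)
    refine mem_iUnion.mpr ⟨s.equivFin ⟨i, hi⟩, ?_⟩
    simpa [he, Equiv.symm_apply_apply] using hxi
  obtain ⟨h, hhsupp, hhsum, hh01, hhcs⟩ :=
    exists_continuous_sum_one_of_isOpen_isCompact hVopen hfcs hcover
  have hpiece_cont : ∀ j : Fin n, Continuous (fun x => f x * h j x) :=
    fun j => hfc.mul (h j).continuous
  have hpiece_cs : ∀ j : Fin n, HasCompactSupport (fun x => f x * h j x) := by
    intro j
    have : (fun x => f x * h j x) = f * ⇑(h j) := rfl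
    rw [this]; exact hfcs.mul_right
  have hmem : ∀ j : Fin n, (fun x => f x * h j x) ∈ AA (U (e j)) := by
    intro j
    refine ⟨hpiece_cont j, hpiece_cs j, ?_, ?_⟩
    · intro x
      exact ⟨mul_nonneg (hf01 x).1 (hh01 j x).1,
        mul_le_one₀ (hf01 x).2 (hh01 j x).1 (hh01 j x).2⟩
    · refine (closure_mono ?_).trans (hhsupp j)
      intro x hx
      simp only [Function.mem_support] at hx ⊢
      intro h0
      exact hx (by rw [h0, mul_zero])
  have hdecomp : ∀ x, f x = ∑ j : Fin n, f x * h j x := by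
    intro x
    by_cases hx : x ∈ tsupport f
    · have h1 : ∑ j : Fin n, h j x = 1 := by
        have := hhsum hx
        simpa using this
      rw [← Finset.mul_sum, h1, mul_one]
    · rw [image_eq_zero_of_notMem_tsupport hx]
      simp
  have hLj : ∀ j : Fin n, ∃ L, Tendsto (fun k => ∫ x, f x * h j x ∂ μ k) atTop (𝓝 L) :=
    fun j => hLim _ (hpiece_cont j) (hpiece_cs j)
  choose L hL using hLj
  have hLnn : ∀ j, 0 ≤ L j := fun j =>
    tendsto_nonneg (hL j) fun x => mul_nonneg (hf01 x).1 (hh01 j x).1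
  have hsplit : ∀ k, ∫ x, f x ∂ μ k = ∑ j : Fin n, ∫ x, f x * h j x ∂ μ k := by
    intro k
    rw [← integral_finset_sum _ (fun j _ =>
      (hpiece_cont j).integrable_of_hasCompactSupport (hpiece_cs j))]
    exact integral_congr_ae (Eventually.of_forall fun x => by
      simpa using hdecomp x)
  have hsumtendsto : Tendsto (fun k => ∫ x, f x ∂ μ k) atTop (𝓝 (∑ j : Fin n, L j)) := by
    have := tendsto_finset_sum (Finset.univ : Finset (Fin n)) (fun j _ => hL j)
    simpa only [← hsplit] using this
  calc ell μ f = ENNReal.ofReal (∑ j : Fin n, L j) := ell_eq_of_tendsto hsumtendsto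
    _ = ∑ j : Fin n, ENNReal.ofReal (L j) :=
        ENNReal.ofReal_sum_of_nonneg fun j _ => hLnn j
    _ ≤ ∑ j : Fin n, rho μ (U (e j)) := by
        apply Finset.sum_le_sum
        intro j _
        rw [← ell_eq_of_tendsto (hL j)]
        exact ell_le_rho (hmem j)
    _ = ∑ i ∈ s, rho μ (U i) := by
        rw [← Finset.sum_attach s (fun i => rho μ (U i))]
        exact Equiv.sum_comp s.equivFin.symm (fun i => rho μ (U (i : ℕ)))
    _ ≤ ∑' i, rho μ (U i) := ENNReal.sum_le_tsum s


lemma exists_nu [LocallyCompactSpace X] (μ : ℕ → Measure X)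
    (hloc : ∀ k, IsLocallyFiniteMeasure (μ k))
    (hLim : ∀ g : X → ℝ, Continuous g → HasCompactSupport g →
      ∃ L, Tendsto (fun k => ∫ x, g x ∂ μ k) atTop (𝓝 L)) :
    ∃ ν : Measure X, (∀ U : Set X, IsOpen U → ν U = rho μ U) ∧
      (∀ s : Set X, MeasurableSet s → ν s = m0 μ s) := by
  -- countable subadditivity of `m0`
  have hsubadd : ∀ A : ℕ → Set X, m0 μ (⋃ i, A i) ≤ ∑' i, m0 μ (A i) := by
    intro A
    rcases eq_or_ne (∑' i, m0 μ (A i)) ∞ with htop | htop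
    · rw [htop]; exact le_top
    apply ENNReal.le_of_forall_pos_le_add
    intro ε hε _
    obtain ⟨δ, hδ0, hδsum⟩ := ENNReal.exists_pos_sum_of_countable
      (by exact_mod_cast hε.ne' : (ε : ℝ≥0∞) ≠ 0) ℕ
    have hchoice : ∀ i : ℕ, ∃ V : Set X, IsOpen V ∧ A i ⊆ V ∧
        rho μ V ≤ m0 μ (A i) + δ i := by
      intro i
      have hfin : m0 μ (A i) ≠ ∞ := ne_top_of_le_ne_top htop (ENNReal.le_tsum i)
      have hlt : m0 μ (A i) < m0 μ (A i) + δ i :=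
        ENNReal.lt_add_right hfin (by exact_mod_cast (hδ0 i).ne')
      conv_lhs at hlt => rw [m0]
      simp only [iInf_lt_iff] at hlt
      obtain ⟨V, hV, hAV, hVlt⟩ := hlt
      exact ⟨V, hV, hAV, hVlt.le⟩
    choose V hVopen hAV hVle using hchoice
    calc m0 μ (⋃ i, A i) ≤ rho μ (⋃ i, V i) :=
          m0_le_rho μ (isOpen_iUnion hVopen) (iUnion_mono hAV)
      _ ≤ ∑' i, rho μ (V i) := rho_iUnion_le μ hloc hLim V hVopen
      _ ≤ ∑' i, (m0 μ (A i) + δ i) := ENNReal.tsum_le_tsum hVle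
      _ = ∑' i, m0 μ (A i) + ∑' i, (δ i : ℝ≥0∞) := ENNReal.tsum_add
      _ ≤ ∑' i, m0 μ (A i) + ε := add_le_add_right hδsum.le _
  set outer : OuterMeasure X :=
    { measureOf := m0 μ
      empty := m0_empty μ
      mono := fun h => m0_mono μ h
      iUnion_nat := fun A _ => hsubadd A } with houter
  have houter_apply : ∀ A : Set X, outer A = m0 μ A := fun A => rfl
  -- metric outer measure
  have hmetric : outer.IsMetric := by
    intro s t hst
    refine le_antisymm (measure_union_le s t) ?_
    rw [houter_apply, houter_apply, houter_apply, m0]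
    apply le_iInf; intro W; apply le_iInf; intro hW; apply le_iInf; intro hstW
    obtain ⟨r, hr0, hr⟩ := hst
    set r' : ℝ≥0∞ := min r 1 with hr'
    have hr'0 : r' ≠ 0 := by
      simp only [hr', ne_eq, min_eq_iff]
      intro hc
      rcases hc with ⟨h1, _⟩ | ⟨h1, _⟩
      · exact hr0 h1
      · exact one_ne_zero h1
    have hr'top : r' ≠ ∞ := ne_top_of_le_ne_top one_ne_top (min_le_right r 1)
    have hr'pos : 0 < r'.toReal := ENNReal.toReal_pos hr'0 hr'top
    set δ : ℝ := r'.toReal / 3 with hδ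
    have hδpos : 0 < δ := by positivity
    set Us : Set X := W ∩ Metric.thickening δ s with hUs
    set Ut : Set X := W ∩ Metric.thickening δ t with hUt
    have hUsopen : IsOpen Us := hW.inter Metric.isOpen_thickening
    have hUtopen : IsOpen Ut := hW.inter Metric.isOpen_thickening
    have hsUs : s ⊆ Us := subset_inter (fun x hx => hstW (Or.inl hx))
      (Metric.self_subset_thickening hδpos s)
    have htUt : t ⊆ Ut := subset_inter (fun x hx => hstW (Or.inr hx))
      (Metric.self_subset_thickening hδpos t)
    have hdisj : Disjoint Us Ut := by
      rw [Set.disjoint_left]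
      rintro x ⟨-, hxs⟩ ⟨-, hxt⟩
      obtain ⟨a, ha, hxa⟩ := Metric.mem_thickening_iff.mp hxs
      obtain ⟨b, hb, hxb⟩ := Metric.mem_thickening_iff.mp hxt
      have h1 : edist a b < ENNReal.ofReal δ + ENNReal.ofReal δ := by
        calc edist a b ≤ edist a x + edist x b := edist_triangle a x b
          _ < ENNReal.ofReal δ + ENNReal.ofReal δ := by
              apply ENNReal.add_lt_add
              · rw [edist_dist, dist_comm]
                exact ENNReal.ofReal_lt_ofReal_iff_of_nonneg dist_nonneg |>.mpr hxa
              · rw [edist_dist]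
                exact ENNReal.ofReal_lt_ofReal_iff_of_nonneg dist_nonneg |>.mpr hxb
      have h2 : ENNReal.ofReal δ + ENNReal.ofReal δ < r' := by
        rw [← ENNReal.ofReal_add hδpos.le hδpos.le]
        have : δ + δ < r'.toReal := by
          rw [hδ]; linarith
        calc ENNReal.ofReal (δ + δ) < ENNReal.ofReal r'.toReal :=
              ENNReal.ofReal_lt_ofReal_iff_of_nonneg (by positivity) |>.mpr this
          _ = r' := ENNReal.ofReal_toReal hr'top
      have h3 : r' ≤ edist a b := le_trans (min_le_left r 1) (hr a ha b hb)
      exact absurd (lt_of_lt_of_le (lt_trans h1 h2) h3) (lt_irrefl _)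
    have hUsW : Us ⊆ W := inter_subset_left
    have hUtW : Ut ⊆ W := inter_subset_left
    calc m0 μ s + m0 μ t ≤ rho μ Us + rho μ Ut :=
          add_le_add (m0_le_rho μ hUsopen hsUs) (m0_le_rho μ hUtopen htUt)
      _ ≤ rho μ W := by
          rw [rho, rho]
          apply ENNReal.biSup_add_biSup_le ⟨(0 : X → ℝ), zero_mem_AA Us⟩
            ⟨(0 : X → ℝ), zero_mem_AA Ut⟩
          intro f hf g hg
          -- f + g is admissible for W
          have hfg_mem : (fun x => f x + g x) ∈ AA W := by
            obtain ⟨hfc, hfcs, hf01, hfsupp⟩ := hf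
            obtain ⟨hgc, hgcs, hg01, hgsupp⟩ := hg
            refine ⟨hfc.add hgc, ?_, ?_, ?_⟩
            · have : (fun x => f x + g x) = f + g := rfl
              rw [this]; exact hfcs.add hgcs
            · intro x
              refine ⟨add_nonneg (hf01 x).1 (hg01 x).1, ?_⟩
              show f x + g x ≤ 1
              by_cases hx : f x = 0
              · rw [hx, zero_add]; exact (hg01 x).2
              · have hxf : x ∈ Us := hfsupp (subset_tsupport f hx)
                have hxg : g x = 0 := by
                  apply image_eq_zero_of_notMem_tsupport
                  intro hxt
                  exact (Set.disjoint_left.mp hdisj hxf) (hgsupp hxt)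
                rw [hxg, add_zero]; exact (hf01 x).2
            · calc tsupport (fun x => f x + g x)
                    ⊆ tsupport f ∪ tsupport g := by
                    apply closure_minimal ?_
                      ((isClosed_tsupport f).union (isClosed_tsupport g))
                    intro x hx
                    simp only [Function.mem_support] at hx
                    by_contra hc
                    simp only [Set.mem_union, not_or] at hc
                    obtain ⟨h1, h2⟩ := hc
                    rw [image_eq_zero_of_notMem_tsupport h1,
                      image_eq_zero_of_notMem_tsupport h2, add_zero] at hx
                    exact hx rfl
                _ ⊆ W := union_subset (hfsupp.trans hUsW) (hgsupp.trans hUtW)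
          obtain ⟨Lf, hLf⟩ := hLim f hf.1 hf.2.1
          obtain ⟨Lg, hLg⟩ := hLim g hg.1 hg.2.1
          have hLfg : Tendsto (fun k => ∫ x, f x + g x ∂ μ k) atTop (𝓝 (Lf + Lg)) := by
            have : ∀ k, ∫ x, f x + g x ∂ μ k = (∫ x, f x ∂ μ k) + ∫ x, g x ∂ μ k := by
              intro k
              haveI := hloc k
              exact integral_add (hf.1.integrable_of_hasCompactSupport hf.2.1)
                (hg.1.integrable_of_hasCompactSupport hg.2.1)
            simp only [this]
            exact hLf.add hLg
          calc ell μ f + ell μ g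
              = ENNReal.ofReal Lf + ENNReal.ofReal Lg := by
                rw [ell_eq_of_tendsto hLf, ell_eq_of_tendsto hLg]
            _ = ENNReal.ofReal (Lf + Lg) := (ENNReal.ofReal_add
                (tendsto_nonneg hLf fun x => (hf.2.2.1 x).1)
                (tendsto_nonneg hLg fun x => (hg.2.2.1 x).1)).symm
            _ = ell μ (fun x => f x + g x) := (ell_eq_of_tendsto hLfg).symm
            _ ≤ ⨆ f ∈ AA W, ell μ f := le_iSup₂ (f := fun f _ => ell μ f) _ hfg_mem
  have hborel : (inferInstance : MeasurableSpace X) ≤ outer.caratheodory := by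
    rw [BorelSpace.measurable_eq (α := X)]
    exact hmetric.borel_le_caratheodory
  refine ⟨outer.toMeasure hborel, ?_, ?_⟩
  · intro U hU
    rw [toMeasure_apply outer hborel hU.measurableSet, houter_apply, m0_open μ hU]
  · intro s hs
    rw [toMeasure_apply outer hborel hs, houter_apply]


end VagueLimitAux

open VagueLimitAux

/-- **A countable sup-norm dense family in `C_c(X)` detecting vague convergence.**  In a
locally compact complete separable metric space `X` there is a countable set `Ψ` of
compactly supported continuous functions, dense (in sup norm) among all compactly
supported continuous functions, such that whenever `(μ_k)` are locally finite Borel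
measures with `∫ f dμ_k` convergent for every `f ∈ Ψ`, the sequence `μ_k` converges
vaguely to some locally finite Borel measure. -/
theorem exists_countable_dense_family_vague_limit
    {X : Type*} [MetricSpace X] [CompleteSpace X] [TopologicalSpace.SeparableSpace X]
    [LocallyCompactSpace X] [MeasurableSpace X] [BorelSpace X] :
    ∃ Ψ : Set (X → ℝ), Ψ.Countable ∧
      (∀ f ∈ Ψ, Continuous f ∧ HasCompactSupport f) ∧
      (∀ g : X → ℝ, Continuous g → HasCompactSupport g → ∀ ε : ℝ, 0 < ε →
        ∃ f ∈ Ψ, ∀ x : X, |g x - f x| ≤ ε) ∧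
      (∀ μ : ℕ → Measure X, (∀ k, IsLocallyFiniteMeasure (μ k)) →
        (∀ f ∈ Ψ, ∃ L : ℝ, Tendsto (fun k => ∫ x, f x ∂(μ k)) atTop (𝓝 L)) →
        ∃ ν : Measure X, IsLocallyFiniteMeasure ν ∧
          ∀ g : X → ℝ, Continuous g → HasCompactSupport g →
            Tendsto (fun k => ∫ x, g x ∂(μ k)) atTop (𝓝 (∫ x, g x ∂ν))) := by
  classical
  haveI : SecondCountableTopology X := UniformSpace.secondCountable_of_separable X
  obtain ⟨K, χ, Ψ, hχ, hΨcount, hχΨ, hΨcc, happrox⟩ := exists_Psi (X := X)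
  refine ⟨Ψ, hΨcount, hΨcc, ?_, ?_⟩
  · intro g hgc hgcs ε hε
    obtain ⟨n, hn⟩ := K.exists_superset_of_isCompact hgcs
    obtain ⟨f, hfΨ, -, hf⟩ := happrox g hgc n hn ε hε
    exact ⟨f, hfΨ, hf⟩
  · intro μ hloc hconv
    haveI := hloc
    -- uniform bounds on compact exhaustion pieces
    have hBex : ∀ n : ℕ, ∃ B : ℝ, 0 ≤ B ∧ (∀ k, ∫ x, χ n x ∂ μ k ≤ B) ∧
        ∀ k, μ k (K n) ≤ ENNReal.ofReal B := by
      intro n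
      obtain ⟨L, hL⟩ := hconv (χ n) (hχΨ n)
      obtain ⟨B₀, hB₀⟩ := hL.isBoundedUnder_le.bddAbove_range
      have hub : ∀ k, ∫ x, χ n x ∂ μ k ≤ max B₀ 0 :=
        fun k => le_trans (hB₀ (mem_range_self k)) (le_max_left _ _)
      refine ⟨max B₀ 0, le_max_right _ _, hub, fun k => ?_⟩
      have h1 : μ k (K n) ≤ ENNReal.ofReal (∫ x, χ n x ∂ μ k) :=
        meas_le_integral (μ k) (hχ n).1 (hχ n).2.1 (fun x => ((hχ n).2.2.1 x).1)
          (fun x hx => le_of_eq ((hχ n).2.2.2.1 hx).symm)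
      exact h1.trans (ENNReal.ofReal_le_ofReal (hub k))
    choose B hB0 hBint hBmeas using hBex
    -- existence of limits for all compactly supported continuous functions
    have hLim : ∀ g : X → ℝ, Continuous g → HasCompactSupport g →
        ∃ L, Tendsto (fun k => ∫ x, g x ∂ μ k) atTop (𝓝 L) := by
      intro g hgc hgcs
      obtain ⟨n, hn⟩ := K.exists_superset_of_isCompact hgcs
      apply cauchySeq_tendsto_of_complete
      rw [Metric.cauchySeq_iff]
      intro ε hε
      have hBpos : 0 < B (n+1) + 1 := by linarith [hB0 (n+1)]
      set ε' := ε / (3 * (B (n+1) + 1)) with hε'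
      have hε'pos : 0 < ε' := by positivity
      obtain ⟨f, hfΨ, hfsupp, hfapprox⟩ := happrox g hgc n hn ε' hε'pos
      obtain ⟨L, hL⟩ := hconv f hfΨ
      obtain ⟨N, hN⟩ := Metric.cauchySeq_iff.mp hL.cauchySeq (ε/3) (by positivity)
      refine ⟨N, fun j hj k hk => ?_⟩
      have hest : ∀ m : ℕ, |∫ x, g x ∂ μ m - ∫ x, f x ∂ μ m| ≤ ε/3 := by
        intro m
        have hint_g := hgc.integrable_of_hasCompactSupport hgcs (μ := μ m)
        have hΨf := hΨcc f hfΨ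
        have hint_f := hΨf.1.integrable_of_hasCompactSupport hΨf.2 (μ := μ m)
        have h0 : ∀ x, x ∉ (K (n+1) : Set X) → g x - f x = 0 := by
          intro x hx
          have hg0 : g x = 0 := image_eq_zero_of_notMem_tsupport
            (fun hc => hx (K.subset n.le_succ (hn hc)))
          have hf0 : f x = 0 := image_eq_zero_of_notMem_tsupport (fun hc => hx (hfsupp hc))
          rw [hg0, hf0, sub_zero]
        have heq : ∫ x, g x ∂ μ m - ∫ x, f x ∂ μ m
            = ∫ x in (K (n+1) : Set X), (g x - f x) ∂ μ m := by
          rw [setIntegral_eq_integral_of_forall_compl_eq_zero h0, integral_sub hint_g hint_f]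
        rw [heq, ← Real.norm_eq_abs]
        have hKfin : μ m (K (n+1)) < ∞ := (K.isCompact (n+1)).measure_lt_top
        have hnorm := norm_setIntegral_le_of_norm_le_const (μ := μ m)
          (s := (K (n+1) : Set X)) (C := ε') hKfin
          (fun x _ => by rw [Real.norm_eq_abs]; exact hfapprox x)
        refine hnorm.trans ?_
        have h2 : (μ m (K (n+1))).toReal ≤ B (n+1) :=
          ENNReal.toReal_le_of_le_ofReal (hB0 (n+1)) (hBmeas (n+1) m)
        calc ε' * (μ m (K (n+1))).toReal ≤ ε' * (B (n+1) + 1) :=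
              mul_le_mul_of_nonneg_left (by linarith) hε'pos.le
          _ = ε/3 := by rw [hε']; field_simp
      have hdist := hN j hj k hk
      rw [Real.dist_eq] at hdist ⊢
      have t1 : |(∫ x, g x ∂ μ j) - ∫ x, g x ∂ μ k|
          ≤ |(∫ x, g x ∂ μ j) - ∫ x, f x ∂ μ j| + |(∫ x, f x ∂ μ j) - ∫ x, g x ∂ μ k| :=
        abs_sub_le _ _ _
      have t2 : |(∫ x, f x ∂ μ j) - ∫ x, g x ∂ μ k|
          ≤ |(∫ x, f x ∂ μ j) - ∫ x, f x ∂ μ k| + |(∫ x, f x ∂ μ k) - ∫ x, g x ∂ μ k| :=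
        abs_sub_le _ _ _
      have t3 : |(∫ x, f x ∂ μ k) - ∫ x, g x ∂ μ k| = |(∫ x, g x ∂ μ k) - ∫ x, f x ∂ μ k| :=
        abs_sub_comm _ _
      have e1 := hest j
      have e2 := hest k
      linarith
    -- construct the limit measure
    obtain ⟨ν, hνopen, hνmeas⟩ := exists_nu μ hloc hLim
    -- bound the measure of open sets inside the exhaustion
    have hνK : ∀ n : ℕ, ν (interior (K (n+1) : Set X)) ≤ ENNReal.ofReal (B (n+1)) := by
      intro n
      rw [hνopen _ isOpen_interior, rho]
      apply iSup_le; intro f; apply iSup_le; intro hf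
      obtain ⟨hfc, hfcs, hf01, hfsupp⟩ := hf
      have hfχ : ∀ x, f x ≤ χ (n+1) x := by
        intro x
        by_cases hx : x ∈ tsupport f
        · have hxK : x ∈ (K (n+1) : Set X) := interior_subset (hfsupp hx)
          rw [show χ (n+1) x = 1 from (hχ (n+1)).2.2.2.1 hxK]
          exact (hf01 x).2
        · rw [image_eq_zero_of_notMem_tsupport hx]
          exact ((hχ (n+1)).2.2.1 x).1
      have hpt : ∀ k, ENNReal.ofReal (∫ x, f x ∂ μ k) ≤ ENNReal.ofReal (B (n+1)) := by
        intro k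
        apply ENNReal.ofReal_le_ofReal
        calc ∫ x, f x ∂ μ k ≤ ∫ x, χ (n+1) x ∂ μ k :=
              integral_mono (hfc.integrable_of_hasCompactSupport hfcs)
                ((hχ (n+1)).1.integrable_of_hasCompactSupport (hχ (n+1)).2.1) hfχ
          _ ≤ B (n+1) := hBint (n+1) k
      calc ell μ f ≤ liminf (fun _ : ℕ => ENNReal.ofReal (B (n+1))) atTop :=
            liminf_le_liminf (Eventually.of_forall hpt)
        _ = ENNReal.ofReal (B (n+1)) := liminf_const _
    have hνloc : IsLocallyFiniteMeasure ν := by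
      constructor
      intro x
      obtain ⟨n, hn⟩ := K.exists_mem x
      refine ⟨interior (K (n+1) : Set X),
        isOpen_interior.mem_nhds (K.subset_interior_succ n hn), ?_⟩
      exact lt_of_le_of_lt (hνK n) ENNReal.ofReal_lt_top
    haveI := hνloc
    -- portmanteau-type inequalities
    have hopen_le : ∀ U : Set X, IsOpen U → ν U ≤ liminf (fun k => μ k U) atTop := by
      intro U hU
      rw [hνopen U hU, rho]
      apply iSup_le; intro f; apply iSup_le; intro hf
      have hpt : ∀ k, ENNReal.ofReal (∫ x, f x ∂ μ k) ≤ μ k U :=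
        fun k => integral_le_meas (μ k) hf.1 hf.2.1 hf.2.2.1 hU.measurableSet
          (fun x hx => image_eq_zero_of_notMem_tsupport (fun hc => hx (hf.2.2.2 hc)))
      exact liminf_le_liminf (Eventually.of_forall hpt)
    have hcompact_le : ∀ S : Set X, IsCompact S → limsup (fun k => μ k S) atTop ≤ ν S := by
      intro S hS
      rw [hνmeas S hS.isClosed.measurableSet, m0]
      refine le_iInf fun U => le_iInf fun hU => le_iInf fun hSU => ?_
      obtain ⟨f, hfc, hfcs, hf01, hf1, hfsupp⟩ := urysohn hS hU hSU
      have hpt : ∀ k, μ k S ≤ ENNReal.ofReal (∫ x, f x ∂ μ k) :=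
        fun k => meas_le_integral (μ k) hfc hfcs (fun x => (hf01 x).1)
          (fun x hx => le_of_eq (by simpa using (hf1 hx).symm))
      obtain ⟨L, hL⟩ := hLim f hfc hfcs
      have hofreal : Tendsto (fun k => ENNReal.ofReal (∫ x, f x ∂ μ k)) atTop
          (𝓝 (ENNReal.ofReal L)) := (ENNReal.continuous_ofReal.tendsto L).comp hL
      calc limsup (fun k => μ k S) atTop
          ≤ limsup (fun k => ENNReal.ofReal (∫ x, f x ∂ μ k)) atTop :=
            limsup_le_limsup (Eventually.of_forall hpt)
        _ = ENNReal.ofReal L := hofreal.limsup_eq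
        _ = ell μ f := (ell_eq_of_tendsto hL).symm
        _ ≤ rho μ U := ell_le_rho ⟨hfc, hfcs, hf01, hfsupp⟩
    -- the main convergence for nonnegative functions, via the layer cake formula
    have hmain : ∀ g : X → ℝ, Continuous g → HasCompactSupport g → (∀ x, 0 ≤ g x) →
        Tendsto (fun k => ∫ x, g x ∂ μ k) atTop (𝓝 (∫ x, g x ∂ ν)) := by
      intro g hgc hgcs hg0
      obtain ⟨n, hn⟩ := K.exists_superset_of_isCompact hgcs
      obtain ⟨M₀, hM₀⟩ := hgc.bounded_above_of_compact_support hgcs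
      set M : ℝ := max M₀ 0 with hM
      have hgM : ∀ x, g x ≤ M :=
        fun x => le_trans (le_trans (le_abs_self _) (hM₀ x)) (le_max_left _ _)
      -- layer cake identities
      have hlcμ : ∀ k, ENNReal.ofReal (∫ x, g x ∂ μ k)
          = ∫⁻ t in Ioi (0:ℝ), μ k {x | t < g x} := by
        intro k
        rw [ofReal_integral_eq_lintegral_ofReal
          (hgc.integrable_of_hasCompactSupport hgcs) (Eventually.of_forall hg0)]
        exact lintegral_eq_lintegral_meas_lt (μ k) (Eventually.of_forall hg0)
          hgc.aemeasurable
      have hlcν : ENNReal.ofReal (∫ x, g x ∂ ν) = ∫⁻ t in Ioi (0:ℝ), ν {x | t < g x} := by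
        rw [ofReal_integral_eq_lintegral_ofReal
          (hgc.integrable_of_hasCompactSupport hgcs) (Eventually.of_forall hg0)]
        exact lintegral_eq_lintegral_meas_lt ν (Eventually.of_forall hg0) hgc.aemeasurable
      -- a.e. convergence of the distribution functions
      have hctble : Set.Countable {t : ℝ | 0 < ν {x | g x = t}} := by
        apply MeasureTheory.Measure.countable_meas_pos_of_disjoint_iUnion₀
          (As := fun t : ℝ => {x | g x = t})
        · exact fun t => (hgc.measurable (measurableSet_singleton t)).nullMeasurableSet
        · intro t t' htt'
          apply Disjoint.aedisjoint
          rw [Set.disjoint_left]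
          intro x hx hx'
          exact htt' (hx ▸ hx')
      have hnull : (volume.restrict (Ioi (0:ℝ))) {t : ℝ | 0 < ν {x | g x = t}} = 0 := by
        apply le_antisymm _ zero_le
        calc (volume.restrict (Ioi (0:ℝ))) {t : ℝ | 0 < ν {x | g x = t}}
            ≤ volume {t : ℝ | 0 < ν {x | g x = t}} := Measure.restrict_apply_le _ _
          _ = 0 := hctble.measure_zero _
      have hae1 : ∀ᵐ t ∂(volume.restrict (Ioi (0:ℝ))), ν {x | g x = t} = 0 := by
        rw [ae_iff]
        apply le_antisymm _ zero_le
        refine le_trans (measure_mono ?_) hnull.le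
        intro t ht
        simp only [mem_setOf_eq] at ht ⊢
        exact pos_iff_ne_zero.mpr ht
      have hae : ∀ᵐ t ∂(volume.restrict (Ioi (0:ℝ))),
          Tendsto (fun k => μ k {x | t < g x}) atTop (𝓝 (ν {x | t < g x})) := by
        filter_upwards [hae1, ae_restrict_mem measurableSet_Ioi] with t hteq htmem
        have htpos : (0:ℝ) < t := htmem
        have hopen : IsOpen {x | t < g x} := isOpen_lt continuous_const hgc
        have hclosed : IsClosed {x | t ≤ g x} := isClosed_le continuous_const hgc
        have hsub : {x | t ≤ g x} ⊆ tsupport g := by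
          intro x hx
          apply subset_tsupport
          simp only [Function.mem_support]
          intro h0
          rw [mem_setOf_eq, h0] at hx
          linarith
        have hScomp : IsCompact {x | t ≤ g x} := hgcs.of_isClosed_subset hclosed hsub
        refine tendsto_of_le_liminf_of_limsup_le (hopen_le _ hopen) ?_
          (by isBoundedDefault) (by isBoundedDefault)
        · calc limsup (fun k => μ k {x | t < g x}) atTop
              ≤ limsup (fun k => μ k {x | t ≤ g x}) atTop :=
                limsup_le_limsup (Eventually.of_forall fun k =>
                  measure_mono fun x (hx : t < g x) => le_of_lt hx)
            _ ≤ ν {x | t ≤ g x} := hcompact_le _ hScomp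
            _ ≤ ν {x | t < g x} := by
                have hsplit : {x | t ≤ g x} ⊆ {x | t < g x} ∪ {x | g x = t} := by
                  intro x hx
                  rcases lt_or_eq_of_le (show t ≤ g x from hx) with h | h
                  · exact Or.inl h
                  · exact Or.inr h.symm
                calc ν {x | t ≤ g x} ≤ ν ({x | t < g x} ∪ {x | g x = t}) :=
                      measure_mono hsplit
                  _ ≤ ν {x | t < g x} + ν {x | g x = t} := measure_union_le _ _
                  _ = ν {x | t < g x} := by rw [hteq, add_zero]
      -- dominated convergence
      have hdom : Tendsto (fun k => ∫⁻ t in Ioi (0:ℝ), μ k {x | t < g x}) atTop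
          (𝓝 (∫⁻ t in Ioi (0:ℝ), ν {x | t < g x})) := by
        apply tendsto_lintegral_of_dominated_convergence
          (bound := (Ioc (0:ℝ) M).indicator fun _ => ENNReal.ofReal (B n))
        · intro k
          have hanti : Antitone fun t : ℝ => μ k {x | t < g x} := by
            intro t t' htt'
            exact measure_mono fun x hx => lt_of_le_of_lt htt' hx
          exact hanti.measurable
        · intro k
          filter_upwards [ae_restrict_mem measurableSet_Ioi] with t htmem
          have htpos : (0:ℝ) < t := htmem
          by_cases htM : t ≤ M
          · have : t ∈ Ioc (0:ℝ) M := ⟨htpos, htM⟩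
            rw [indicator_of_mem this]
            have hsub : {x | t < g x} ⊆ (K n : Set X) := by
              intro x hx
              apply hn
              apply subset_tsupport
              simp only [Function.mem_support]
              intro h0
              rw [mem_setOf_eq, h0] at hx
              linarith
            exact le_trans (measure_mono hsub) (hBmeas n k)
          · have : t ∉ Ioc (0:ℝ) M := fun hc => htM hc.2
            rw [indicator_of_notMem this]
            have : {x | t < g x} = ∅ := by
              ext x
              simp only [mem_setOf_eq, mem_empty_iff_false, iff_false, not_lt]
              exact le_trans (hgM x) (le_of_not_ge htM)
            simp [this]
        · rw [lintegral_indicator measurableSet_Ioc, setLIntegral_const _ _]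
          apply ENNReal.mul_ne_top ENNReal.ofReal_ne_top
          have hIoc : volume (Ioc (0:ℝ) M) ≠ ∞ := by
            rw [Real.volume_Ioc]; exact ENNReal.ofReal_ne_top
          exact ne_top_of_le_ne_top hIoc (Measure.restrict_apply_le _ _)
        · exact hae
      -- back to real integrals
      have hdom' : Tendsto (fun k => ENNReal.ofReal (∫ x, g x ∂ μ k)) atTop
          (𝓝 (ENNReal.ofReal (∫ x, g x ∂ ν))) := by
        simp only [hlcμ, hlcν]
        exact hdom
      have htoreal := (ENNReal.tendsto_toReal (ENNReal.ofReal_ne_top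
        (r := ∫ x, g x ∂ ν))).comp hdom'
      have hgν0 : 0 ≤ ∫ x, g x ∂ ν := integral_nonneg hg0
      have hrw : (fun k => ((ENNReal.ofReal (∫ x, g x ∂ μ k)).toReal)) =
          fun k => ∫ x, g x ∂ μ k := by
        funext k
        exact ENNReal.toReal_ofReal (integral_nonneg hg0)
      rw [Function.comp_def] at htoreal
      rw [hrw, ENNReal.toReal_ofReal hgν0] at htoreal
      exact htoreal
    -- decomposition into positive and negative parts
    refine ⟨ν, hνloc, fun g hgc hgcs => ?_⟩
    set gp : X → ℝ := fun x => max (g x) 0 with hgp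
    set gm : X → ℝ := fun x => max (-g x) 0 with hgm
    have hgpc : Continuous gp := hgc.max continuous_const
    have hgmc : Continuous gm := hgc.neg.max continuous_const
    have hgpcs : HasCompactSupport gp := by
      have : gp = (fun y : ℝ => max y 0) ∘ g := rfl
      rw [this]
      exact hgcs.comp_left (by simp)
    have hgmcs : HasCompactSupport gm := by
      have : gm = (fun y : ℝ => max (-y) 0) ∘ g := rfl
      rw [this]
      exact hgcs.comp_left (by simp)
    have hgp0 : ∀ x, 0 ≤ gp x := fun x => le_max_right _ _
    have hgm0 : ∀ x, 0 ≤ gm x := fun x => le_max_right _ _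
    have hdecomp : ∀ x, g x = gp x - gm x := by
      intro x
      rw [hgp, hgm]
      rcases le_total (g x) 0 with h | h
      · simp [max_eq_right h, max_eq_left (neg_nonneg.mpr h)]
      · simp [max_eq_left h, max_eq_right (neg_nonpos.mpr h)]
    have hp := hmain gp hgpc hgpcs hgp0
    have hm := hmain gm hgmc hgmcs hgm0
    have hsplit : ∀ (m : Measure X) [IsLocallyFiniteMeasure m],
        ∫ x, g x ∂ m = (∫ x, gp x ∂ m) - ∫ x, gm x ∂ m := by
      intro m hm
      rw [← integral_sub (hgpc.integrable_of_hasCompactSupport hgpcs)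
        (hgmc.integrable_of_hasCompactSupport hgmcs)]
      exact integral_congr_ae (Eventually.of_forall fun x => hdecomp x)
    have := hp.sub hm
    simp only [← hsplit] at this
    exact this
end

section
/- Let X be a complete separable metric space, K ⊆ X a compact subset, and Ψ ⊆ C(K, ℝ) a countable subset dense with respect to the supremum norm. Let (μ_k) be a sequence of random finite Borel measures on K on a probability space (Ω, 𝒜, P), and for each f ∈ Ψ let S(f) be a random variable with |S(f)| < ∞ almost surely such that ∫ f dμ_k converges to S(f) in probability as k → ∞. Then there exists a random finite Borel measure μ on K such that μ_k weakly converges to μ subsequentially in probability. -/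
open MeasureTheory Filter Set Topology

open BoundedContinuousFunction NNReal ENNReal

set_option linter.unusedSectionVars false
set_option maxHeartbeats 1000000

section rmtaux
variable {Z : Type*} [MetricSpace Z] [CompactSpace Z] [MeasurableSpace Z] [BorelSpace Z]

lemma RMT.norm_integral_le (ρ : Measure Z) [IsFiniteMeasure ρ] (g : Z →ᵇ ℝ) :
    ‖∫ x, g x ∂ρ‖ ≤ ‖g‖ * (ρ Set.univ).toReal :=
  norm_integral_le_of_norm_le_const (Eventually.of_forall fun x => g.norm_coe_le_norm x)

lemma RMT.dist_integral_le (ρ : Measure Z) [IsFiniteMeasure ρ] (g h : Z →ᵇ ℝ) :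
    dist (∫ x, g x ∂ρ) (∫ x, h x ∂ρ) ≤ dist g h * (ρ Set.univ).toReal := by
  rw [dist_eq_norm, ← integral_sub (g.integrable ρ) (h.integrable ρ)]
  calc ‖∫ x, (g x - h x) ∂ρ‖ ≤ ‖g - h‖ * (ρ Set.univ).toReal := by
        simpa using RMT.norm_integral_le ρ (g - h)
    _ = dist g h * (ρ Set.univ).toReal := by rw [← dist_eq_norm]

/-- Core: construct the weak limit of probability measures on a compact metric space, given
that all integrals of bounded continuous functions converge. -/
lemma RMT.prob_limit (ν : ℕ → Measure Z) [hν : ∀ k, IsProbabilityMeasure (ν k)]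
    (h : ∀ g : Z →ᵇ ℝ, ∃ l : ℝ, Tendsto (fun k => ∫ x, g x ∂(ν k)) atTop (𝓝 l)) :
    ∃ m : Measure Z, IsProbabilityMeasure m ∧
      ∀ g : Z →ᵇ ℝ, Tendsto (fun k => ∫ x, g x ∂(ν k)) atTop (𝓝 (∫ x, g x ∂m)) := by
  choose L hL using h
  have hL1 : L 1 = 1 := by
    refine tendsto_nhds_unique (hL 1) ?_
    simp only [BoundedContinuousFunction.coe_one, Pi.one_apply, integral_const, measure_univ,
      ENNReal.toReal_one, smul_eq_mul, one_mul, probReal_univ]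
    exact tendsto_const_nhds
  have hLmono : ∀ g h : Z →ᵇ ℝ, (∀ x, g x ≤ h x) → L g ≤ L h := fun g h hgh =>
    le_of_tendsto_of_tendsto' (hL g) (hL h) fun k =>
      integral_mono (g.integrable _) (h.integrable _) hgh
  have hLadd : ∀ g h : Z →ᵇ ℝ, L (g + h) = L g + L h := by
    intro g h
    refine tendsto_nhds_unique (hL (g + h)) ?_
    have e : (fun k => ∫ x, (g + h) x ∂(ν k)) = fun k => (∫ x, g x ∂(ν k)) + ∫ x, h x ∂(ν k) := by
      funext k
      simp only [BoundedContinuousFunction.coe_add, Pi.add_apply]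
      exact integral_add (g.integrable _) (h.integrable _)
    rw [e]; exact (hL g).add (hL h)
  set A : Set Z → Set (Z →ᵇ ℝ) :=
    fun C => {g | (∀ x, 0 ≤ g x) ∧ ∀ x ∈ C, 1 ≤ g x} with hA
  have hmem : ∀ (C : Set Z) (g : Z →ᵇ ℝ), ((∀ x, 0 ≤ g x) ∧ ∀ x ∈ C, 1 ≤ g x) → g ∈ A C := by
    intro C g hg; simpa only [hA, Set.mem_setOf_eq] using hg
  have hmem' : ∀ (C : Set Z), ∀ g ∈ A C, ((∀ x, 0 ≤ g x) ∧ ∀ x ∈ C, 1 ≤ g x) := by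
    intro C g hg; simpa only [hA, Set.mem_setOf_eq] using hg
  clear_value A
  clear hA
  have hone : ∀ C : Set Z, (1 : Z →ᵇ ℝ) ∈ A C := fun C =>
    hmem C 1 ⟨fun x => by simp, fun x _ => by simp⟩
  have hAne : ∀ C : Set Z, (L '' A C).Nonempty := fun C => ⟨L 1, mem_image_of_mem L (hone C)⟩
  have hAbdd : ∀ C : Set Z, ∀ y ∈ L '' A C, (0:ℝ) ≤ y := by
    rintro C y ⟨g, hg, rfl⟩
    have h0 : L 0 = 0 := by have := hLadd 0 0; simpa using this
    have := hLmono 0 g (by simpa using (hmem' C g hg).1)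
    simpa [h0] using this
  have hAbdd' : ∀ C : Set Z, BddBelow (L '' A C) := fun C => ⟨0, fun y hy => hAbdd C y hy⟩
  set c : Set Z → ℝ := fun C => sInf (L '' A C) with hc
  have hcle : ∀ (C : Set Z), ∀ g ∈ A C, c C ≤ L g := by
    intro C g hg
    simp only [hc]
    exact csInf_le (hAbdd' C) (mem_image_of_mem L hg)
  have hlec : ∀ (C : Set Z) (b : ℝ), (∀ g ∈ A C, b ≤ L g) → b ≤ c C := by
    intro C b hb
    simp only [hc]
    refine le_csInf (hAne C) ?_
    rintro y ⟨g, hg, rfl⟩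
    exact hb g hg
  clear_value c
  clear hc
  have hcnn : ∀ C, 0 ≤ c C := fun C => hlec C 0 fun g hg => hAbdd C _ (mem_image_of_mem L hg)
  have hcmono : ∀ C₁ C₂ : Set Z, C₁ ⊆ C₂ → c C₁ ≤ c C₂ := by
    intro C₁ C₂ hsub
    refine hlec _ _ fun g hg => hcle _ g ?_
    obtain ⟨h1, h2⟩ := hmem' _ g hg
    exact hmem _ _ ⟨h1, fun x hx => h2 x (hsub hx)⟩
  have hcuniv : c univ = 1 := by
    refine le_antisymm ?_ ?_
    · have := hcle univ 1 (hone univ); simpa [hL1] using this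
    · refine hlec _ _ fun g hg => ?_
      obtain ⟨h1, h2⟩ := hmem' _ g hg
      have := hLmono 1 g fun x => by simpa using h2 x (mem_univ x)
      simpa [hL1] using this
  have hsub : ∀ C₁ C₂ : Set Z, c (C₁ ∪ C₂) ≤ c C₁ + c C₂ := by
    intro C₁ C₂
    have key : ∀ g₁ ∈ A C₁, ∀ g₂ ∈ A C₂, c (C₁ ∪ C₂) ≤ L g₁ + L g₂ := by
      intro g₁ hg₁ g₂ hg₂
      obtain ⟨hg₁n, hg₁1⟩ := hmem' _ _ hg₁
      obtain ⟨hg₂n, hg₂1⟩ := hmem' _ _ hg₂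
      rw [← hLadd]
      refine hcle _ (g₁ + g₂) (hmem _ _ ⟨fun x => ?_, fun x hx => ?_⟩)
      · simpa using add_nonneg (hg₁n x) (hg₂n x)
      · rcases hx with hx | hx
        · simpa using le_add_of_le_of_nonneg (hg₁1 x hx) (hg₂n x)
        · simpa using le_add_of_nonneg_of_le (hg₁n x) (hg₂1 x hx)
    have h1 : c (C₁ ∪ C₂) - c C₂ ≤ c C₁ := by
      refine hlec _ _ fun g₁ hg₁ => ?_
      have h2 : c (C₁ ∪ C₂) - L g₁ ≤ c C₂ := by
        refine hlec _ _ fun g₂ hg₂ => ?_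
        have := key g₁ hg₁ g₂ hg₂
        linarith
      linarith
    linarith
  have hadd : ∀ C₁ C₂ : Set Z, IsCompact C₁ → IsCompact C₂ → Disjoint C₁ C₂ →
      c C₁ + c C₂ ≤ c (C₁ ∪ C₂) := by
    intro C₁ C₂ h₁ h₂ hd
    obtain ⟨φ, hφ0, hφ1, hφmem⟩ :=
      exists_continuous_zero_one_of_isClosed h₁.isClosed h₂.isClosed hd
    set φb : Z →ᵇ ℝ := BoundedContinuousFunction.mkOfCompact φ with hφb
    refine hlec _ _ fun g hg => ?_
    obtain ⟨hgn, hg1⟩ := hmem' _ _ hg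
    have e1 : g * (1 - φb) ∈ A C₁ := by
      refine hmem _ _ ⟨fun x => ?_, fun x hx => ?_⟩
      · have hx2 : (0:ℝ) ≤ 1 - φb x := by
          simp only [hφb, BoundedContinuousFunction.mkOfCompact_apply]
          linarith [(hφmem x).2]
        simpa using mul_nonneg (hgn x) hx2
      · have h0 : φb x = 0 := by
          simp only [hφb, BoundedContinuousFunction.mkOfCompact_apply]
          exact hφ0 hx
        have := hg1 x (Or.inl hx)
        simp only [BoundedContinuousFunction.coe_mul, BoundedContinuousFunction.coe_sub,
          BoundedContinuousFunction.coe_one, Pi.mul_apply, Pi.sub_apply, Pi.one_apply, h0]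
        linarith
    have e2 : g * φb ∈ A C₂ := by
      refine hmem _ _ ⟨fun x => ?_, fun x hx => ?_⟩
      · have hx1 : (0:ℝ) ≤ φb x := by
          simp only [hφb, BoundedContinuousFunction.mkOfCompact_apply]
          exact (hφmem x).1
        simpa using mul_nonneg (hgn x) hx1
      · have h1' : φb x = 1 := by
          simp only [hφb, BoundedContinuousFunction.mkOfCompact_apply]
          exact hφ1 hx
        have := hg1 x (Or.inr hx)
        simp only [BoundedContinuousFunction.coe_mul, Pi.mul_apply, h1', mul_one]
        exact this
    have i1 := hcle _ _ e1
    have i2 := hcle _ _ e2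
    have i3 : L (g * (1 - φb)) + L (g * φb) = L g := by
      rw [← hLadd]; congr 1; ring
    linarith
  classical
  -- the content
  set κ : Content Z :=
    { toFun := fun C => Real.toNNReal (c C)
      mono' := fun K₁ K₂ h => Real.toNNReal_mono (hcmono _ _ h)
      sup_disjoint' := by
        intro K₁ K₂ hd _ _
        have : c (↑(K₁ ⊔ K₂) : Set Z) = c ↑K₁ + c ↑K₂ := by
          rw [TopologicalSpace.Compacts.coe_sup]
          exact le_antisymm (hsub _ _) (hadd _ _ K₁.2 K₂.2 hd)
        rw [this]
        exact Real.toNNReal_add (hcnn _) (hcnn _)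
      sup_le' := by
        intro K₁ K₂
        rw [TopologicalSpace.Compacts.coe_sup]
        exact le_trans (Real.toNNReal_mono (hsub _ _))
          (Real.toNNReal_add_le) } with hκ
  have hκval : ∀ C : TopologicalSpace.Compacts Z, (κ C : ℝ≥0∞) = ENNReal.ofReal (c ↑C) := by
    intro C
    rfl
  -- total mass one
  have hm_univ : κ.measure univ = 1 := by
    rw [κ.measure_apply MeasurableSet.univ, κ.outerMeasure_of_isOpen univ isOpen_univ]
    refine le_antisymm (iSup₂_le fun C _ => ?_) ?_
    · rw [hκval]
      refine le_trans (ENNReal.ofReal_le_ofReal (hcmono _ _ (subset_univ _))) ?_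
      simp [hcuniv]
    · have := Content.le_innerContent κ ⟨univ, isCompact_univ⟩ ⟨univ, isOpen_univ⟩ subset_rfl
      refine le_trans ?_ this
      rw [hκval]
      simp [hcuniv]
  -- liminf bound on open sets
  have h_opens : ∀ G : Set Z, IsOpen G →
      κ.measure G ≤ liminf (fun k => ν k G) atTop := by
    intro G hG
    rw [κ.measure_apply hG.measurableSet, κ.outerMeasure_of_isOpen G hG]
    refine iSup₂_le fun C hC => ?_
    obtain ⟨φ, hφ0, hφ1, hφmem⟩ := exists_continuous_zero_one_of_isClosed
      (hG.isClosed_compl) C.2.isClosed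
      (by
        rw [Set.disjoint_left]
        intro x hx hxC
        exact hx (hC hxC))
    set φb : Z →ᵇ ℝ := BoundedContinuousFunction.mkOfCompact φ with hφb
    have hφA : φb ∈ A ↑C := by
      refine hmem _ _ ⟨fun x => (hφmem x).1, fun x hx => ?_⟩
      have := hφ1 hx
      simp only [hφb, BoundedContinuousFunction.mkOfCompact_apply]
      simp only [Pi.one_apply] at this
      rw [this]
    have step1 : (κ C : ℝ≥0∞) ≤ ENNReal.ofReal (L φb) := by
      rw [hκval]
      exact ENNReal.ofReal_le_ofReal (hcle _ _ hφA)
    have step2 : ENNReal.ofReal (L φb) = liminf (fun k => ENNReal.ofReal (∫ x, φb x ∂(ν k))) atTop := by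
      refine (Tendsto.liminf_eq ?_).symm
      exact (ENNReal.continuous_ofReal.tendsto _).comp (hL φb)
    have step3 : ∀ k, ENNReal.ofReal (∫ x, φb x ∂(ν k)) ≤ ν k G := by
      intro k
      refine le_trans (le_of_eq (ofReal_integral_eq_lintegral_ofReal (φb.integrable _)
        (Eventually.of_forall fun x => (hφmem x).1))) ?_
      have : ∀ x, ENNReal.ofReal (φb x) ≤ G.indicator (fun _ => (1:ℝ≥0∞)) x := by
        intro x
        by_cases hx : x ∈ G
        · rw [Set.indicator_of_mem hx]
          exact ENNReal.ofReal_le_one.mpr (by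
            simpa [hφb] using (hφmem x).2)
        · have h0 : φb x = 0 := by
            simp only [hφb, BoundedContinuousFunction.mkOfCompact_apply]
            exact hφ0 hx
          simp [h0]
      refine le_trans (lintegral_mono this) ?_
      exact le_of_eq (lintegral_indicator_one hG.measurableSet)
    exact step1.trans (le_of_eq_of_le step2 (liminf_le_liminf (Eventually.of_forall step3)))
  -- conclude via portmanteau
  haveI hPm : IsProbabilityMeasure κ.measure := ⟨hm_univ⟩
  set mP : ProbabilityMeasure Z := ⟨κ.measure, hPm⟩ with hmP
  set νP : ℕ → ProbabilityMeasure Z := fun k => ⟨ν k, hν k⟩ with hνP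
  have h_opens' : ∀ G, IsOpen G → mP G ≤ atTop.liminf (fun i => νP i G) := by
    intro G hG
    have aux : ENNReal.ofNNReal (liminf (fun i => νP i G) atTop) =
        liminf (ENNReal.ofNNReal ∘ fun i => νP i G) atTop := by
      refine Monotone.map_liminf_of_continuousAt (F := atTop) ENNReal.coe_mono (νP · G) ?_ ?_ ?_
      · exact ENNReal.continuous_coe.continuousAt
      · exact IsBoundedUnder.isCoboundedUnder_ge ⟨1, by simp⟩
      · exact ⟨0, by simp⟩
    rw [← ENNReal.coe_le_coe, aux]
    have e1 : (mP G : ℝ≥0∞) = κ.measure G := ProbabilityMeasure.ennreal_coeFn_eq_coeFn_toMeasure mP G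
    have e2 : (ENNReal.ofNNReal ∘ fun i => νP i G) = fun i => ν i G := by
      funext i
      exact ProbabilityMeasure.ennreal_coeFn_eq_coeFn_toMeasure (νP i) G
    rw [e1, e2]
    exact h_opens G hG
  have htend : atTop.Tendsto (fun i => νP i) (𝓝 mP) :=
    MeasureTheory.tendsto_of_forall_isOpen_le_liminf h_opens'
  refine ⟨κ.measure, hPm, fun g => ?_⟩
  exact ProbabilityMeasure.tendsto_iff_forall_integral_tendsto.mp htend g


lemma RMT.integral_mkOfCompact (ρ : Measure Z) (f : C(Z, ℝ)) :
    ∫ x, f x ∂ρ = ∫ x, (BoundedContinuousFunction.mkOfCompact f) x ∂ρ := rfl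

lemma RMT.mkOfCompact_toContinuousMap (g : Z →ᵇ ℝ) :
    BoundedContinuousFunction.mkOfCompact (g.toContinuousMap) = g := by
  ext x; rfl

/-- From convergence of integrals on a dense set of continuous functions: a uniform mass bound
and convergence of integrals of all bounded continuous functions. -/
lemma RMT.dense_limits (ρ : ℕ → Measure Z) (hfin : ∀ k, IsFiniteMeasure (ρ k))
    {D : Set C(Z, ℝ)} (hD : Dense D)
    (h : ∀ f ∈ D, ∃ l : ℝ, Tendsto (fun k => ∫ x, f x ∂(ρ k)) atTop (𝓝 l)) :
    ∃ M : ℝ, 0 ≤ M ∧ (∀ k, ((ρ k) Set.univ).toReal ≤ M) ∧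
      ∀ g : Z →ᵇ ℝ, ∃ l : ℝ, Tendsto (fun k => ∫ x, g x ∂(ρ k)) atTop (𝓝 l) := by
  haveI := hfin
  -- mass bound
  obtain ⟨ψ, hψD, hψ⟩ := hD.exists_dist_lt (1 : C(Z, ℝ)) (by norm_num : (0:ℝ) < 1/2)
  obtain ⟨l₀, hl₀⟩ := h ψ hψD
  obtain ⟨B, hB⟩ : ∃ B : ℝ, ∀ k, |∫ x, ψ x ∂(ρ k)| ≤ B := by
    have habs : Tendsto (fun k => |∫ x, ψ x ∂(ρ k)|) atTop (𝓝 |l₀|) := hl₀.abs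
    obtain ⟨B, hB⟩ := habs.bddAbove_range
    exact ⟨B, fun k => hB (mem_range_self k)⟩
  have hBnn : 0 ≤ B := le_trans (abs_nonneg _) (hB 0)
  set m : ℕ → ℝ := fun k => ((ρ k) Set.univ).toReal with hm
  have hmnn : ∀ k, 0 ≤ m k := fun k => ENNReal.toReal_nonneg
  have hmass : ∀ k, m k ≤ 2 * B := by
    intro k
    have e1 : ∫ x, (1 : Z →ᵇ ℝ) x ∂(ρ k) = m k := by
      simp [hm, measureReal_def]
    have e2 : dist (1 : Z →ᵇ ℝ) (BoundedContinuousFunction.mkOfCompact ψ) < 1/2 := by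
      have : (1 : Z →ᵇ ℝ) = BoundedContinuousFunction.mkOfCompact (1 : C(Z, ℝ)) := by
        ext x; rfl
      rw [this, BoundedContinuousFunction.dist_mkOfCompact]
      exact hψ
    have e3 := RMT.dist_integral_le (ρ k) (1 : Z →ᵇ ℝ) (BoundedContinuousFunction.mkOfCompact ψ)
    rw [e1, ← RMT.integral_mkOfCompact] at e3
    have e4 : dist (m k) (∫ x, ψ x ∂(ρ k)) ≤ (1/2) * m k :=
      le_trans e3 (mul_le_mul_of_nonneg_right e2.le (hmnn k))
    have e5 : m k - |∫ x, ψ x ∂(ρ k)| ≤ (1/2) * m k := by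
      have := abs_sub_abs_le_abs_sub (m k) (∫ x, ψ x ∂(ρ k))
      rw [abs_of_nonneg (hmnn k)] at this
      calc m k - |∫ x, ψ x ∂(ρ k)| ≤ |m k - ∫ x, ψ x ∂(ρ k)| := this
        _ = dist (m k) (∫ x, ψ x ∂(ρ k)) := (Real.dist_eq _ _).symm
        _ ≤ (1/2) * m k := e4
    have := hB k
    linarith
  refine ⟨max (2*B) 0, le_max_right _ _, fun k => le_trans (hmass k) (le_max_left _ _), ?_⟩
  set M := max (2*B) 0 with hM
  have hmassM : ∀ k, m k ≤ M := fun k => le_trans (hmass k) (le_max_left _ _)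
  have hMnn : 0 ≤ M := le_max_right _ _
  -- Cauchy for all bounded continuous functions
  intro g
  have hcauchy : CauchySeq (fun k => ∫ x, g x ∂(ρ k)) := by
    rw [Metric.cauchySeq_iff']
    intro ε hε
    have hδ : (0:ℝ) < ε / (4 * (M + 1)) := by positivity
    obtain ⟨f, hfD, hf⟩ := hD.exists_dist_lt g.toContinuousMap hδ
    obtain ⟨l, hl⟩ := h f hfD
    obtain ⟨N, hN⟩ := Metric.cauchySeq_iff'.mp hl.cauchySeq (ε/2) (by linarith)
    refine ⟨N, fun n hn => ?_⟩
    have hdg : dist g (BoundedContinuousFunction.mkOfCompact f) < ε / (4 * (M + 1)) := by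
      rw [← RMT.mkOfCompact_toContinuousMap g, BoundedContinuousFunction.dist_mkOfCompact]
      exact hf
    have key : ∀ k, dist (∫ x, g x ∂(ρ k)) (∫ x, f x ∂(ρ k)) ≤ ε / 4 := by
      intro k
      rw [RMT.integral_mkOfCompact]
      refine le_trans (RMT.dist_integral_le (ρ k) _ _) ?_
      have h1 : dist g (BoundedContinuousFunction.mkOfCompact f) * m k ≤
          (ε / (4 * (M + 1))) * (M + 1) := by
        refine mul_le_mul hdg.le (le_trans (hmassM k) (by linarith)) (hmnn k) hδ.le
      calc dist g (BoundedContinuousFunction.mkOfCompact f) * ((ρ k) Set.univ).toReal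
          = dist g (BoundedContinuousFunction.mkOfCompact f) * m k := rfl
        _ ≤ (ε / (4 * (M + 1))) * (M + 1) := h1
        _ = ε / 4 := by field_simp
    calc dist (∫ x, g x ∂(ρ n)) (∫ x, g x ∂(ρ N))
        ≤ dist (∫ x, g x ∂(ρ n)) (∫ x, f x ∂(ρ n)) + dist (∫ x, f x ∂(ρ n)) (∫ x, f x ∂(ρ N))
          + dist (∫ x, f x ∂(ρ N)) (∫ x, g x ∂(ρ N)) := dist_triangle4 _ _ _ _
      _ < ε/4 + ε/2 + ε/4 := by
          have := hN n hn
          have k1 := key n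
          have k2 := key N
          rw [dist_comm (∫ x, f x ∂(ρ N))] at *
          linarith [key n, key N, hN n hn]
      _ = ε := by ring
  exact cauchySeq_tendsto_of_complete hcauchy


/-- From convergence of integrals of all bounded continuous functions for finite measures on a
nonempty compact metric space: construct the weak limit measure. -/
lemma RMT.finite_limit [Nonempty Z] (ρ : ℕ → Measure Z) (hfin : ∀ k, IsFiniteMeasure (ρ k))
    (h : ∀ g : Z →ᵇ ℝ, ∃ l : ℝ, Tendsto (fun k => ∫ x, g x ∂(ρ k)) atTop (𝓝 l)) :
    ∃ m : Measure Z, IsFiniteMeasure m ∧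
      ∀ g : Z →ᵇ ℝ, Tendsto (fun k => ∫ x, g x ∂(ρ k)) atTop (𝓝 (∫ x, g x ∂m)) := by
  classical
  haveI := hfin
  obtain ⟨mℝ, hmR⟩ := h 1
  have hint1 : ∀ k, ∫ x, (1 : Z →ᵇ ℝ) x ∂(ρ k) = ((ρ k) Set.univ).toReal := by
    intro k; simp [measureReal_def]
  have hmRnn : 0 ≤ mℝ := by
    refine ge_of_tendsto' hmR fun k => ?_
    rw [hint1 k]; exact ENNReal.toReal_nonneg
  rcases eq_or_lt_of_le hmRnn with hm0 | hmpos
  · -- zero limit mass: the zero measure works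
    refine ⟨0, inferInstance, fun g => ?_⟩
    simp only [integral_zero_measure]
    have hb : ∀ k, ‖∫ x, g x ∂(ρ k)‖ ≤ ‖g‖ * ((ρ k) Set.univ).toReal :=
      fun k => norm_integral_le_of_norm_le_const (Eventually.of_forall fun x => g.norm_coe_le_norm x)
    refine squeeze_zero_norm hb ?_
    have : Tendsto (fun k => ‖g‖ * ((ρ k) Set.univ).toReal) atTop (𝓝 (‖g‖ * mℝ)) := by
      refine Tendsto.const_mul _ ?_
      have := hmR
      simp only [hint1] at this
      exact this
    rw [← hm0] at this
    simpa using this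
  · -- positive limit mass: normalize
    have hev : ∀ᶠ k in atTop, (ρ k) Set.univ ≠ 0 := by
      have htoReal : Tendsto (fun k => ((ρ k) Set.univ).toReal) atTop (𝓝 mℝ) := by
        have := hmR; simpa only [hint1] using this
      have := htoReal.eventually (eventually_gt_nhds (show mℝ/2 < mℝ by linarith))
      filter_upwards [this] with k hk h0
      rw [h0] at hk
      simp only [ENNReal.toReal_zero] at hk
      linarith
    set ν : ℕ → Measure Z := fun k =>
      if hk : (ρ k) Set.univ = 0 then Measure.dirac (Classical.arbitrary Z)
      else ((ρ k) Set.univ)⁻¹ • ρ k with hν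
    haveI hνP : ∀ k, IsProbabilityMeasure (ν k) := by
      intro k
      rw [hν]
      dsimp only
      split_ifs with hk
      · infer_instance
      · refine ⟨?_⟩
        rw [Measure.smul_apply, smul_eq_mul]
        exact ENNReal.inv_mul_cancel hk (measure_ne_top _ _)
    have hνint : ∀ k, (ρ k) Set.univ ≠ 0 → ∀ g : Z →ᵇ ℝ,
        ∫ x, g x ∂(ν k) = (((ρ k) Set.univ).toReal)⁻¹ * ∫ x, g x ∂(ρ k) := by
      intro k hk g
      rw [hν]
      dsimp only
      rw [dif_neg hk, integral_smul_measure, smul_eq_mul, ENNReal.toReal_inv]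
    have hmass : Tendsto (fun k => ((ρ k) Set.univ).toReal) atTop (𝓝 mℝ) := by
      have := hmR; simpa only [hint1] using this
    have hνconv : ∀ g : Z →ᵇ ℝ, ∃ l : ℝ, Tendsto (fun k => ∫ x, g x ∂(ν k)) atTop (𝓝 l) := by
      intro g
      obtain ⟨l, hl⟩ := h g
      refine ⟨mℝ⁻¹ * l, ?_⟩
      have htend : Tendsto (fun k => (((ρ k) Set.univ).toReal)⁻¹ * ∫ x, g x ∂(ρ k)) atTop
          (𝓝 (mℝ⁻¹ * l)) := (hmass.inv₀ (ne_of_gt hmpos)).mul hl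
      refine htend.congr' ?_
      filter_upwards [hev] with k hk
      exact (hνint k hk g).symm
    obtain ⟨νi, hνiP, hνi⟩ := RMT.prob_limit ν hνconv
    refine ⟨ENNReal.ofReal mℝ • νi, ?_, ?_⟩
    · refine ⟨?_⟩
      rw [Measure.smul_apply, smul_eq_mul]
      exact ENNReal.mul_lt_top ENNReal.ofReal_lt_top (measure_lt_top _ _)
    · intro g
      have hi : ∫ x, g x ∂(ENNReal.ofReal mℝ • νi) = mℝ * ∫ x, g x ∂νi := by
        rw [integral_smul_measure, smul_eq_mul, ENNReal.toReal_ofReal hmRnn]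
      rw [hi]
      have htend : Tendsto (fun k => ((ρ k) Set.univ).toReal * ∫ x, g x ∂(ν k)) atTop
          (𝓝 (mℝ * ∫ x, g x ∂νi)) := hmass.mul (hνi g)
      refine Tendsto.congr' ?_ htend
      filter_upwards [hev] with k hk
      rw [hνint k hk g, ← mul_assoc,
        mul_inv_cancel₀ (ENNReal.toReal_ne_zero.mpr ⟨hk, measure_ne_top _ _⟩), one_mul]


lemma RMT.measurable_integral {Ω : Type*} [MeasurableSpace Ω] (μs : Ω → Measure Z)
    (hm : ∀ E : Set Z, MeasurableSet E → Measurable fun ω => μs ω E)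
    (hfin : ∀ ω, IsFiniteMeasure (μs ω)) (g : Z →ᵇ ℝ) :
    Measurable fun ω => ∫ x, g x ∂(μs ω) := by
  have hμ : Measurable μs := Measure.measurable_of_measurable_coe μs hm
  have h1 : Measurable fun ω => ∫⁻ x, ENNReal.ofReal (g x) ∂(μs ω) :=
    (Measure.measurable_lintegral (ENNReal.measurable_ofReal.comp g.continuous.measurable)).comp hμ
  have h2 : Measurable fun ω => ∫⁻ x, ENNReal.ofReal (-(g x)) ∂(μs ω) :=
    (Measure.measurable_lintegral
      (ENNReal.measurable_ofReal.comp (g.continuous.measurable.neg))).comp hμ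
  have e : (fun ω => ∫ x, g x ∂(μs ω)) = fun ω =>
      (∫⁻ x, ENNReal.ofReal (g x) ∂(μs ω)).toReal - (∫⁻ x, ENNReal.ofReal (-(g x)) ∂(μs ω)).toReal := by
    funext ω
    haveI := hfin ω
    exact integral_eq_lintegral_pos_part_sub_lintegral_neg_part (g.integrable _)
  rw [e]
  exact (ENNReal.measurable_toReal.comp h1).sub (ENNReal.measurable_toReal.comp h2)

/-- Simultaneous a.e. subsequence extraction for countably many convergences in measure. -/
lemma RMT.exists_subseq_ae_forall {Ω : Type*} [MeasurableSpace Ω] (P : Measure Ω)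
    [IsProbabilityMeasure P] (u : ℕ → ℕ → Ω → ℝ) (s : ℕ → Ω → ℝ)
    (h : ∀ n, TendstoInMeasure P (u n) atTop (s n)) :
    ∃ ns : ℕ → ℕ, StrictMono ns ∧
      ∀ᵐ ω ∂P, ∀ n, Tendsto (fun k => u n (ns k) ω) atTop (𝓝 (s n ω)) := by
  classical
  set v : ℕ → ℕ → Ω → ℝ := fun n k ω => min 1 (dist (u n k ω) (s n ω)) with hv
  have hv0 : ∀ n k ω, 0 ≤ v n k ω := fun n k ω =>
    le_min zero_le_one dist_nonneg
  have hv1 : ∀ n k ω, v n k ω ≤ 1 := fun n k ω => min_le_left _ _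
  have hvd : ∀ n k ω, v n k ω ≤ dist (u n k ω) (s n ω) := fun n k ω => min_le_right _ _
  have hsummable : ∀ k ω, Summable fun n => ((1:ℝ)/2)^n * v n k ω := by
    intro k ω
    refine Summable.of_nonneg_of_le (fun n => mul_nonneg (by positivity) (hv0 n k ω))
      (fun n => ?_) summable_geometric_two
    exact mul_le_of_le_one_right (by positivity) (hv1 n k ω)
  set Φ : ℕ → Ω → ℝ := fun k ω => ∑' n, ((1:ℝ)/2)^n * v n k ω with hΦ
  have hΦ0 : ∀ k ω, 0 ≤ Φ k ω := fun k ω =>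
    tsum_nonneg fun n => mul_nonneg (by positivity) (hv0 n k ω)
  -- tendsto in measure of the combined quantity
  have hT : TendstoInMeasure P Φ atTop (fun _ => (0:ℝ)) := by
    rw [tendstoInMeasure_iff_dist]
    intro ε hε
    obtain ⟨N, hN⟩ := _root_.exists_pow_lt_of_lt_one (show (0:ℝ) < ε/4 by linarith)
      (show (1:ℝ)/2 < 1 by norm_num)
    set δ : ℝ := ε / (2 * (N + 1)) with hδdef
    have hδ : 0 < δ := by positivity
    have hsubset : ∀ k, {ω | ε ≤ dist (Φ k ω) 0} ⊆
        ⋃ n ∈ Finset.range N, {ω | δ ≤ dist (u n k ω) (s n ω)} := by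
      intro k ω hω
      simp only [Set.mem_setOf_eq, Real.dist_eq, sub_zero, abs_of_nonneg (hΦ0 k ω)] at hω
      by_contra hcon
      simp only [Set.mem_iUnion, not_exists, Set.mem_setOf_eq, not_le] at hcon
      -- all small: head والtail bound
      have hhead : ∑ n ∈ Finset.range N, ((1:ℝ)/2)^n * v n k ω ≤ N * δ := by
        have : ∀ n ∈ Finset.range N, ((1:ℝ)/2)^n * v n k ω ≤ δ := by
          intro n hn
          have hvlt : v n k ω < δ := lt_of_le_of_lt (hvd n k ω) (hcon n hn)
          refine le_trans (mul_le_of_le_one_left (hv0 n k ω) (by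
            have : ((1:ℝ)/2)^n ≤ 1 := pow_le_one₀ (by norm_num) (by norm_num)
            exact this)) hvlt.le
        calc ∑ n ∈ Finset.range N, ((1:ℝ)/2)^n * v n k ω
            ≤ ∑ _n ∈ Finset.range N, δ := Finset.sum_le_sum this
          _ = N * δ := by simp [mul_comm]
      have htail : (∑' n, ((1:ℝ)/2)^(n + N) * v (n + N) k ω) ≤ ((1:ℝ)/2)^N * 2 := by
        have hsum' : Summable fun n => ((1:ℝ)/2)^(n + N) * v (n + N) k ω :=
          ((_root_.summable_nat_add_iff N).mpr (hsummable k ω))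
        have hb : ∀ n, ((1:ℝ)/2)^(n + N) * v (n + N) k ω ≤ ((1:ℝ)/2)^N * ((1:ℝ)/2)^n := by
          intro n
          rw [pow_add]
          calc ((1:ℝ)/2)^n * ((1:ℝ)/2)^N * v (n + N) k ω
              ≤ ((1:ℝ)/2)^n * ((1:ℝ)/2)^N * 1 := by
                refine mul_le_mul_of_nonneg_left (hv1 _ _ _) (by positivity)
            _ = ((1:ℝ)/2)^N * ((1:ℝ)/2)^n := by ring
        calc (∑' n, ((1:ℝ)/2)^(n + N) * v (n + N) k ω)
            ≤ ∑' n, ((1:ℝ)/2)^N * ((1:ℝ)/2)^n :=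
              Summable.tsum_le_tsum hb hsum' (summable_geometric_two.mul_left _)
          _ = ((1:ℝ)/2)^N * 2 := by
              have e := tsum_mul_left (L := SummationFilter.unconditional ℕ) (a := ((1:ℝ)/2)^N) (f := fun n : ℕ => ((1:ℝ)/2)^n)
              rw [e, tsum_geometric_two]
      have hsplit : Φ k ω = (∑ n ∈ Finset.range N, ((1:ℝ)/2)^n * v n k ω)
          + ∑' n, ((1:ℝ)/2)^(n + N) * v (n + N) k ω :=
        (Summable.sum_add_tsum_nat_add N (hsummable k ω)).symm
      have : Φ k ω < ε := by
        rw [hsplit]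
        have hδε : δ * (2 * ((N:ℝ) + 1)) = ε := by
          rw [hδdef]; field_simp
        have hNδ : (N:ℝ) * δ ≤ ε/2 := by
          nlinarith [hδ, hδε, (Nat.cast_nonneg N : (0:ℝ) ≤ (N:ℝ))]
        have h2N : ((1:ℝ)/2)^N * 2 < ε/2 := by nlinarith [hN]
        linarith
      linarith
    have hbound : ∀ k, P {ω | ε ≤ dist (Φ k ω) 0} ≤
        ∑ n ∈ Finset.range N, P {ω | δ ≤ dist (u n k ω) (s n ω)} :=
      fun k => le_trans (measure_mono (hsubset k)) (measure_biUnion_finset_le _ _)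
    have hsum0 : Tendsto (fun k => ∑ n ∈ Finset.range N, P {ω | δ ≤ dist (u n k ω) (s n ω)})
        atTop (𝓝 0) := by
      have := tendsto_finset_sum (Finset.range N) (fun n _ => tendstoInMeasure_iff_dist.mp (h n) δ hδ)
      simpa using this
    exact tendsto_of_tendsto_of_tendsto_of_le_of_le tendsto_const_nhds hsum0
      (fun k => zero_le) hbound
  obtain ⟨ns, hns, hae⟩ := hT.exists_seq_tendsto_ae
  refine ⟨ns, hns, ?_⟩
  filter_upwards [hae] with ω hω n
  have hΦtend : Tendsto (fun k => Φ (ns k) ω) atTop (𝓝 0) := hω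
  have hvle : ∀ k, v n (ns k) ω ≤ (2:ℝ)^n * Φ (ns k) ω := by
    intro k
    have hle : ((1:ℝ)/2)^n * v n (ns k) ω ≤ Φ (ns k) ω :=
      (hsummable (ns k) ω).le_tsum n fun m _ => mul_nonneg (by positivity) (hv0 m _ _)
    have h2 : (2:ℝ)^n * ((1:ℝ)/2)^n = 1 := by
      rw [← mul_pow]; norm_num
    calc v n (ns k) ω = ((2:ℝ)^n * ((1:ℝ)/2)^n) * v n (ns k) ω := by rw [h2, one_mul]
      _ = (2:ℝ)^n * (((1:ℝ)/2)^n * v n (ns k) ω) := by ring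
      _ ≤ (2:ℝ)^n * Φ (ns k) ω := mul_le_mul_of_nonneg_left hle (by positivity)
  have hvtend : Tendsto (fun k => v n (ns k) ω) atTop (𝓝 0) := by
    refine squeeze_zero (fun k => hv0 n _ _) hvle ?_
    have := hΦtend.const_mul ((2:ℝ)^n)
    simpa using this
  have hdist : Tendsto (fun k => dist (u n (ns k) ω) (s n ω)) atTop (𝓝 0) := by
    refine hvtend.congr' ?_
    have hev : ∀ᶠ k in atTop, v n (ns k) ω < 1 :=
      hvtend.eventually (eventually_lt_nhds zero_lt_one)
    filter_upwards [hev] with k hk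
    have hd1 : dist (u n (ns k) ω) (s n ω) < 1 := by
      by_contra hge
      push_neg at hge
      have : v n (ns k) ω = 1 := min_eq_left (by linarith)
      rw [this] at hk
      exact lt_irrefl _ hk
    exact min_eq_right hd1.le
  exact tendsto_iff_dist_tendsto_zero.mpr hdist


end rmtaux

/-- A sequence of random Borel measures `μs` *weakly converges to `μ` subsequentially in
probability*: every subsequence has a further subsequence along which, on a single event
of full probability, the measures converge weakly (integrals of every bounded continuous
function converge). -/
def WeakSubseqInProb {X : Type*} [TopologicalSpace X] [MeasurableSpace X]
    {Ω : Type*} [MeasurableSpace Ω] (P : Measure Ω)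
    (μs : ℕ → Ω → Measure X) (μ : Ω → Measure X) : Prop :=
  ∀ α : ℕ → ℕ, StrictMono α →
    ∃ β : ℕ → ℕ, StrictMono β ∧ Set.range β ⊆ Set.range α ∧
      ∃ H : Set Ω, MeasurableSet H ∧ P H = 1 ∧
        ∀ ω ∈ H, ∀ f : BoundedContinuousFunction X ℝ,
          Tendsto (fun k => ∫ x, f x ∂(μs (β k) ω)) atTop (𝓝 (∫ x, f x ∂(μ ω)))

/-- **Representation theorem for random measures on a compact set.**  Let `K ⊆ X` be
compact, `Ψ` a countable sup-norm dense family of continuous functions on `K`, and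
`(μ_k)` random finite Borel measures on `K` such that for each `f ∈ Ψ` the integrals
`∫ f dμ_k` converge in probability to an (a.s. finite, here real-valued) random variable
`S f`.  Then `μ_k` weakly converges subsequentially in probability to some random finite
Borel measure `μ`. -/
theorem random_measures_weak_subseq_limit_of_dense_convergence
    {X : Type*} [MetricSpace X] [CompleteSpace X] [TopologicalSpace.SeparableSpace X]
    [MeasurableSpace X] [BorelSpace X]
    (K : Set X) (hK : IsCompact K)
    {Ω : Type*} [MeasurableSpace Ω] (P : Measure Ω) [IsProbabilityMeasure P]
    (Ψ : Set C(↥K, ℝ)) (hΨcount : Ψ.Countable) (hΨdense : Dense Ψ)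
    (μs : ℕ → Ω → Measure ↥K)
    (hfin : ∀ k ω, IsFiniteMeasure (μs k ω))
    (hmeas : ∀ (k : ℕ) (E : Set ↥K), MeasurableSet E → Measurable fun ω => μs k ω E)
    (S : C(↥K, ℝ) → Ω → ℝ)
    (hSmeas : ∀ f ∈ Ψ, Measurable (S f))
    (hconv : ∀ f ∈ Ψ,
      TendstoInMeasure P (fun k ω => ∫ x, f x ∂(μs k ω)) atTop (S f)) :
    ∃ μ : Ω → Measure ↥K,
      (∀ ω, IsFiniteMeasure (μ ω)) ∧
      (∀ E : Set ↥K, MeasurableSet E → Measurable fun ω => μ ω E) ∧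
      WeakSubseqInProb P μs μ := by
  classical
  haveI hKcomp : CompactSpace ↥K := isCompact_iff_compactSpace.mp hK
  rcases isEmpty_or_nonempty ↥K with hempty | hne
  · -- trivial case: K is empty
    refine ⟨fun _ => 0, fun _ => inferInstance, fun E _ => measurable_const, ?_⟩
    intro α hα
    refine ⟨α, hα, subset_rfl, Set.univ, MeasurableSet.univ, measure_univ, ?_⟩
    intro ω _ f
    have hz : ∀ k, μs (α k) ω = 0 := fun k => Measure.eq_zero_of_isEmpty _
    simp only [hz, integral_zero_measure]
    exact tendsto_const_nhds
  · -- main case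
    have hΨne : Ψ.Nonempty := hΨdense.nonempty
    obtain ⟨ψ, hψrange⟩ := hΨcount.exists_eq_range hΨne
    have hdense : Dense (Set.range ψ) := hψrange ▸ hΨdense
    have hconvn : ∀ n : ℕ,
        TendstoInMeasure P (fun k ω => ∫ x, (ψ n) x ∂(μs k ω)) atTop (S (ψ n)) := by
      intro n
      exact hconv (ψ n) (hψrange ▸ mem_range_self n)
    -- the extraction step, for an arbitrary subsequence α
    have ext : ∀ α : ℕ → ℕ, StrictMono α → ∃ β : ℕ → ℕ, StrictMono β ∧
        Set.range β ⊆ Set.range α ∧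
        ∃ H : Set Ω, MeasurableSet H ∧ P H = 1 ∧ ∀ ω ∈ H, ∀ n,
          Tendsto (fun k => ∫ x, (ψ n) x ∂(μs (β k) ω)) atTop (𝓝 (S (ψ n) ω)) := by
      intro α hα
      have hconvα : ∀ n, TendstoInMeasure P
          (fun k ω => ∫ x, (ψ n) x ∂(μs (α k) ω)) atTop (S (ψ n)) := by
        intro n ε hε
        exact (hconvn n ε hε).comp (hα.tendsto_atTop)
      obtain ⟨ns, hns, hae⟩ := RMT.exists_subseq_ae_forall P
        (fun n k ω => ∫ x, (ψ n) x ∂(μs (α k) ω)) (fun n => S (ψ n)) hconvα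
      refine ⟨α ∘ ns, hα.comp hns, ?_, ?_⟩
      · rintro _ ⟨k, rfl⟩; exact ⟨ns k, rfl⟩
      · set T := {ω | ¬ ∀ n, Tendsto (fun k => ∫ x, (ψ n) x ∂(μs (α (ns k)) ω)) atTop
          (𝓝 (S (ψ n) ω))} with hT
        have hT0 : P T = 0 := by
          rw [hT]
          exact hae
        refine ⟨(toMeasurable P T)ᶜ, (measurableSet_toMeasurable P T).compl, ?_, ?_⟩
        · rw [prob_compl_eq_one_iff (measurableSet_toMeasurable P T)]
          rw [measure_toMeasurable]
          exact hT0
        · intro ω hω n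
          have hωT : ω ∉ T := fun hT' => hω (subset_toMeasurable P T hT')
          simp only [hT, Set.mem_setOf_eq, not_not] at hωT
          exact hωT n
    obtain ⟨β₀, hβ₀, _, H₀, hH₀m, hH₀1, hH₀conv⟩ := ext id strictMono_id
    -- mass bounds and all-function limits on H₀
    have key₀ : ∀ ω, ω ∈ H₀ → ∃ M : ℝ, 0 ≤ M ∧
        (∀ k, ((μs (β₀ k) ω) Set.univ).toReal ≤ M) ∧
        ∀ g : ↥K →ᵇ ℝ, ∃ l, Tendsto (fun k => ∫ x, g x ∂(μs (β₀ k) ω)) atTop (𝓝 l) := by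
      intro ω hω
      refine RMT.dense_limits (fun k => μs (β₀ k) ω) (fun k => hfin _ ω) hdense ?_
      rintro f ⟨n, rfl⟩
      exact ⟨S (ψ n) ω, hH₀conv ω hω n⟩
    -- the random limit measure
    have hchoice : ∀ ω, ∃ m : Measure ↥K, IsFiniteMeasure m ∧ (ω ∉ H₀ → m = 0) ∧
        (ω ∈ H₀ → ∀ g : ↥K →ᵇ ℝ,
          Tendsto (fun k => ∫ x, g x ∂(μs (β₀ k) ω)) atTop (𝓝 (∫ x, g x ∂m))) := by
      intro ω
      by_cases hω : ω ∈ H₀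
      · obtain ⟨M, _, _, hg⟩ := key₀ ω hω
        obtain ⟨m, hmfin, hmconv⟩ := RMT.finite_limit (fun k => μs (β₀ k) ω)
          (fun k => hfin _ ω) hg
        exact ⟨m, hmfin, fun h => absurd hω h, fun _ => hmconv⟩
      · exact ⟨0, inferInstance, fun _ => rfl, fun h => absurd h hω⟩
    choose μf hμfin hμzero hμconv using hchoice
    refine ⟨μf, hμfin, ?_, ?_⟩
    · -- measurability of ω ↦ μf ω E
      have hint_meas : ∀ g : ↥K →ᵇ ℝ, Measurable fun ω => ∫ x, g x ∂(μf ω) := by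
        intro g
        refine measurable_of_tendsto_metrizable
          (f := fun k ω => H₀.indicator (fun ω' => ∫ x, g x ∂(μs (β₀ k) ω')) ω)
          (fun k => ((RMT.measurable_integral (μs (β₀ k)) (hmeas (β₀ k))
            (fun ω => hfin _ ω) g).indicator hH₀m)) ?_
        rw [tendsto_pi_nhds]
        intro ω
        by_cases hω : ω ∈ H₀
        · simp only [Set.indicator_of_mem hω]
          exact hμconv ω hω g
        · simp only [Set.indicator_of_notMem hω]
          rw [hμzero ω hω]
          simp only [integral_zero_measure]
          exact tendsto_const_nhds
      have hclosed : ∀ F : Set ↥K, IsClosed F → Measurable fun ω => μf ω F := by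
        intro F hF
        rcases F.eq_empty_or_nonempty with rfl | hFne
        · simp only [measure_empty]
          exact measurable_const
        · set gc : ℕ → C(↥K, ℝ) := fun n =>
            ⟨fun x => max 0 (1 - n * Metric.infDist x F),
              continuous_const.max (continuous_const.sub
                (continuous_const.mul (Metric.continuous_infDist_pt F)))⟩ with hgc
          set gb : ℕ → (↥K →ᵇ ℝ) := fun n => BoundedContinuousFunction.mkOfCompact (gc n) with hgb
          have hgb01 : ∀ n x, 0 ≤ gb n x ∧ gb n x ≤ 1 := by
            intro n x
            constructor
            · exact le_max_left _ _
            · simp only [hgb, hgc, BoundedContinuousFunction.mkOfCompact_apply,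
                ContinuousMap.coe_mk]
              refine max_le zero_le_one ?_
              have h1 : (0:ℝ) ≤ (n:ℝ) * Metric.infDist x F :=
                mul_nonneg (Nat.cast_nonneg n) Metric.infDist_nonneg
              linarith
          have hpt : ∀ ω, Tendsto (fun n => ∫ x, gb n x ∂(μf ω)) atTop
              (𝓝 ((μf ω F).toReal)) := by
            intro ω
            haveI := hμfin ω
            have hlim : ∀ x : ↥K, Tendsto (fun n => gb n x) atTop
                (𝓝 (F.indicator (1 : ↥K → ℝ) x)) := by
              intro x
              by_cases hx : x ∈ F
              · have h0 : Metric.infDist x F = 0 := Metric.infDist_zero_of_mem hx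
                have : ∀ n, gb n x = 1 := by
                  intro n
                  simp [hgb, hgc, h0]
                simp only [this, Set.indicator_of_mem hx, Pi.one_apply]
                exact tendsto_const_nhds
              · have hd : 0 < Metric.infDist x F := (hF.notMem_iff_infDist_pos hFne).mp hx
                rw [Set.indicator_of_notMem hx]
                obtain ⟨N, hN⟩ := exists_nat_ge (1 / Metric.infDist x F)
                refine Tendsto.congr' ?_ (tendsto_const_nhds : Tendsto (fun _ : ℕ => (0:ℝ)) atTop (𝓝 0))
                filter_upwards [eventually_ge_atTop N] with n hn
                have hnd : 1 ≤ (n:ℝ) * Metric.infDist x F := by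
                  have : (1:ℝ) / Metric.infDist x F ≤ (n:ℝ) :=
                    le_trans hN (Nat.cast_le.mpr hn)
                  rw [div_le_iff₀ hd] at this
                  linarith [this]
                simp only [hgb, hgc, BoundedContinuousFunction.mkOfCompact_apply,
                  ContinuousMap.coe_mk]
                rw [max_eq_left (by linarith)]
            have hdom := tendsto_integral_of_dominated_convergence (μ := μf ω)
              (F := fun n x => gb n x) (f := fun x => F.indicator (1 : ↥K → ℝ) x)
              (bound := fun _ => (1:ℝ))
              (fun n => ((gb n).continuous.measurable.aestronglyMeasurable))
              (integrable_const 1)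
              (fun n => Eventually.of_forall fun x => by
                rw [Real.norm_eq_abs, abs_of_nonneg (hgb01 n x).1]
                exact (hgb01 n x).2)
              (Eventually.of_forall hlim)
            have hind : ∫ x, F.indicator (1 : ↥K → ℝ) x ∂(μf ω) = (μf ω F).toReal := by
              rw [integral_indicator_one hF.measurableSet, measureReal_def]
            rwa [hind] at hdom
          have hm1 : Measurable fun ω => (μf ω F).toReal := by
            refine measurable_of_tendsto_metrizable
              (f := fun n ω => ∫ x, gb n x ∂(μf ω)) (fun n => hint_meas (gb n)) ?_
            rw [tendsto_pi_nhds]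
            exact hpt
          have : (fun ω => μf ω F) = fun ω => ENNReal.ofReal ((μf ω F).toReal) := by
            funext ω
            haveI := hμfin ω
            rw [ENNReal.ofReal_toReal (measure_ne_top _ _)]
          rw [this]
          exact ENNReal.measurable_ofReal.comp hm1
      -- π-λ argument
      have hgen : (inferInstance : MeasurableSpace ↥K) =
          MeasurableSpace.generateFrom {s : Set ↥K | IsClosed s} := by
        rw [BorelSpace.measurable_eq (α := ↥K), borel_eq_generateFrom_isClosed]
      intro E hE
      refine MeasurableSpace.induction_on_inter (C := fun E _ => Measurable fun ω => μf ω E)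
        hgen isPiSystem_isClosed ?_ ?_ ?_ ?_ E hE
      · simp only [measure_empty]
        exact measurable_const
      · exact fun t ht => hclosed t ht
      · intro t htm hC
        have he : (fun ω => μf ω tᶜ) = fun ω => μf ω Set.univ - μf ω t := by
          funext ω
          haveI := hμfin ω
          rw [measure_compl htm (measure_ne_top _ _)]
        rw [he]
        exact (hclosed Set.univ isClosed_univ).sub hC
      · intro f hdisj hfm hC
        have he : (fun ω => μf ω (⋃ i, f i)) = fun ω => ∑' i, μf ω (f i) :=
          funext fun ω => measure_iUnion hdisj hfm
        rw [he]
        exact Measurable.ennreal_tsum hC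
    · -- weak subsequential convergence in probability
      intro α hα
      obtain ⟨β, hβ, hβr, H₁, hH₁m, hH₁1, hH₁conv⟩ := ext α hα
      refine ⟨β, hβ, hβr, H₀ ∩ H₁, hH₀m.inter hH₁m, ?_, ?_⟩
      · have h0 : P H₀ᶜ = 0 := (prob_compl_eq_zero_iff hH₀m).mpr hH₀1
        have h1 : P H₁ᶜ = 0 := (prob_compl_eq_zero_iff hH₁m).mpr hH₁1
        rw [← prob_compl_eq_zero_iff (hH₀m.inter hH₁m), Set.compl_inter]
        exact le_antisymm (le_trans (measure_union_le _ _) (by rw [h0, h1]; simp))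
          (by positivity)
      · rintro ω ⟨hω₀, hω₁⟩ g
        obtain ⟨M₀, hM₀nn, hM₀b, _⟩ := key₀ ω hω₀
        obtain ⟨M₁, hM₁nn, hM₁b, hall₁⟩ := RMT.dense_limits (fun k => μs (β k) ω)
          (fun k => hfin _ ω) hdense (by
            rintro f ⟨n, rfl⟩
            exact ⟨S (ψ n) ω, hH₁conv ω hω₁ n⟩)
        obtain ⟨l, hl⟩ := hall₁ g
        suffices hls : l = ∫ x, g x ∂(μf ω) by rw [← hls]; exact hl
        set M := max M₀ M₁ with hM
        have hMnn : 0 ≤ M := le_trans hM₀nn (le_max_left _ _)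
        refine eq_of_forall_dist_le ?_
        intro ε hε
        set δ := ε / (2 * (M + 1)) with hδ
        have hδpos : 0 < δ := by positivity
        obtain ⟨f, hfD, hfd⟩ := hdense.exists_dist_lt g.toContinuousMap hδpos
        obtain ⟨n, rfl⟩ := hfD
        have hgd : dist g (BoundedContinuousFunction.mkOfCompact (ψ n)) < δ := by
          rw [← RMT.mkOfCompact_toContinuousMap g, BoundedContinuousFunction.dist_mkOfCompact]
          exact hfd
        -- distance along β
        have est : ∀ (γ : ℕ → ℕ) (Mb : ℝ), (∀ k, ((μs (γ k) ω) Set.univ).toReal ≤ Mb) →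
            Mb ≤ M → ∀ k, dist (∫ x, g x ∂(μs (γ k) ω)) (∫ x, (ψ n) x ∂(μs (γ k) ω)) ≤ δ * M := by
          intro γ Mb hMb hMbM k
          haveI := hfin (γ k) ω
          rw [RMT.integral_mkOfCompact]
          refine le_trans (RMT.dist_integral_le (μs (γ k) ω) _ _) ?_
          refine mul_le_mul hgd.le (le_trans (hMb k) hMbM) ENNReal.toReal_nonneg hδpos.le
        have est1 : dist l (S (ψ n) ω) ≤ δ * M := by
          have hd := hl.dist (hH₁conv ω hω₁ n)
          refine le_of_tendsto hd (Eventually.of_forall fun k =>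
            est β M₁ hM₁b (le_max_right _ _) k)
        have est2 : dist (∫ x, g x ∂(μf ω)) (S (ψ n) ω) ≤ δ * M := by
          have hd := (hμconv ω hω₀ g).dist (hH₀conv ω hω₀ n)
          refine le_of_tendsto hd (Eventually.of_forall fun k =>
            est β₀ M₀ hM₀b (le_max_left _ _) k)
        calc dist l (∫ x, g x ∂(μf ω))
            ≤ dist l (S (ψ n) ω) + dist (S (ψ n) ω) (∫ x, g x ∂(μf ω)) := dist_triangle _ _ _
          _ ≤ δ * M + δ * M := by
              rw [dist_comm (S (ψ n) ω)]
              exact add_le_add est1 est2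
          _ ≤ ε := by
              have hδε : δ * (2*(M+1)) = ε := by rw [hδ]; field_simp
              nlinarith [hδpos.le, hMnn]
end

section
/- Let X be a complete separable metric space and, for every i ∈ ℕ, let μ^i and (μ_k^i)_{k∈ℕ} be random finite Borel measures on X on a probability space (Ω, 𝒜, P) such that μ_k^i weakly converges to μ^i subsequentially in probability as k → ∞, for every i. Assume that for every ε > 0 there exist N, n₀ ∈ ℕ such that Σ_{i≥N} E(μ_k^i(X)) < ε for every k ≥ n₀. Then there exists n₁ ∈ ℕ such that for every k ≥ n₁ the sum Σ_{i∈ℕ} μ_k^i is almost surely a finite Borel measure (hence a random finite Borel measure), Σ_{i∈ℕ} μ^i is almost surely a finite Borel measure, and the sequence (Σ_{i∈ℕ} μ_k^i)_{k≥n₁} weakly converges to Σ_{i∈ℕ} μ^i subsequentially in probability. -/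
open MeasureTheory Filter Set Topology
open scoped ENNReal NNReal BoundedContinuousFunction

lemma aux_subseq_le {β δ : ℕ → ℕ} (hβ : StrictMono β) (hδ : StrictMono δ)
    (h : Set.range δ ⊆ Set.range β) : ∀ k, β k ≤ δ k := by
  have hc : ∀ k, ∃ m, β m = δ k := fun k => h (Set.mem_range_self k)
  choose σ hσ using hc
  have hσm : StrictMono σ := by
    intro k l hkl
    have : β (σ k) < β (σ l) := by rw [hσ, hσ]; exact hδ hkl
    exact hβ.lt_iff_lt.1 this
  intro k
  calc β k ≤ β (σ k) := hβ.monotone hσm.le_apply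
  _ = δ k := hσ k

lemma aux_tendsto_subsub {T : Type*} [TopologicalSpace T] {g : ℕ → T} {l : T} {β δ : ℕ → ℕ}
    (hβ : StrictMono β) (hδ : StrictMono δ) (hsub : ∀ᶠ k in atTop, δ k ∈ Set.range β)
    (h : Tendsto (fun k => g (β k)) atTop (𝓝 l)) : Tendsto (fun k => g (δ k)) atTop (𝓝 l) := by
  intro s hs
  have h' : ∀ᶠ m in atTop, g (β m) ∈ s := h hs
  obtain ⟨M, hM⟩ := eventually_atTop.1 h'
  obtain ⟨k₀, hk₀⟩ := eventually_atTop.1 hsub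
  have : ∀ᶠ k in atTop, g (δ k) ∈ s := by
    refine eventually_atTop.2 ⟨max k₀ (β M), fun k hk => ?_⟩
    obtain ⟨m, hm⟩ := hk₀ k (le_trans (le_max_left _ _) hk)
    have h1 : β M ≤ β m := by
      rw [hm]
      exact le_trans (le_max_right _ _) (hk.trans hδ.le_apply)
    have hMm : M ≤ m := hβ.le_iff_le.1 h1
    rw [← hm]
    exact hM m hMm
  exact this

lemma aux_exists_chain {A : Type*} (a0 : A) (R : ℕ → A → A → Prop) (h : ∀ i a, ∃ b, R i a b) :
    ∃ g : ℕ → A, g 0 = a0 ∧ ∀ i, R i (g i) (g (i + 1)) := by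
  choose f hf using h
  exact ⟨fun i => Nat.rec a0 (fun i a => f i a) i, rfl, fun i => hf i _⟩

lemma aux_diagonal {X : Type*} [TopologicalSpace X] [MeasurableSpace X]
    {Ω : Type*} [MeasurableSpace Ω] {P : Measure Ω} [IsProbabilityMeasure P]
    {μs : ℕ → ℕ → Ω → Measure X} {μ : ℕ → Ω → Measure X}
    (hconv : ∀ i : ℕ, WeakSubseqInProb P (fun k => μs i k) (μ i))
    {α : ℕ → ℕ} (hα : StrictMono α) :
    ∃ δ : ℕ → ℕ, StrictMono δ ∧ Set.range δ ⊆ Set.range α ∧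
      ∃ H : Set Ω, MeasurableSet H ∧ P H = 1 ∧
        ∀ ω ∈ H, ∀ i : ℕ, ∀ f : BoundedContinuousFunction X ℝ,
          Tendsto (fun k => ∫ x, f x ∂(μs i (δ k) ω)) atTop (𝓝 (∫ x, f x ∂(μ i ω))) := by
  set A := {β : ℕ → ℕ // StrictMono β}
  set R : ℕ → A → A → Prop := fun i a b =>
    Set.range b.1 ⊆ Set.range a.1 ∧ ∃ H : Set Ω, MeasurableSet H ∧ P H = 1 ∧
      ∀ ω ∈ H, ∀ f : BoundedContinuousFunction X ℝ,
        Tendsto (fun k => ∫ x, f x ∂(μs i (b.1 k) ω)) atTop (𝓝 (∫ x, f x ∂(μ i ω))) with hR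
  have hstep : ∀ i (a : A), ∃ b, R i a b := by
    intro i a
    obtain ⟨β, hβm, hβr, H, hHm, hH1, hHc⟩ := hconv i a.1 a.2
    exact ⟨⟨β, hβm⟩, hβr, H, hHm, hH1, hHc⟩
  obtain ⟨g, hg0, hgR⟩ := aux_exists_chain (⟨α, hα⟩ : A) R hstep
  have hchain : ∀ i j, i ≤ j → Set.range (g j).1 ⊆ Set.range (g i).1 := by
    intro i j hij
    induction j with
    | zero => simp_all
    | succ j ih =>
      rcases Nat.lt_or_ge i (j+1) with h | h
      · exact ((hgR j).1).trans (ih (Nat.lt_succ_iff.1 h))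
      · have : i = j + 1 := le_antisymm hij h
        subst this; exact subset_rfl
  have hrangeα : ∀ i, Set.range (g i).1 ⊆ Set.range α := by
    intro i
    have := hchain 0 i (Nat.zero_le i)
    rwa [hg0] at this
  refine ⟨fun k => (g (k + 1)).1 k, ?_, ?_, ?_⟩
  · intro k l hkl
    have h1 : (g (k+1)).1 k < (g (k+1)).1 l := (g (k+1)).2 hkl
    have h2 : (g (k+1)).1 l ≤ (g (l+1)).1 l :=
      aux_subseq_le (g (k+1)).2 (g (l+1)).2 (hchain (k+1) (l+1) (by omega)) l
    exact lt_of_lt_of_le h1 h2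
  · intro x hx
    obtain ⟨k, rfl⟩ := hx
    exact hrangeα (k+1) (Set.mem_range_self k)
  · choose Hs hHm hH1 hHc using fun i => (hgR i).2
    refine ⟨⋂ i, Hs i, MeasurableSet.iInter hHm, ?_, ?_⟩
    · rw [← prob_compl_eq_zero_iff (MeasurableSet.iInter hHm), Set.compl_iInter]
      exact measure_iUnion_null fun i => (prob_compl_eq_zero_iff (hHm i)).2 (hH1 i)
    · intro ω hω i f
      have hbase := hHc i ω (Set.mem_iInter.1 hω i) f
      refine aux_tendsto_subsub (g := fun m => ∫ x, f x ∂(μs i m ω)) (g (i+1)).2 ?_ ?_ hbase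
      · intro k l hkl
        have h1 : (g (k+1)).1 k < (g (k+1)).1 l := (g (k+1)).2 hkl
        have h2 : (g (k+1)).1 l ≤ (g (l+1)).1 l :=
          aux_subseq_le (g (k+1)).2 (g (l+1)).2 (hchain (k+1) (l+1) (by omega)) l
        exact lt_of_lt_of_le h1 h2
      · refine eventually_atTop.2 ⟨i, fun k hk => ?_⟩
        exact hchain (i+1) (k+1) (by omega) (Set.mem_range_self k)

set_option maxHeartbeats 2000000 in
lemma aux_det {X : Type*} [TopologicalSpace X] [MeasurableSpace X] [OpensMeasurableSpace X]
    (ν : ℕ → ℕ → Measure X) (μl : ℕ → Measure X)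
    (hfin : ∀ i k, ν i k Set.univ ≠ ⊤) (hfinl : ∀ i, μl i Set.univ ≠ ⊤)
    (hS : ∀ k, (∑' i, ν i k Set.univ) ≠ ⊤) (hSl : (∑' i, μl i Set.univ) ≠ ⊤)
    (hcv : ∀ (i : ℕ) (f : BoundedContinuousFunction X ℝ),
      Tendsto (fun k => ∫ x, f x ∂(ν i k)) atTop (𝓝 (∫ x, f x ∂(μl i))))
    (N : ℕ → ℕ) (hN : ∀ k, k ≤ N k)
    (htail : ∀ᶠ k in atTop, (∑' i, ν (i + N k) k Set.univ) ≤ ENNReal.ofReal ((1/2:ℝ)^k))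
    (hhead : ∀ᶠ k in atTop,
      ∑ i ∈ Finset.range (N k), |(ν i k Set.univ).toReal - (μl i Set.univ).toReal| ≤ (1/2:ℝ)^k) :
    ∀ f : BoundedContinuousFunction X ℝ,
      Tendsto (fun k => ∑' i, ∫ x, f x ∂(ν i k)) atTop (𝓝 (∑' i, ∫ x, f x ∂(μl i))) := by
  set c : ℕ → ℕ → ℝ := fun i k => (ν i k Set.univ).toReal with hc
  set d : ℕ → ℝ := fun i => (μl i Set.univ).toReal with hd
  have hc0 : ∀ i k, 0 ≤ c i k := fun i k => ENNReal.toReal_nonneg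
  have hd0 : ∀ i, 0 ≤ d i := fun i => ENNReal.toReal_nonneg
  have hsc : ∀ k, Summable fun i => c i k := fun k => ENNReal.summable_toReal (hS k)
  have hsd : Summable d := ENNReal.summable_toReal hSl
  have htrc : ∀ k n, (∑' i, ν (i+n) k Set.univ).toReal = ∑' i, c (i+n) k :=
    fun k n => ENNReal.tsum_toReal_eq (fun i => hfin _ _)
  have hsplit_c : ∀ k n, ∑ i ∈ Finset.range n, c i k + ∑' i, c (i+n) k = ∑' i, c i k :=
    fun k n => Summable.sum_add_tsum_nat_add n (hsc k)
  have hsplit_d : ∀ n, ∑ i ∈ Finset.range n, d i + ∑' i, d (i+n) = ∑' i, d i :=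
    fun n => Summable.sum_add_tsum_nat_add n hsd
  have hmass : ∀ i, Tendsto (fun k => c i k) atTop (𝓝 (d i)) := by
    intro i
    have := hcv i (BoundedContinuousFunction.const X (1:ℝ))
    simpa [integral_const, measureReal_def] using this
  have htail_c_nonneg : ∀ k n, (0:ℝ) ≤ ∑' i, c (i+n) k :=
    fun k n => tsum_nonneg (fun i => hc0 _ _)
  have htail_d_nonneg : ∀ n, (0:ℝ) ≤ ∑' i, d (i+n) :=
    fun n => tsum_nonneg (fun i => hd0 _)
  have hdtail0 : Tendsto (fun n => ∑' i, d (i+n)) atTop (𝓝 0) := by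
    simpa using tendsto_sum_nat_add d
  have hdtail_mono : ∀ m n, m ≤ n → ∑' i, d (i+n) ≤ ∑' i, d (i+m) := by
    intro m n hmn
    have h1 := hsplit_d m
    have h2 := hsplit_d n
    have h3 : ∑ i ∈ Finset.range m, d i ≤ ∑ i ∈ Finset.range n, d i :=
      Finset.sum_le_sum_of_subset_of_nonneg (Finset.range_subset_range.2 hmn) (fun i _ _ => hd0 i)
    linarith
  have hSA : Tendsto (fun k => ∑' i, c i k) atTop (𝓝 (∑' i, d i)) := by
    rw [tendsto_iff_dist_tendsto_zero]
    have hp : Tendsto (fun k:ℕ => (1/2:ℝ)^k) atTop (𝓝 0) := by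
      apply tendsto_pow_atTop_nhds_zero_of_lt_one <;> norm_num
    have hb : Tendsto (fun k => (1/2:ℝ)^k + (1/2:ℝ)^k + ∑' i, d (i+k)) atTop (𝓝 0) := by
      simpa using (hp.add hp).add hdtail0
    refine squeeze_zero' (Eventually.of_forall fun k => dist_nonneg) ?_ hb
    filter_upwards [htail, hhead] with k ht hh
    have e1 : ∑' i, c (i + N k) k ≤ (1/2:ℝ)^k := by
      rw [← htrc k (N k)]
      exact ENNReal.toReal_le_of_le_ofReal (by positivity) ht
    have e2 : ∑' i, d (i + N k) ≤ ∑' i, d (i + k) := hdtail_mono k (N k) (hN k)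
    have e3 : |∑ i ∈ Finset.range (N k), (c i k - d i)| ≤ (1/2:ℝ)^k :=
      le_trans (Finset.abs_sum_le_sum_abs _ _) hh
    have h1 := hsplit_c k (N k)
    have h2 := hsplit_d (N k)
    rw [Real.dist_eq]
    have hdec : ∑' i, c i k - ∑' i, d i =
        (∑ i ∈ Finset.range (N k), (c i k - d i)) +
          (∑' i, c (i + N k) k - ∑' i, d (i + N k)) := by
      rw [Finset.sum_sub_distrib]; linarith
    rw [hdec]
    have e4 : |∑' i, c (i + N k) k - ∑' i, d (i + N k)| ≤ (1/2:ℝ)^k + ∑' i, d (i + k) := by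
      have := htail_c_nonneg k (N k)
      have := htail_d_nonneg (N k)
      apply abs_le.2
      constructor <;> nlinarith
    calc |(∑ i ∈ Finset.range (N k), (c i k - d i)) +
          (∑' i, c (i + N k) k - ∑' i, d (i + N k))|
        ≤ |∑ i ∈ Finset.range (N k), (c i k - d i)| +
          |∑' i, c (i + N k) k - ∑' i, d (i + N k)| := abs_add_le _ _
      _ ≤ (1/2:ℝ)^k + ((1/2:ℝ)^k + ∑' i, d (i + k)) := add_le_add e3 e4
      _ = (1/2:ℝ)^k + (1/2:ℝ)^k + ∑' i, d (i+k) := by ring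
  have hSB : ∀ n, Tendsto (fun k => ∑' i, c (i + n) k) atTop (𝓝 (∑' i, d (i + n))) := by
    intro n
    have hh : Tendsto (fun k => ∑ i ∈ Finset.range n, c i k) atTop
        (𝓝 (∑ i ∈ Finset.range n, d i)) :=
      tendsto_finset_sum _ (fun i _ => hmass i)
    have h2 := hSA.sub hh
    have heq : (fun k => ∑' i, c i k - ∑ i ∈ Finset.range n, c i k)
        = fun k => ∑' i, c (i+n) k := by
      funext k; linarith [hsplit_c k n]
    rw [heq] at h2
    have heq2 : ∑' i, d i - ∑ i ∈ Finset.range n, d i = ∑' i, d (i+n) := by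
      linarith [hsplit_d n]
    rwa [heq2] at h2
  intro f
  haveI : ∀ i k, IsFiniteMeasure (ν i k) := fun i k => ⟨lt_top_iff_ne_top.2 (hfin i k)⟩
  haveI : ∀ i, IsFiniteMeasure (μl i) := fun i => ⟨lt_top_iff_ne_top.2 (hfinl i)⟩
  set a : ℕ → ℕ → ℝ := fun i k => ∫ x, f x ∂(ν i k) with ha
  set b : ℕ → ℝ := fun i => ∫ x, f x ∂(μl i) with hb
  have ha_bd : ∀ i k, |a i k| ≤ c i k * ‖f‖ := by
    intro i k
    simpa [Real.norm_eq_abs, measureReal_def] using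
      BoundedContinuousFunction.norm_integral_le_mul_norm (ν i k) f
  have hb_bd : ∀ i, |b i| ≤ d i * ‖f‖ := by
    intro i
    simpa [Real.norm_eq_abs, measureReal_def] using
      BoundedContinuousFunction.norm_integral_le_mul_norm (μl i) f
  have hsa : ∀ k, Summable fun i => a i k := fun k =>
    Summable.of_abs (Summable.of_nonneg_of_le (fun i => abs_nonneg _) (fun i => ha_bd i k)
      ((hsc k).mul_right ‖f‖))
  have hsb : Summable b :=
    Summable.of_abs (Summable.of_nonneg_of_le (fun i => abs_nonneg _) hb_bd
      (hsd.mul_right ‖f‖))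
  rw [Metric.tendsto_atTop]
  intro ε hε
  set C : ℝ := ‖f‖ + 1 with hC
  have hC0 : 0 < C := by positivity
  have hn' : ∀ᶠ n in atTop, ∑' i, d (i+n) < ε/(4*C) :=
    hdtail0.eventually_lt_const (by positivity)
  obtain ⟨n, hn⟩ := hn'.exists
  have hhead2 : Tendsto (fun k => ∑ i ∈ Finset.range n, |a i k - b i|) atTop (𝓝 0) := by
    have hterm : ∀ i, Tendsto (fun k => |a i k - b i|) atTop (𝓝 0) := by
      intro i
      have h1 : Tendsto (fun k => a i k - b i) atTop (𝓝 (b i - b i)) :=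
        (hcv i f).sub tendsto_const_nhds
      simpa using h1.abs
    simpa using tendsto_finset_sum (Finset.range n) (fun i _ => hterm i)
  have hev1 : ∀ᶠ k in atTop, ∑ i ∈ Finset.range n, |a i k - b i| < ε/4 :=
    hhead2.eventually_lt_const (by positivity)
  have hev2 : ∀ᶠ k in atTop, ∑' i, c (i+n) k < ε/(4*C) :=
    (hSB n).eventually_lt_const hn
  obtain ⟨K, hK⟩ := eventually_atTop.1 (hev1.and hev2)
  refine ⟨K, fun k hk => ?_⟩
  obtain ⟨h1, h2⟩ := hK k hk
  rw [Real.dist_eq]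
  have hsplit_a : ∑ i ∈ Finset.range n, a i k + ∑' i, a (i+n) k = ∑' i, a i k :=
    Summable.sum_add_tsum_nat_add n (hsa k)
  have hsplit_b : ∑ i ∈ Finset.range n, b i + ∑' i, b (i+n) = ∑' i, b i :=
    Summable.sum_add_tsum_nat_add n hsb
  have hsas : Summable fun i => a (i+n) k := (summable_nat_add_iff n).2 (hsa k)
  have hsbs : Summable fun i => b (i+n) := (summable_nat_add_iff n).2 hsb
  have hscs : Summable fun i => c (i+n) k := (summable_nat_add_iff n).2 (hsc k)
  have hsds : Summable fun i => d (i+n) := (summable_nat_add_iff n).2 hsd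
  have hsabs : Summable fun i => |a (i+n) k| := by
    refine Summable.of_nonneg_of_le (fun i => abs_nonneg _) (fun i => ha_bd _ _)
      (hscs.mul_right ‖f‖)
  have hsbabs : Summable fun i => |b (i+n)| := by
    refine Summable.of_nonneg_of_le (fun i => abs_nonneg _) (fun i => hb_bd _)
      (hsds.mul_right ‖f‖)
  have hta : |∑' i, a (i+n) k| ≤ C * ∑' i, c (i+n) k := by
    calc |∑' i, a (i+n) k| ≤ ∑' i, |a (i+n) k| := by
          simpa [Real.norm_eq_abs] using norm_tsum_le_tsum_norm (f := fun i => a (i+n) k)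
            (by simpa [Real.norm_eq_abs] using hsabs)
      _ ≤ ∑' i, c (i+n) k * ‖f‖ :=
          Summable.tsum_le_tsum (fun i => ha_bd _ _) hsabs (hscs.mul_right ‖f‖)
      _ = (∑' i, c (i+n) k) * ‖f‖ := tsum_mul_right
      _ ≤ C * ∑' i, c (i+n) k := by nlinarith [htail_c_nonneg k n, norm_nonneg f]
  have htb : |∑' i, b (i+n)| ≤ C * ∑' i, d (i+n) := by
    calc |∑' i, b (i+n)| ≤ ∑' i, |b (i+n)| := by
          simpa [Real.norm_eq_abs] using norm_tsum_le_tsum_norm (f := fun i => b (i+n))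
            (by simpa [Real.norm_eq_abs] using hsbabs)
      _ ≤ ∑' i, d (i+n) * ‖f‖ :=
          Summable.tsum_le_tsum (fun i => hb_bd _) hsbabs (hsds.mul_right ‖f‖)
      _ = (∑' i, d (i+n)) * ‖f‖ := tsum_mul_right
      _ ≤ C * ∑' i, d (i+n) := by nlinarith [htail_d_nonneg n, norm_nonneg f]
  have hdec : ∑' i, a i k - ∑' i, b i =
      (∑ i ∈ Finset.range n, (a i k - b i)) + (∑' i, a (i+n) k - ∑' i, b (i+n)) := by
    rw [Finset.sum_sub_distrib]; linarith
  rw [hdec]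
  have hheadle : |∑ i ∈ Finset.range n, (a i k - b i)| ≤ ∑ i ∈ Finset.range n, |a i k - b i| :=
    Finset.abs_sum_le_sum_abs _ _
  have hfinal : |(∑ i ∈ Finset.range n, (a i k - b i)) + (∑' i, a (i+n) k - ∑' i, b (i+n))|
      ≤ ∑ i ∈ Finset.range n, |a i k - b i| + |∑' i, a (i+n) k| + |∑' i, b (i+n)| := by
    calc _ ≤ |∑ i ∈ Finset.range n, (a i k - b i)| + |∑' i, a (i+n) k - ∑' i, b (i+n)| :=
          abs_add_le _ _
      _ ≤ |∑ i ∈ Finset.range n, (a i k - b i)| + (|∑' i, a (i+n) k| + |∑' i, b (i+n)|) := by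
          gcongr
          exact abs_sub _ _
      _ ≤ _ := by linarith
  have hCe : C * (ε/(4*C)) = ε/4 := by field_simp
  have htc := htail_c_nonneg k n
  have htd := htail_d_nonneg n
  have h3 : |∑' i, a (i+n) k| ≤ ε/4 := by
    refine hta.trans ?_
    rw [← hCe]
    exact mul_le_mul_of_nonneg_left h2.le hC0.le
  have h4 : |∑' i, b (i+n)| ≤ ε/4 := by
    refine htb.trans ?_
    rw [← hCe]
    exact mul_le_mul_of_nonneg_left hn.le hC0.le
  linarith [hfinal]

lemma aux_integral_sum {X : Type*} [TopologicalSpace X] [MeasurableSpace X] [OpensMeasurableSpace X]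
    (ν : ℕ → Measure X) (hfin : (∑' i, ν i Set.univ) ≠ ⊤) (f : BoundedContinuousFunction X ℝ) :
    ∫ x, f x ∂(Measure.sum ν) = ∑' i, ∫ x, f x ∂(ν i) := by
  haveI : IsFiniteMeasure (Measure.sum ν) := by
    refine ⟨?_⟩
    rw [Measure.sum_apply _ MeasurableSet.univ]
    exact lt_top_iff_ne_top.2 hfin
  exact integral_sum_measure (f.integrable _)

lemma aux_tsum_liminf_le (g : ℕ → ℕ → ℝ≥0∞) :
    ∑' i, Filter.liminf (fun k => g i k) atTop ≤ Filter.liminf (fun k => ∑' i, g i k) atTop := by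
  calc ∑' i, Filter.liminf (fun k => g i k) atTop
      = ∫⁻ i, Filter.liminf (fun k => g i k) atTop ∂(Measure.count) := (lintegral_count _).symm
    _ ≤ Filter.liminf (fun k => ∫⁻ i, g i k ∂(Measure.count)) atTop :=
        lintegral_liminf_le (fun k => measurable_of_countable _)
    _ = Filter.liminf (fun k => ∑' i, g i k) atTop := by simp [lintegral_count]

lemma aux_tail_tsum_le (g : ℕ → ℝ≥0∞) {n n' : ℕ} (h : n ≤ n') :
    ∑' i, g (i + n') ≤ ∑' i, g (i + n) := by
  obtain ⟨m, rfl⟩ : ∃ m, n' = m + n := ⟨n' - n, by omega⟩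
  calc ∑' i, g (i + (m + n)) = ∑' i, (fun j => g (j + n)) (i + m) := by
        congr 1; funext i; congr 1; omega
    _ ≤ ∑' j, g (j + n) := ENNReal.tsum_comp_le_tsum_of_injective (add_left_injective m) _


set_option maxHeartbeats 2000000 in
/-- **Sums of weakly subsequentially-in-probability convergent random measures.**  If for
every `i` the random finite measures `μs i k` converge to `μ i` weakly subsequentially in
probability, and the tail expectations `Σ_{i≥N} E(μs i k (X))` are uniformly small, then
for large `k` the sums `Σ_i μs i k` are a.s. finite random measures converging weakly
subsequentially in probability to the a.s. finite random measure `Σ_i μ i`. -/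
theorem sum_weak_subseq_in_prob
    {X : Type*} [MetricSpace X] [CompleteSpace X] [TopologicalSpace.SeparableSpace X]
    [MeasurableSpace X] [BorelSpace X]
    {Ω : Type*} [MeasurableSpace Ω] (P : Measure Ω) [IsProbabilityMeasure P]
    (μs : ℕ → ℕ → Ω → Measure X) (μ : ℕ → Ω → Measure X)
    (hfin : ∀ i k ω, IsFiniteMeasure (μs i k ω))
    (hfinlim : ∀ i ω, IsFiniteMeasure (μ i ω))
    (hmeas : ∀ (i k : ℕ) (E : Set X), MeasurableSet E → Measurable fun ω => μs i k ω E)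
    (hmeaslim : ∀ (i : ℕ) (E : Set X), MeasurableSet E → Measurable fun ω => μ i ω E)
    (hconv : ∀ i : ℕ, WeakSubseqInProb P (fun k => μs i k) (μ i))
    (htail : ∀ ε : ℝ, 0 < ε → ∃ N n₀ : ℕ, ∀ k : ℕ, n₀ ≤ k →
      (∑' i : ℕ, ∫⁻ ω, μs (i + N) k ω Set.univ ∂P) < ENNReal.ofReal ε) :
    ∃ n₁ : ℕ,
      (∀ k : ℕ, n₁ ≤ k → ∀ᵐ ω ∂P, (Measure.sum fun i => μs i k ω) Set.univ < ⊤) ∧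
      (∀ᵐ ω ∂P, (Measure.sum fun i => μ i ω) Set.univ < ⊤) ∧
      WeakSubseqInProb P (fun k ω => Measure.sum fun i => μs i (k + n₁) ω)
        (fun ω => Measure.sum fun i => μ i ω) := by
  obtain ⟨N₁, n₁, h₁⟩ := htail 1 one_pos
  have hmeasM : ∀ i k, Measurable fun ω => μs i k ω Set.univ :=
    fun i k => hmeas i k _ MeasurableSet.univ
  have hmeasMl : ∀ i, Measurable fun ω => μ i ω Set.univ :=
    fun i => hmeaslim i _ MeasurableSet.univ
  have hne : ∀ i k ω, μs i k ω Set.univ ≠ ⊤ := fun i k ω => @measure_ne_top _ _ _ (hfin i k ω) _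
  have hnel : ∀ i ω, μ i ω Set.univ ≠ ⊤ := fun i ω => @measure_ne_top _ _ _ (hfinlim i ω) _
  -- Part 2 core: a.s. finiteness of the sum of the limit measures
  have hμfin : ∀ᵐ ω ∂P, (∑' i, μ i ω Set.univ) ≠ ⊤ := by
    obtain ⟨N₂, n₂, h₂⟩ := htail 1 one_pos
    obtain ⟨δ, hδm, -, H, hHm, hH1, hHc⟩ := aux_diagonal hconv strictMono_id
    have hHae : ∀ᵐ ω ∂P, ω ∈ H := by
      have h0 : P Hᶜ = 0 := (prob_compl_eq_zero_iff hHm).2 hH1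
      rw [ae_iff]
      exact h0
    have hmassH : ∀ ω ∈ H, ∀ i,
        Tendsto (fun k => μs i (δ k) ω Set.univ) atTop (𝓝 (μ i ω Set.univ)) := by
      intro ω hω i
      have h0 := hHc ω hω i (BoundedContinuousFunction.const X (1:ℝ))
      have h0' : Tendsto (fun k => (μs i (δ k) ω Set.univ).toReal) atTop
          (𝓝 ((μ i ω Set.univ).toReal)) := by simpa [integral_const, measureReal_def] using h0
      have h1 := ENNReal.tendsto_ofReal h0'
      rw [ENNReal.ofReal_toReal (hnel i ω)] at h1
      have heq : (fun k => ENNReal.ofReal (μs i (δ k) ω Set.univ).toReal)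
          = fun k => μs i (δ k) ω Set.univ :=
        funext fun k => ENNReal.ofReal_toReal (hne i (δ k) ω)
      rwa [heq] at h1
    have key : ∫⁻ ω, (∑' i, μ (i + N₂) ω Set.univ) ∂P ≤ 1 := by
      rw [lintegral_tsum (fun i => (hmeasMl _).aemeasurable)]
      have hterm : ∀ i, ∫⁻ ω, μ (i + N₂) ω Set.univ ∂P ≤
          Filter.liminf (fun k => ∫⁻ ω, μs (i + N₂) (δ k) ω Set.univ ∂P) atTop := by
        intro i
        have hae : ∀ᵐ ω ∂P, μ (i+N₂) ω Set.univ
            = Filter.liminf (fun k => μs (i+N₂) (δ k) ω Set.univ) atTop := by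
          filter_upwards [hHae] with ω hω
          exact ((hmassH ω hω (i+N₂)).liminf_eq).symm
        calc ∫⁻ ω, μ (i+N₂) ω Set.univ ∂P
            = ∫⁻ ω, Filter.liminf (fun k => μs (i+N₂) (δ k) ω Set.univ) atTop ∂P :=
              lintegral_congr_ae hae
          _ ≤ Filter.liminf (fun k => ∫⁻ ω, μs (i+N₂) (δ k) ω Set.univ ∂P) atTop :=
              lintegral_liminf_le (fun k => hmeasM _ _)
      calc ∑' i, ∫⁻ ω, μ (i+N₂) ω Set.univ ∂P
          ≤ ∑' i, Filter.liminf (fun k => ∫⁻ ω, μs (i+N₂) (δ k) ω Set.univ ∂P) atTop :=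
            ENNReal.tsum_le_tsum hterm
        _ ≤ Filter.liminf (fun k => ∑' i, ∫⁻ ω, μs (i+N₂) (δ k) ω Set.univ ∂P) atTop :=
            aux_tsum_liminf_le _
        _ ≤ 1 := by
            refine liminf_le_of_frequently_le' ?_
            refine ((eventually_atTop.2 ⟨n₂, fun k hk => ?_⟩).frequently)
            have : n₂ ≤ δ k := hk.trans hδm.le_apply
            simpa using (h₂ (δ k) this).le
    have hfin2 : ∫⁻ ω, (∑' i, μ (i + N₂) ω Set.univ) ∂P ≠ ⊤ :=
      (key.trans_lt ENNReal.one_lt_top).ne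
    have hmt : Measurable fun ω => ∑' i, μ (i + N₂) ω Set.univ :=
      Measurable.ennreal_tsum fun i => hmeasMl _
    filter_upwards [ae_lt_top hmt hfin2] with ω hω
    rw [← Summable.sum_add_tsum_nat_add' (f := fun i => μ i ω Set.univ) (k := N₂) ENNReal.summable]
    refine (ENNReal.add_lt_top.2 ⟨?_, hω⟩).ne
    exact ENNReal.sum_lt_top.2 fun i _ => lt_top_iff_ne_top.2 (hnel i ω)
  refine ⟨n₁, ?_, ?_, ?_⟩
  · -- Part 1
    intro k hk
    have hmt : Measurable fun ω => ∑' i, μs (i + N₁) k ω Set.univ :=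
      Measurable.ennreal_tsum fun i => hmeasM _ _
    have hlt : ∫⁻ ω, (∑' i, μs (i + N₁) k ω Set.univ) ∂P ≠ ⊤ := by
      rw [lintegral_tsum (fun i => (hmeasM _ _).aemeasurable)]
      exact ((h₁ k hk).trans_le le_top).ne
    filter_upwards [ae_lt_top hmt hlt] with ω hω
    rw [Measure.sum_apply _ MeasurableSet.univ,
      ← Summable.sum_add_tsum_nat_add' (f := fun i => μs i k ω Set.univ) (k := N₁) ENNReal.summable]
    refine ENNReal.add_lt_top.2 ⟨?_, hω⟩
    exact ENNReal.sum_lt_top.2 fun i _ => lt_top_iff_ne_top.2 (hne i k ω)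
  · -- Part 2
    filter_upwards [hμfin] with ω hω
    rw [Measure.sum_apply _ MeasurableSet.univ]
    exact lt_top_iff_ne_top.2 hω
  · -- Part 3
    intro α hα
    have hα'm : StrictMono (fun k => α k + n₁) := fun a b h => by
      simpa using Nat.add_lt_add_right (hα h) n₁
    obtain ⟨δ, hδm, hδr, H, hHm, hH1, hHc⟩ := aux_diagonal hconv hα'm
    have hHae : ∀ᵐ ω ∂P, ω ∈ H := by
      have h0 : P Hᶜ = 0 := (prob_compl_eq_zero_iff hHm).2 hH1
      rw [ae_iff]; exact h0
    have hmassR : ∀ ω ∈ H, ∀ i, Tendsto (fun k => (μs i (δ k) ω Set.univ).toReal) atTop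
        (𝓝 ((μ i ω Set.univ).toReal)) := by
      intro ω hω i
      simpa [integral_const, measureReal_def] using hHc ω hω i (BoundedContinuousFunction.const X (1:ℝ))
    have hchoose : ∀ j : ℕ, ∃ Nn : ℕ × ℕ, ∀ k, Nn.2 ≤ k →
        (∑' i, ∫⁻ ω, μs (i + Nn.1) k ω Set.univ ∂P) < ENNReal.ofReal ((1/2:ℝ)^(2*j+2)) := by
      intro j
      obtain ⟨N, n₀, h⟩ := htail ((1/2:ℝ)^(2*j+2)) (by positivity)
      exact ⟨(N, n₀), h⟩
    choose Nn hNn using hchoose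
    set NN : ℕ → ℕ := fun j => max (Nn j).1 j with hNNdef
    have hNNj : ∀ j, j ≤ NN j := fun j => le_max_right _ _
    have htails : ∀ j k, (Nn j).2 ≤ k →
        (∑' i, ∫⁻ ω, μs (i + NN j) k ω Set.univ ∂P) ≤ ENNReal.ofReal ((1/2:ℝ)^(2*j+2)) := by
      intro j k hk
      refine le_trans ?_ (hNn j k hk).le
      exact aux_tail_tsum_le (fun i => ∫⁻ ω, μs i k ω Set.univ ∂P) (le_max_left _ _)
    set D : ℕ → ℕ → Ω → ℝ := fun j m ω =>
      ∑ i ∈ Finset.range (NN j), |(μs i m ω Set.univ).toReal - (μ i ω Set.univ).toReal| with hD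
    have hDmeas : ∀ j m, Measurable (D j m) := by
      intro j m
      apply Finset.measurable_sum
      intro i _
      exact ((hmeasM i m).ennreal_toReal.sub (hmeasMl i).ennreal_toReal).abs
    have hDae : ∀ j, ∀ᵐ ω ∂P, Tendsto (fun m => D j (δ m) ω) atTop (𝓝 0) := by
      intro j
      filter_upwards [hHae] with ω hω
      have hterm : ∀ i, Tendsto
          (fun m => |(μs i (δ m) ω Set.univ).toReal - (μ i ω Set.univ).toReal|) atTop (𝓝 0) := by
        intro i
        have h2 := (hmassR ω hω i).sub (tendsto_const_nhds (x := (μ i ω Set.univ).toReal))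
        simpa using h2.abs
      have h3 := tendsto_finset_sum (Finset.range (NN j)) (fun i (_ : i ∈ Finset.range (NN j)) => hterm i)
      simpa [hD] using h3
    have hstep : ∀ j (a : ℕ), ∃ b, a < b ∧ (Nn j).2 ≤ δ b ∧
        P {ω | (1/2:ℝ)^j ≤ dist (D j (δ b) ω) 0} ≤ ENNReal.ofReal ((1/2:ℝ)^j) := by
      intro j a
      have hTIM : TendstoInMeasure P (fun m ω => D j (δ m) ω) atTop (fun _ => (0:ℝ)) :=
        tendstoInMeasure_of_tendsto_ae (fun m => (hDmeas j (δ m)).aestronglyMeasurable) (hDae j)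
      have h2 := tendstoInMeasure_iff_dist.1 hTIM ((1/2:ℝ)^j) (by positivity)
      have h3 : ∀ᶠ m in atTop, P {ω | (1/2:ℝ)^j ≤ dist (D j (δ m) ω) 0}
          ≤ ENNReal.ofReal ((1/2:ℝ)^j) :=
        h2.eventually_le_const (ENNReal.ofReal_pos.2 (by positivity))
      have h4 : ∀ᶠ m in atTop, a < m := eventually_gt_atTop a
      have h5 : ∀ᶠ m in atTop, (Nn j).2 ≤ δ m := by
        filter_upwards [eventually_ge_atTop (Nn j).2] with m hm
        exact hm.trans hδm.le_apply
      obtain ⟨b, hb1, hb2, hb3⟩ := (h4.and (h5.and h3)).exists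
      exact ⟨b, hb1, hb2, hb3⟩
    obtain ⟨g, hg0, hgR⟩ := aux_exists_chain 0 _ hstep
    set γ : ℕ → ℕ := fun k => δ (g (k+1)) with hγ
    have hgm : StrictMono g := strictMono_nat_of_lt_succ (fun n => (hgR n).1)
    have hγm : StrictMono γ := fun a b h => hδm (hgm (by omega))
    have hγδ : ∀ k, γ k ∈ Set.range δ := fun k => ⟨g (k+1), rfl⟩
    have hβex : ∀ k, ∃ j, α j + n₁ = γ k := fun k => hδr (hγδ k)
    choose φ hφ using hβex
    have hβm : StrictMono (fun k => α (φ k)) := by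
      intro a b h
      have h2 : α (φ a) + n₁ < α (φ b) + n₁ := by rw [hφ a, hφ b]; exact hγm h
      exact lt_of_add_lt_add_right h2
    refine ⟨fun k => α (φ k), hβm, by rintro x ⟨k, rfl⟩; exact ⟨φ k, rfl⟩, ?_⟩
    set T : ℕ → Ω → ℝ≥0∞ := fun k ω => ∑' i, μs (i + NN k) (γ k) ω Set.univ with hT
    have hTmeas : ∀ k, Measurable (T k) := fun k => Measurable.ennreal_tsum fun i => hmeasM _ _
    have hTint : ∀ k, ∫⁻ ω, T k ω ∂P ≤ ENNReal.ofReal ((1/2:ℝ)^(2*k+2)) := by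
      intro k
      simp only [hT]
      rw [lintegral_tsum (fun i => (hmeasM _ _).aemeasurable)]
      exact htails k (γ k) (hgR k).2.1
    set A : ℕ → Set Ω := fun k => {ω | ENNReal.ofReal ((1/2:ℝ)^k) ≤ T k ω} with hA
    have hAmeas : ∀ k, MeasurableSet (A k) := fun k => measurableSet_le measurable_const (hTmeas k)
    have hPA : ∀ k, P (A k) ≤ ENNReal.ofReal ((1/2:ℝ)^k) := by
      intro k
      have h0 : ENNReal.ofReal ((1/2:ℝ)^k) ≠ 0 := by
        simp only [ne_eq, ENNReal.ofReal_eq_zero, not_le]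
        positivity
      have hmar := meas_ge_le_lintegral_div (μ := P) (hTmeas k).aemeasurable h0 ENNReal.ofReal_ne_top
      refine le_trans hmar ?_
      rw [ENNReal.div_le_iff h0 ENNReal.ofReal_ne_top]
      refine (hTint k).trans ?_
      rw [← ENNReal.ofReal_mul (by positivity)]
      apply ENNReal.ofReal_le_ofReal
      rw [← pow_add]
      apply pow_le_pow_of_le_one (by norm_num) (by norm_num)
      omega
    set B : ℕ → Set Ω := fun k => {ω | (1/2:ℝ)^k ≤ dist (D k (δ (g (k+1))) ω) 0} with hB
    have hBmeas : ∀ k, MeasurableSet (B k) :=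
      fun k => measurableSet_le measurable_const ((hDmeas k _).dist measurable_const)
    have hPB : ∀ k, P (B k) ≤ ENNReal.ofReal ((1/2:ℝ)^k) := fun k => (hgR k).2.2
    have hsum : (∑' k, P (A k ∪ B k)) ≠ ⊤ := by
      have hle : ∀ k, P (A k ∪ B k) ≤ 2 * ENNReal.ofReal ((1/2:ℝ)^k) := by
        intro k
        refine (measure_union_le _ _).trans ?_
        rw [two_mul]
        exact add_le_add (hPA k) (hPB k)
      refine ne_top_of_le_ne_top ?_ (ENNReal.tsum_le_tsum hle)
      rw [ENNReal.tsum_mul_left]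
      refine ENNReal.mul_ne_top (by norm_num) ?_
      rw [← ENNReal.ofReal_tsum_of_nonneg (fun k => by positivity)
        (summable_geometric_of_lt_one (by norm_num) (by norm_num))]
      exact ENNReal.ofReal_ne_top
    have hBC : ∀ᵐ ω ∂P, ∀ᶠ k in atTop, ω ∉ A k ∪ B k := ae_eventually_notMem hsum
    have hTae : ∀ᵐ ω ∂P, ∀ k, T k ω ≠ ⊤ := by
      rw [ae_all_iff]
      intro k
      have h2 := ae_lt_top (hTmeas k) (((hTint k).trans_lt ENNReal.ofReal_lt_top).ne)
      filter_upwards [h2] with ω hω using hω.ne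
    set E2 : Set Ω := ⋃ K, ⋂ k, ⋂ (_ : K ≤ k), (A k ∪ B k)ᶜ with hE2
    have hE2meas : MeasurableSet E2 := by
      refine MeasurableSet.iUnion fun K =>
        MeasurableSet.iInter fun k => MeasurableSet.iInter fun _ => ?_
      exact ((hAmeas k).union (hBmeas k)).compl
    have hE2mem : ∀ ω, ω ∈ E2 ↔ ∀ᶠ k in atTop, ω ∉ A k ∪ B k := by
      intro ω
      simp only [hE2, Set.mem_iUnion, Set.mem_iInter, Set.mem_compl_iff, eventually_atTop]
    set E3 : Set Ω := ⋂ k, {ω | T k ω ≠ ⊤} with hE3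
    have hE3meas : MeasurableSet E3 := by
      refine MeasurableSet.iInter fun k => ?_
      have h2 : {ω | T k ω ≠ ⊤} = (T k ⁻¹' {⊤})ᶜ := rfl
      rw [h2]
      exact (hTmeas k (measurableSet_singleton ⊤)).compl
    set E4 : Set Ω := {ω | (∑' i, μ i ω Set.univ) ≠ ⊤} with hE4
    have hE4meas : MeasurableSet E4 := by
      have h2 : E4 = ((fun ω => ∑' i, μ i ω Set.univ) ⁻¹' {⊤})ᶜ := rfl
      rw [h2]
      exact ((Measurable.ennreal_tsum fun i => hmeasMl i) (measurableSet_singleton ⊤)).compl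
    refine ⟨H ∩ E2 ∩ E3 ∩ E4, ((hHm.inter hE2meas).inter hE3meas).inter hE4meas, ?_, ?_⟩
    · rw [← prob_compl_eq_zero_iff (((hHm.inter hE2meas).inter hE3meas).inter hE4meas)]
      have hae : ∀ᵐ ω ∂P, ω ∈ H ∩ E2 ∩ E3 ∩ E4 := by
        filter_upwards [hHae, hBC, hTae, hμfin] with ω h1 h2 h3 h4
        exact ⟨⟨⟨h1, (hE2mem ω).2 h2⟩, Set.mem_iInter.2 h3⟩, h4⟩
      rw [ae_iff] at hae
      exact hae
    · intro ω hω f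
      obtain ⟨⟨⟨hωH, hωE2⟩, hωE3⟩, hωE4⟩ := hω
      have hωT : ∀ k, T k ω ≠ ⊤ := fun k => Set.mem_iInter.1 hωE3 k
      have hωE4' : (∑' i, μ i ω Set.univ) ≠ ⊤ := hωE4
      have hS : ∀ k, (∑' i, μs i (γ k) ω Set.univ) ≠ ⊤ := by
        intro k
        rw [← Summable.sum_add_tsum_nat_add' (f := fun i => μs i (γ k) ω Set.univ)
          (k := NN k) ENNReal.summable]
        refine (ENNReal.add_lt_top.2 ⟨?_, lt_top_iff_ne_top.2 (hωT k)⟩).ne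
        exact ENNReal.sum_lt_top.2 fun i _ => lt_top_iff_ne_top.2 (hne _ _ ω)
      have hcvω : ∀ i (f' : BoundedContinuousFunction X ℝ),
          Tendsto (fun k => ∫ x, f' x ∂(μs i (γ k) ω)) atTop (𝓝 (∫ x, f' x ∂(μ i ω))) := by
        intro i f'
        exact aux_tendsto_subsub (g := fun m => ∫ x, f' x ∂(μs i m ω)) hδm hγm
          (Eventually.of_forall hγδ) (hHc ω hωH i f')
      have htailω : ∀ᶠ k in atTop,
          (∑' i, μs (i + NN k) (γ k) ω Set.univ) ≤ ENNReal.ofReal ((1/2:ℝ)^k) := by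
        filter_upwards [(hE2mem ω).1 hωE2] with k hk
        have h5 : ω ∉ A k := fun h => hk (Set.mem_union_left _ h)
        have h6 : ¬ (ENNReal.ofReal ((1/2:ℝ)^k) ≤ T k ω) := h5
        exact (not_le.1 h6).le
      have hheadω : ∀ᶠ k in atTop,
          ∑ i ∈ Finset.range (NN k),
            |(μs i (γ k) ω Set.univ).toReal - (μ i ω Set.univ).toReal| ≤ (1/2:ℝ)^k := by
        filter_upwards [(hE2mem ω).1 hωE2] with k hk
        have h5 : ω ∉ B k := fun h => hk (Set.mem_union_right _ h)
        have h6 : ¬ ((1/2:ℝ)^k ≤ dist (D k (δ (g (k+1))) ω) 0) := h5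
        have h7 : D k (γ k) ω ≤ (1/2:ℝ)^k := by
          have h8 := not_le.1 h6
          rw [Real.dist_eq, sub_zero] at h8
          exact (le_abs_self _).trans h8.le
        simpa [hD] using h7
      have hdet := aux_det (fun i k => μs i (γ k) ω) (fun i => μ i ω)
        (fun i k => hne _ _ _) (fun i => hnel _ _) hS hωE4' hcvω NN hNNj htailω hheadω f
      have hconv1 : ∀ k, ∫ x, f x ∂(Measure.sum fun i => μs i (γ k) ω)
          = ∑' i, ∫ x, f x ∂(μs i (γ k) ω) := fun k => aux_integral_sum _ (hS k) f
      have hconv2 : ∫ x, f x ∂(Measure.sum fun i => μ i ω) = ∑' i, ∫ x, f x ∂(μ i ω) :=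
        aux_integral_sum _ hωE4' f
      rw [hconv2]
      have heq : (fun k => ∫ x, f x ∂(Measure.sum fun i => μs i ((α (φ k)) + n₁) ω))
          = fun k => ∑' i, ∫ x, f x ∂(μs i (γ k) ω) := by
        funext k
        rw [hφ k]
        exact hconv1 k
      rw [heq]
      exact hdet
end

section
/- Let X be a complete separable metric space, (μ_k) a sequence of random finite Borel measures on X on a probability space (Ω, 𝒜, P), and (F_k) a sequence of maps F_k : Ω → {closed subsets of X} such that almost surely F_1(ω) ⊇ F_2(ω) ⊇ … and, for each k, μ_{k,ω}(X ∖ F_k(ω)) = 0 for P-almost every ω (i.e. supp μ_k ⊆ F_k almost surely). If μ_k weakly converges to a random finite Borel measure μ subsequentially in probability, then for P-almost every ω the support of μ_ω is contained in ⋂_{n=1}^∞ F_n(ω), i.e. μ_ω( X ∖ ⋂_n F_n(ω) ) = 0. -/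
open MeasureTheory Filter Set Topology

/-- **Support of the limit of random measures.**  If the random finite measures `μ_k` are
a.s. supported in a decreasing sequence of random closed sets `F_k`, and `μ_k` converges
weakly subsequentially in probability to `μ`, then almost surely `μ` is supported in
`⋂_n F_n`. -/
theorem support_of_weak_subseq_limit
    {X : Type*} [MetricSpace X] [CompleteSpace X] [TopologicalSpace.SeparableSpace X]
    [MeasurableSpace X] [BorelSpace X]
    {Ω : Type*} [MeasurableSpace Ω] (P : Measure Ω) [IsProbabilityMeasure P]
    (μs : ℕ → Ω → Measure X) (μ : Ω → Measure X)
    (hfin : ∀ k ω, IsFiniteMeasure (μs k ω))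
    (hfinlim : ∀ ω, IsFiniteMeasure (μ ω))
    (hmeas : ∀ (k : ℕ) (E : Set X), MeasurableSet E → Measurable fun ω => μs k ω E)
    (hmeaslim : ∀ E : Set X, MeasurableSet E → Measurable fun ω => μ ω E)
    (F : ℕ → Ω → Set X)
    (hFclosed : ∀ k ω, IsClosed (F k ω))
    (hFanti : ∀ᵐ ω ∂P, ∀ k : ℕ, F (k + 1) ω ⊆ F k ω)
    (hsupp : ∀ k : ℕ, ∀ᵐ ω ∂P, μs k ω (F k ω)ᶜ = 0)
    (hconv : WeakSubseqInProb P μs μ) :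
    ∀ᵐ ω ∂P, μ ω (⋂ n : ℕ, F n ω)ᶜ = 0 := by
  obtain ⟨β, hβ, -, H, hHmeas, hH1, hHconv⟩ := hconv id strictMono_id
  have haeH : ∀ᵐ ω ∂P, ω ∈ H := by
    have : P Hᶜ = 0 := by
      rw [measure_compl hHmeas (measure_ne_top _ _), hH1, measure_univ, tsub_self]
    exact this
  filter_upwards [hFanti, ae_all_iff.mpr hsupp, haeH] with ω hanti hsupp' hωH
  haveI := hfinlim ω
  have hanti' : Antitone fun n => F n ω := antitone_nat_of_succ_le fun n => hanti n
  set ν : ℕ → FiniteMeasure X := fun k => ⟨μs (β k) ω, hfin _ ω⟩ with hν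
  set νl : FiniteMeasure X := ⟨μ ω, hfinlim ω⟩ with hνl
  have hten : Tendsto ν atTop (𝓝 νl) :=
    FiniteMeasure.tendsto_iff_forall_integral_tendsto.mpr fun f => hHconv ω hωH f
  -- total masses converge
  have hm : Tendsto (fun k => μs (β k) ω Set.univ) atTop (𝓝 (μ ω Set.univ)) := by
    have h := ENNReal.tendsto_coe.2 hten.mass
    simp only [FiniteMeasure.ennreal_mass] at h
    exact h
  have hF : ∀ n : ℕ, μ ω (F n ω)ᶜ = 0 := by
    intro n
    have hcl := hFclosed n ω
    have hlimsup : (atTop.limsup fun k => μs (β k) ω (F n ω)) ≤ μ ω (F n ω) :=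
      FiniteMeasure.limsup_measure_closed_le_of_tendsto hten hcl
    have heq : ∀ᶠ k in atTop,
        μs (β k) ω Set.univ = μs (β k) ω (F n ω) := by
      filter_upwards [eventually_ge_atTop n] with k hk
      have hsub : F (β k) ω ⊆ F n ω := hanti' (hk.trans (hβ.le_apply))
      have h0 : μs (β k) ω (F n ω)ᶜ = 0 :=
        le_antisymm ((measure_mono (compl_subset_compl.mpr hsub)).trans_eq
          (hsupp' (β k))) zero_le
      rw [← measure_add_measure_compl (μ := μs (β k) ω) hcl.measurableSet, h0, add_zero]
    have hle : μ ω Set.univ ≤ μ ω (F n ω) := by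
      calc μ ω Set.univ = atTop.limsup fun k => μs (β k) ω Set.univ := hm.limsup_eq.symm
        _ = atTop.limsup fun k => μs (β k) ω (F n ω) := limsup_congr heq
        _ ≤ μ ω (F n ω) := hlimsup
    have hsplit : μ ω (F n ω) + μ ω (F n ω)ᶜ ≤ μ ω (F n ω) + 0 := by
      rw [measure_add_measure_compl hcl.measurableSet, add_zero]; exact hle
    exact le_antisymm ((ENNReal.add_le_add_iff_left (measure_ne_top _ _)).mp hsplit) zero_le
  refine le_antisymm ?_ zero_le
  calc μ ω (⋂ n : ℕ, F n ω)ᶜ = μ ω (⋃ n : ℕ, (F n ω)ᶜ) := by rw [Set.compl_iInter]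
    _ ≤ ∑' n : ℕ, μ ω (F n ω)ᶜ := measure_iUnion_le _
    _ = 0 := by simp [hF]
end
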